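/- arXiv:2101.09267 — 9 statements merged into one kernel-verified Lean document; each statement's English description precedes it below -/
import Mathlib

section
/- Let F ⊆ {0,1}^n be a finite set of binary vectors and h ∈ [0,1]^n. Then h ∈ conv(F) if and only if there exist sets S_1,…,S_n, each a finite union of half-open subintervals of U = [0,1), such that the Lebesgue measure of S_i equals h_i for all i, and for every t ∈ U the binary vector v(t) defined by v(t)_i = 1 if t ∈ S_i and 0 otherwise belongs to F. -/
open MeasureTheory Set

/-- `S` is a finite union of half-open intervals `[a, b)`. -/
def FinUnionIco (S : Set ℝ) : Prop :=
  ∃ (k : ℕ) (a b : Fin k → ℝ), S = ⋃ j, Set.Ico (a j) (b j)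

theorem zuckerberg_convex_hull_characterization
    (n : ℕ) (F : Set (Fin n → ℝ)) (hFfin : F.Finite)
    (hFbin : ∀ v ∈ F, ∀ i, v i = 0 ∨ v i = 1)
    (h : Fin n → ℝ) (hh : ∀ i, h i ∈ Set.Icc (0 : ℝ) 1) :
    h ∈ convexHull ℝ F ↔
      ∃ S : Fin n → Set ℝ,
        (∀ i, FinUnionIco (S i)) ∧
        (∀ i, S i ⊆ Set.Ico (0 : ℝ) 1) ∧
        (∀ i, volume (S i) = ENNReal.ofReal (h i)) ∧
        (∀ t ∈ Set.Ico (0 : ℝ) 1,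
          (fun i => (S i).indicator (fun _ => (1 : ℝ)) t) ∈ F) := by
  constructor
  · intro hmem
    classical
    rw [← hFfin.coe_toFinset, Finset.convexHull_eq] at hmem
    obtain ⟨w, hw0, hw1, hwc⟩ := hmem
    set s := hFfin.toFinset with hs
    set m := s.card with hm
    set e := s.equivFin with he
    set z : Fin m → (Fin n → ℝ) := fun k => (e.symm k : Fin n → ℝ) with hz
    have hzF : ∀ k, z k ∈ F := fun k => hFfin.mem_toFinset.1 (e.symm k).2
    set w' : ℕ → ℝ := fun j => if hj : j < m then w (z ⟨j, hj⟩) else 0 with hw'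
    have hbij : ∀ (g : (Fin n → ℝ) → ℝ), ∑ k : Fin m, g (z k) = ∑ y ∈ s, g y := by
      intro g
      rw [← Finset.sum_coe_sort s g]
      exact Fintype.sum_equiv e.symm (fun k : Fin m => g (z k)) (fun y : s => g ↑y)
        (fun k => rfl)
    have hw'0 : ∀ j, 0 ≤ w' j := by
      intro j
      show (0:ℝ) ≤ if hj : j < m then w (z ⟨j, hj⟩) else 0
      split
      · exact hw0 _ (hFfin.mem_toFinset.2 (hzF _))
      · exact le_refl 0
    have hw'val : ∀ k : Fin m, w' ↑k = w (z k) := by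
      intro k
      show (if hj : (k:ℕ) < m then w (z ⟨↑k, hj⟩) else 0) = w (z k)
      rw [dif_pos k.2]
    set c : ℕ → ℝ := fun j => ∑ l ∈ Finset.range j, w' l with hc
    have hc0 : c 0 = 0 := by simp [hc]
    have hcsucc : ∀ j, c (j + 1) = c j + w' j := fun j => Finset.sum_range_succ _ _
    have hcmono : Monotone c := by
      intro a b hab
      exact Finset.sum_le_sum_of_subset_of_nonneg (Finset.range_subset_range.2 hab)
        (fun j _ _ => hw'0 j)
    have hcm : c m = 1 := by
      show ∑ l ∈ Finset.range m, w' l = 1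
      rw [Finset.sum_range fun j => w' j, Finset.sum_congr rfl fun k _ => hw'val k, hbij w]
      exact hw1
    have hZ01 : ∀ k i, z k i = 0 ∨ z k i = 1 := fun k i => hFbin _ (hzF k) i
    set Z : ℕ → (Fin n → ℝ) := fun j => if hj : j < m then z ⟨j, hj⟩ else fun _ => 0 with hZ
    have hZval : ∀ (k : Fin m), Z ↑k = z k := by
      intro k
      show (if hj : (k:ℕ) < m then z ⟨↑k, hj⟩ else fun _ => 0) = z k
      rw [dif_pos k.2]
    have hZle : ∀ (k : Fin m) i, w' ↑k * Z ↑k i ≤ w' ↑k := by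
      intro k i
      have : w' ↑k * Z ↑k i ≤ w' ↑k * 1 := by
        refine mul_le_mul_of_nonneg_left ?_ (hw'0 _)
        rw [hZval k]; rcases hZ01 k i with hzi | hzi <;> simp [hzi]
      linarith
    have hZnn : ∀ (k : Fin m) i, 0 ≤ w' ↑k * Z ↑k i := by
      intro k i
      refine mul_nonneg (hw'0 _) ?_
      rw [hZval k]; rcases hZ01 k i with hzi | hzi <;> simp [hzi]
    have hub : ∀ (k : Fin m) i, c ↑k + w' ↑k * Z ↑k i ≤ c (↑k + 1) := by
      intro k i
      rw [hcsucc]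
      have := hZle k i
      linarith
    have hcoord : ∀ i, ∑ k : Fin m, w' ↑k * Z ↑k i = h i := by
      intro i
      have h1 : ∑ k : Fin m, w' ↑k * Z ↑k i = ∑ k : Fin m, w (z k) * z k i := by
        refine Finset.sum_congr rfl fun k _ => ?_
        rw [hZval k, hw'val k]
      have h2 : (∑ y ∈ s, w y • id y) i = h i := by
        rw [← Finset.centerMass_eq_of_sum_1 s id hw1, hwc]
      rw [← h2, Finset.sum_apply]
      rw [Finset.sum_congr rfl (fun y (_ : y ∈ s) => (rfl : (w y • id y) i = w y * y i))]
      rw [h1]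
      exact hbij (fun y => w y * y i)
    refine ⟨fun i => ⋃ k : Fin m, Ico (c ↑k) (c ↑k + w' ↑k * Z ↑k i), ?_, ?_, ?_, ?_⟩
    · intro i
      exact ⟨m, fun k => c ↑k, fun k => c ↑k + w' ↑k * Z ↑k i, rfl⟩
    · intro i t ht
      obtain ⟨k, hk⟩ := Set.mem_iUnion.1 ht
      constructor
      · calc (0:ℝ) = c 0 := hc0.symm
          _ ≤ c ↑k := hcmono (Nat.zero_le _)
          _ ≤ t := hk.1
      · calc t < c ↑k + w' ↑k * Z ↑k i := hk.2
          _ ≤ c (↑k + 1) := hub k i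
          _ ≤ c m := hcmono k.2
          _ = 1 := hcm
    · intro i
      have hdisj : Pairwise (Function.onFun Disjoint fun k : Fin m => Ico (c ↑k) (c ↑k + w' ↑k * Z ↑k i)) := by
        have key : ∀ k l : Fin m, (k:ℕ) < l →
            Disjoint (Ico (c ↑k) (c ↑k + w' ↑k * Z ↑k i)) (Ico (c ↑l) (c ↑l + w' ↑l * Z ↑l i)) := by
          intro k l hlt
          rw [Set.Ico_disjoint_Ico]
          have h2 : c (↑k+1) ≤ c ↑l := hcmono hlt
          exact le_sup_of_le_right (le_trans (inf_le_left.trans (hub k i)) h2)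
        intro k l hkl
        rcases lt_or_gt_of_ne (Fin.val_ne_of_ne hkl) with hlt | hgt
        · exact key k l hlt
        · exact (key l k hgt).symm
      rw [measure_iUnion hdisj (fun k => measurableSet_Ico), tsum_fintype]
      have hterm : ∀ k : Fin m, volume (Ico (c ↑k) (c ↑k + w' ↑k * Z ↑k i))
          = ENNReal.ofReal (w' ↑k * Z ↑k i) := by
        intro k; rw [Real.volume_Ico]; ring_nf
      rw [Finset.sum_congr rfl fun k _ => hterm k,
        ← ENNReal.ofReal_sum_of_nonneg (fun k _ => hZnn k i), hcoord i]
    · intro t ht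
      have hmne : 0 < m := by
        refine Nat.pos_of_ne_zero fun h0 => ?_
        rw [h0, hc0] at hcm
        norm_num at hcm
      set A : Finset (Fin m) := Finset.univ.filter (fun k : Fin m => c ↑k ≤ t) with hA
      have hAne : A.Nonempty := by
        refine ⟨⟨0, hmne⟩, ?_⟩
        rw [hA, Finset.mem_filter]
        exact ⟨Finset.mem_univ _, by rw [hc0]; exact ht.1⟩
      set k := A.max' hAne with hk
      have hkle : c ↑k ≤ t := (Finset.mem_filter.1 (A.max'_mem hAne)).2
      have hklt : t < c (↑k + 1) := by
        by_contra hcon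
        push_neg at hcon
        by_cases hlt : (↑k + 1 : ℕ) < m
        · have hmem' : (⟨↑k + 1, hlt⟩ : Fin m) ∈ A := by
            rw [hA, Finset.mem_filter]; exact ⟨Finset.mem_univ _, hcon⟩
          have h4 : (⟨↑k + 1, hlt⟩ : Fin m) ≤ k := A.le_max' _ hmem'
          have h5 : (↑k + 1 : ℕ) ≤ ↑k := h4
          omega
        · have hk2 := k.2
          have heq : (↑k + 1 : ℕ) = m := by omega
          rw [heq, hcm] at hcon
          exact absurd hcon (not_le.2 ht.2)
      have hzk : ∀ i, (⋃ l : Fin m, Ico (c ↑l) (c ↑l + w' ↑l * Z ↑l i)).indicator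
          (fun _ => (1:ℝ)) t = z k i := by
        intro i
        have hdisjk : ∀ l : Fin m, l ≠ k → t ∉ Ico (c ↑l) (c ↑l + w' ↑l * Z ↑l i) := by
          intro l hlk htl
          have htl' : t ∈ Ico (c ↑l) (c (↑l+1)) := ⟨htl.1, lt_of_lt_of_le htl.2 (hub l i)⟩
          rcases lt_or_gt_of_ne (Fin.val_ne_of_ne hlk) with hlt | hgt
          · have hle : c (↑l+1) ≤ c ↑k := hcmono hlt
            exact absurd hkle (not_le.2 (lt_of_lt_of_le htl'.2 hle))
          · have hle : c (↑k+1) ≤ c ↑l := hcmono hgt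
            exact absurd htl'.1 (not_le.2 (lt_of_lt_of_le hklt hle))
        rcases hZ01 k i with hzi | hzi
        · rw [Set.indicator_of_notMem, hzi]
          intro htmem
          obtain ⟨l, htl⟩ := Set.mem_iUnion.1 htmem
          by_cases hlk : l = k
          · subst hlk
            rw [hZval k, hzi, mul_zero, add_zero] at htl
            exact absurd htl.2 (not_lt.2 htl.1)
          · exact hdisjk l hlk htl
        · rw [Set.indicator_of_mem, hzi]
          refine Set.mem_iUnion.2 ⟨k, hkle, ?_⟩
          rw [hZval k, hzi, mul_one, ← hcsucc]
          exact hklt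
      have hfin : (fun i => (⋃ l : Fin m, Ico (c ↑l) (c ↑l + w' ↑l * Z ↑l i)).indicator
          (fun _ => (1:ℝ)) t) = z k := funext hzk
      rw [hfin]
      exact hzF k
  · rintro ⟨S, hS, hSsub, hvol, hmemF⟩
    classical
    set s := hFfin.toFinset with hs
    have hSmeas : ∀ i, MeasurableSet (S i) := by
      intro i; obtain ⟨k, a, b, hab⟩ := hS i
      rw [hab]; exact MeasurableSet.iUnion fun j => measurableSet_Ico
    set f : ℝ → (Fin n → ℝ) := fun t i => (S i).indicator (fun _ => (1:ℝ)) t with hf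
    set T : (Fin n → ℝ) → Set ℝ := fun v => Ico 0 1 ∩ ⋂ i, {t | f t i = v i} with hT
    have hTmeas : ∀ v, MeasurableSet (T v) := by
      intro v
      refine measurableSet_Ico.inter (MeasurableSet.iInter fun i => ?_)
      have : {t | f t i = v i} = (fun t => (S i).indicator (fun _ => (1:ℝ)) t) ⁻¹' {v i} := rfl
      rw [this]
      exact (measurable_const.indicator (hSmeas i)) (measurableSet_singleton _)
    have hTmemf : ∀ t ∈ Ico (0:ℝ) 1, t ∈ T (f t) := by
      intro t ht
      exact ⟨ht, mem_iInter.2 fun i => rfl⟩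
    have hTchar : ∀ v t, t ∈ T v → f t = v := by
      intro v t ht
      funext i
      exact mem_iInter.1 ht.2 i
    have hdisjT : (↑s : Set (Fin n → ℝ)).PairwiseDisjoint T := by
      intro v _ v' _ hne
      refine Set.disjoint_left.2 fun t ht ht' => hne ?_
      rw [← hTchar v t ht, ← hTchar v' t ht']
    have hcover : Ico (0:ℝ) 1 = ⋃ v ∈ s, T v := by
      apply Set.Subset.antisymm
      · intro t ht
        have hfm : f t ∈ s := by rw [hs, hFfin.mem_toFinset]; exact hmemF t ht
        exact Set.mem_biUnion hfm (hTmemf t ht)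
      · intro t ht
        obtain ⟨v, _, htv⟩ := Set.mem_iUnion₂.1 ht
        exact htv.1
    have hTne : ∀ v, volume (T v) ≠ ⊤ := by
      intro v
      refine ne_top_of_le_ne_top ?_ (measure_mono (Set.inter_subset_left))
      rw [Real.volume_Ico]; simp
    have hSi : ∀ i, S i = ⋃ v ∈ s.filter (fun v => v i = 1), T v := by
      intro i
      apply Set.Subset.antisymm
      · intro t ht
        have ht01 := hSsub i ht
        have hfm : f t ∈ s.filter (fun v => v i = 1) := by
          rw [Finset.mem_filter]
          refine ⟨by rw [hs, hFfin.mem_toFinset]; exact hmemF t ht01, ?_⟩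
          show f t i = 1
          simp [hf, Set.indicator_of_mem ht]
        exact Set.mem_biUnion hfm (hTmemf t ht01)
      · intro t ht
        obtain ⟨v, hv, htv⟩ := Set.mem_iUnion₂.1 ht
        rw [Finset.mem_filter] at hv
        have : f t i = 1 := by rw [hTchar v t htv]; exact hv.2
        by_contra htS
        simp [hf, Set.indicator_of_notMem htS] at this
    set lam : (Fin n → ℝ) → ℝ := fun v => (volume (T v)).toReal with hlam
    have hsumvol : ∑ v ∈ s, volume (T v) = 1 := by
      rw [← measure_biUnion_finset hdisjT (fun v _ => hTmeas v), ← hcover, Real.volume_Ico]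
      simp
    have hsum1 : ∑ v ∈ s, lam v = 1 := by
      rw [hlam, ← ENNReal.toReal_sum (fun v _ => hTne v), hsumvol, ENNReal.toReal_one]
    have hcoord : ∀ i, ∑ v ∈ s, lam v * v i = h i := by
      intro i
      have h1 : ∑ v ∈ s, lam v * v i = ∑ v ∈ s.filter (fun v => v i = 1), lam v * v i := by
        refine (Finset.sum_filter_of_ne fun v hv hne => ?_).symm
        rcases hFbin v (by rwa [hs, hFfin.mem_toFinset] at hv) i with h0 | h1
        · exact absurd (by rw [h0, mul_zero]) hne
        · exact h1
      have h2 : ∑ v ∈ s.filter (fun v => v i = 1), lam v * v i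
          = ∑ v ∈ s.filter (fun v => v i = 1), lam v := by
        refine Finset.sum_congr rfl fun v hv => ?_
        rw [(Finset.mem_filter.1 hv).2, mul_one]
      have h3 : ∑ v ∈ s.filter (fun v => v i = 1), lam v = (volume (S i)).toReal := by
        rw [hSi i, measure_biUnion_finset (hdisjT.subset (by simp only [Finset.coe_filter]; exact fun x hx => hx.1))
          (fun v _ => hTmeas v), ENNReal.toReal_sum (fun v _ => hTne v)]
      rw [h1, h2, h3, hvol i, ENNReal.toReal_ofReal (hh i).1]
    have hmem := Finset.centerMass_mem_convexHull s
      (w := lam) (fun v _ => ENNReal.toReal_nonneg)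
      (by rw [hsum1]; norm_num)
      (z := id) (fun v hv => by rwa [hs, hFfin.mem_toFinset] at hv)
    rwa [Finset.centerMass_eq_of_sum_1 _ _ hsum1, show ∑ v ∈ s, lam v • id v = h from ?_] at hmem
    funext i
    rw [Finset.sum_apply]
    simpa using hcoord i
end

section
/- Let G = (V,E) be an odd cycle (odd hole) with |V| odd. Then the polytope H = {x ∈ [0,1]^V : x_i + x_j ≤ 1 for all {i,j} ∈ E, ∑_{i∈V} x_i ≤ (|V|−1)/2} equals the convex hull of the incidence vectors of stable sets of G, i.e., conv{x ∈ {0,1}^V : x_i + x_j ≤ 1 for all {i,j} ∈ E}. -/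
open Finset

def polyH (n : ℕ) [NeZero n] : Set (ZMod n → ℝ) :=
  {x | (∀ i, 0 ≤ x i ∧ x i ≤ 1) ∧ (∀ i : ZMod n, x i + x (i + 1) ≤ 1) ∧
    (∑ i : ZMod n, x i) ≤ ((n : ℝ) - 1) / 2}

def intS (n : ℕ) [NeZero n] : Set (ZMod n → ℝ) :=
  {x | (∀ i, x i = 0 ∨ x i = 1) ∧ (∀ i : ZMod n, x i + x (i + 1) ≤ 1)}

lemma int_sum {ι : Type*} (A : Finset ι) (f : ι → ℝ) (h : ∀ i ∈ A, ∃ z : ℤ, f i = z) :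
    ∃ z : ℤ, ∑ i ∈ A, f i = z := by
  classical
  induction A using Finset.cons_induction with
  | empty => exact ⟨0, by simp⟩
  | cons a s ha ih =>
    obtain ⟨z, hz⟩ := ih (fun i hi => h i (Finset.mem_cons_of_mem hi))
    obtain ⟨w, hw⟩ := h a (Finset.mem_cons_self a s)
    exact ⟨w + z, by rw [Finset.sum_cons, hz, hw]; push_cast; ring⟩

lemma sum_shift {n : ℕ} [NeZero n] (x : ZMod n → ℝ) :
    ∑ i : ZMod n, x (i + 1) = ∑ i : ZMod n, x i :=
  Fintype.sum_equiv (Equiv.addRight (1 : ZMod n)) _ _ (fun i => rfl)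

lemma intS_subset_polyH (n : ℕ) [NeZero n] (hodd : Odd n) : intS n ⊆ polyH n := by
  rintro x ⟨h01, hedge⟩
  have hb : ∀ i, 0 ≤ x i ∧ x i ≤ 1 := by
    intro i; rcases h01 i with h | h <;> rw [h] <;> norm_num
  refine ⟨hb, hedge, ?_⟩
  obtain ⟨z, hz⟩ := int_sum Finset.univ x (fun i _ => by
    rcases h01 i with h | h
    · exact ⟨0, by rw [h]; norm_num⟩
    · exact ⟨1, by rw [h]; norm_num⟩)
  have h2 : 2 * ∑ i : ZMod n, x i ≤ (n : ℝ) := by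
    have : ∑ i : ZMod n, (x i + x (i + 1)) ≤ ∑ _i : ZMod n, (1 : ℝ) :=
      Finset.sum_le_sum (fun i _ => hedge i)
    rw [Finset.sum_add_distrib, sum_shift] at this
    simpa [ZMod.card, two_mul] using this
  rw [hz] at h2 ⊢
  have h3 : 2 * z ≤ (n : ℤ) := by exact_mod_cast h2
  have : 2 * z ≤ (n : ℤ) - 1 := by
    obtain ⟨l, hl⟩ := hodd
    have hn' : (n : ℤ) = 2 * l + 1 := by exact_mod_cast hl
    omega
  have : (2 : ℝ) * z ≤ (n : ℝ) - 1 := by exact_mod_cast this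
  linarith

lemma convex_polyH (n : ℕ) [NeZero n] : Convex ℝ (polyH n) := by
  rintro x ⟨hxb, hxe, hxs⟩ y ⟨hyb, hye, hys⟩ a b ha hb hab
  refine ⟨?_, ?_, ?_⟩
  · intro i
    have h1 := (hxb i).1; have h2 := (hxb i).2
    have h3 := (hyb i).1; have h4 := (hyb i).2
    simp only [Pi.add_apply, Pi.smul_apply, smul_eq_mul]
    constructor <;> nlinarith
  · intro i
    have h1 := hxe i; have h2 := hye i
    simp only [Pi.add_apply, Pi.smul_apply, smul_eq_mul]
    nlinarith
  · simp only [Pi.add_apply, Pi.smul_apply, smul_eq_mul]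
    rw [Finset.sum_add_distrib, ← Finset.mul_sum, ← Finset.mul_sum]
    have t1 := mul_le_mul_of_nonneg_left hxs ha
    have t2 := mul_le_mul_of_nonneg_left hys hb
    have t3 : a * (((n:ℝ) - 1) / 2) + b * (((n:ℝ) - 1) / 2) = ((n:ℝ) - 1) / 2 := by
      rw [← add_mul, hab, one_mul]
    linarith

lemma isClosed_polyH (n : ℕ) [NeZero n] : IsClosed (polyH n) := by
  have : polyH n = (⋂ i : ZMod n, {x : ZMod n → ℝ | 0 ≤ x i}) ∩
      ((⋂ i : ZMod n, {x : ZMod n → ℝ | x i ≤ 1}) ∩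
      ((⋂ i : ZMod n, {x : ZMod n → ℝ | x i + x (i + 1) ≤ 1}) ∩
      {x : ZMod n → ℝ | ∑ i : ZMod n, x i ≤ ((n : ℝ) - 1) / 2})) := by
    ext x
    simp only [polyH, Set.mem_setOf_eq, Set.mem_inter_iff, Set.mem_iInter, forall_and]
    tauto
  rw [this]
  refine IsClosed.inter (isClosed_iInter fun i => isClosed_le continuous_const (continuous_apply i))
    (IsClosed.inter (isClosed_iInter fun i => isClosed_le (continuous_apply i) continuous_const)
    (IsClosed.inter (isClosed_iInter fun i =>
      isClosed_le ((continuous_apply i).add (continuous_apply (i + 1))) continuous_const)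
    (isClosed_le (by continuity) continuous_const)))

lemma isCompact_polyH (n : ℕ) [NeZero n] : IsCompact (polyH n) := by
  refine IsCompact.of_isClosed_subset (isCompact_Icc (a := (0 : ZMod n → ℝ)) (b := 1))
    (isClosed_polyH n) ?_
  rintro x ⟨hxb, -, -⟩
  exact ⟨fun i => (hxb i).1, fun i => (hxb i).2⟩

lemma finite_intS (n : ℕ) [NeZero n] : (intS n).Finite := by
  have h : (intS n) ⊆ Set.pi Set.univ (fun _ : ZMod n => ({0, 1} : Set ℝ)) := by
    rintro x ⟨h01, -⟩ i _
    rcases h01 i with h | h <;> simp [h]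
  exact Set.Finite.subset (Set.Finite.pi (fun _ => (Set.finite_singleton (1:ℝ)).insert 0)) h

lemma cast_succ {n : ℕ} (t : ℕ) : ((t + 1 : ℕ) : ZMod n) = (t : ZMod n) + 1 := by push_cast; ring

lemma run_inj {n : ℕ} [NeZero n] {m : ℕ} (hm : m ≤ n - 1) (p : ZMod n) {s t : ℕ}
    (hs : s ≤ m) (ht : t ≤ m) (h : p + (s : ZMod n) = p + (t : ZMod n)) : s = t := by
  have hn : 0 < n := Nat.pos_of_ne_zero (NeZero.ne n)
  have h' : (s : ZMod n) = (t : ZMod n) := by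
    have := congrArg (fun z => z - p) h; simpa [add_comm, add_sub_cancel_right] using h
  have hs' : s < n := by omega
  have ht' : t < n := by omega
  have := congrArg ZMod.val h'
  rwa [ZMod.val_natCast_of_lt hs', ZMod.val_natCast_of_lt ht'] at this

def altVec (n : ℕ) [NeZero n] (p : ZMod n) (m : ℕ) : ZMod n → ℝ :=
  fun i => ∑ t ∈ range (m + 1), (if p + (t : ZMod n) = i then (-1 : ℝ) ^ t else 0)

lemma altVec_apply {n : ℕ} [NeZero n] {p : ZMod n} {m : ℕ} (hm : m ≤ n - 1) {t : ℕ}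
    (ht : t ≤ m) : altVec n p m (p + (t : ZMod n)) = (-1 : ℝ) ^ t := by
  unfold altVec
  rw [Finset.sum_congr rfl (g := fun s => if s = t then (-1 : ℝ) ^ s else 0)
    (fun s hs => by
      rw [Finset.mem_range] at hs
      congr 1
      exact propext ⟨fun h => run_inj hm p (by omega) ht h, fun h => by rw [h]⟩)]
  rw [Finset.sum_ite_eq' (range (m + 1)) t (fun s => (-1 : ℝ) ^ s)]
  simp [Finset.mem_range, Nat.lt_succ_iff, ht]

lemma altVec_eq_zero {n : ℕ} [NeZero n] {p : ZMod n} {m : ℕ} {i : ZMod n}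
    (h : ∀ t ≤ m, p + (t : ZMod n) ≠ i) : altVec n p m i = 0 := by
  unfold altVec
  refine Finset.sum_eq_zero fun t ht => ?_
  rw [Finset.mem_range, Nat.lt_succ_iff] at ht
  simp [h t ht]

lemma altVec_abs {n : ℕ} [NeZero n] {p : ZMod n} {m : ℕ} (hm : m ≤ n - 1) (i : ZMod n) :
    |altVec n p m i| ≤ 1 := by
  by_cases h : ∃ t, t ≤ m ∧ p + (t : ZMod n) = i
  · obtain ⟨t, ht, rfl⟩ := h
    rw [altVec_apply hm ht, abs_pow, abs_neg, abs_one, one_pow]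
  · push_neg at h
    rw [altVec_eq_zero h]; norm_num

lemma altVec_sum {n : ℕ} [NeZero n] (p : ZMod n) (m : ℕ) :
    ∑ i : ZMod n, altVec n p m i = if Even m then 1 else 0 := by
  unfold altVec
  rw [Finset.sum_comm]
  have : ∀ t ∈ range (m + 1),
      (∑ i : ZMod n, if p + (t : ZMod n) = i then (-1 : ℝ) ^ t else 0) = (-1 : ℝ) ^ t := by
    intro t _
    rw [Finset.sum_ite_eq (univ : Finset (ZMod n)) (p + (t : ZMod n)) (fun _ => (-1 : ℝ) ^ t)]
    simp
  rw [Finset.sum_congr rfl this, neg_one_geom_sum]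
  simp [Nat.even_add_one]
  by_cases h : Even m <;> simp [h]

structure Run (n : ℕ) [NeZero n] (x : ZMod n → ℝ) where
  p : ZMod n
  m : ℕ
  hm : m ≤ n - 1
  tight : ∀ t < m, x (p + (t : ZMod n)) + x (p + (t : ZMod n) + 1) = 1
  right : x (p + (m : ZMod n)) + x (p + (m : ZMod n) + 1) < 1
  left : x (p - 1) + x p < 1
  frac : ∀ t ≤ m, 0 < x (p + (t : ZMod n)) ∧ x (p + (t : ZMod n)) < 1

def Run.Mem {n : ℕ} [NeZero n] {x : ZMod n → ℝ} (r : Run n x) (i : ZMod n) : Prop :=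
  ∃ t, t ≤ r.m ∧ r.p + (t : ZMod n) = i

lemma Run.mem_succ {n : ℕ} [NeZero n] {x : ZMod n → ℝ} (r : Run n x) {i : ZMod n}
    (ht : x i + x (i + 1) = 1) (hi : r.Mem i) : r.Mem (i + 1) := by
  obtain ⟨t, htm, rfl⟩ := hi
  rcases eq_or_lt_of_le htm with rfl | hlt
  · exact absurd ht (by have := r.right; linarith)
  · exact ⟨t + 1, hlt, by rw [cast_succ]; ring⟩

lemma Run.mem_pred {n : ℕ} [NeZero n] {x : ZMod n → ℝ} (r : Run n x) {i : ZMod n}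
    (ht : x i + x (i + 1) = 1) (hi : r.Mem (i + 1)) : r.Mem i := by
  obtain ⟨t, htm, hteq⟩ := hi
  rcases Nat.eq_zero_or_pos t with rfl | hpos
  · exfalso
    have hteq' : r.p = i + 1 := by simpa using hteq
    have hi : i = r.p - 1 := by rw [hteq']; ring
    rw [hi] at ht
    have e : r.p - 1 + 1 = r.p := by ring
    rw [e] at ht
    have := r.left; linarith
  · refine ⟨t - 1, by omega, ?_⟩
    have h1 : ((t - 1 : ℕ) : ZMod n) = (t : ZMod n) - 1 := by
      have e : t - 1 + 1 = t := by omega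
      have h2 := cast_succ (n := n) (t - 1)
      rw [e] at h2; rw [h2]; ring
    rw [h1]
    linear_combination hteq

lemma run_exists {n : ℕ} [NeZero n] {x : ZMod n → ℝ}
    (hedge : ∀ i : ZMod n, x i + x (i + 1) ≤ 1)
    {j e : ZMod n} (hj : 0 < x j ∧ x j < 1) (he : x e + x (e + 1) < 1) :
    ∃ (p : ZMod n) (m : ℕ) (b : ℕ),
      m ≤ n - 1 ∧
      (∀ t < m, x (p + (t : ZMod n)) + x (p + (t : ZMod n) + 1) = 1) ∧
      x (p + (m : ZMod n)) + x (p + (m : ZMod n) + 1) < 1 ∧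
      x (p - 1) + x p < 1 ∧
      (∀ t ≤ m, 0 < x (p + (t : ZMod n)) ∧ x (p + (t : ZMod n)) < 1) ∧
      b ≤ m ∧ p + (b : ZMod n) = j := by
  classical
  have hn : 0 < n := Nat.pos_of_ne_zero (NeZero.ne n)
  -- backward search
  have hPex : ∃ b : ℕ, x (j - (b : ZMod n) - 1) + x (j - (b : ZMod n)) < 1 := by
    refine ⟨(j - 1 - e).val, ?_⟩
    have hv : (((j - 1 - e).val : ℕ) : ZMod n) = j - 1 - e := ZMod.natCast_rightInverse _
    rw [hv]
    have h1 : j - (j - 1 - e) - 1 = e := by ring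
    have h2 : j - (j - 1 - e) = e + 1 := by ring
    rw [h1, h2]; exact he
  set b := Nat.find hPex with hbdef
  have hbspec : x (j - (b : ZMod n) - 1) + x (j - (b : ZMod n)) < 1 := Nat.find_spec hPex
  have hbmin : ∀ a < b, x (j - (a : ZMod n) - 1) + x (j - (a : ZMod n)) = 1 := by
    intro a ha
    have hnlt := Nat.find_min hPex ha
    have hle := hedge (j - (a : ZMod n) - 1)
    have e1 : j - (a : ZMod n) - 1 + 1 = j - (a : ZMod n) := by ring
    rw [e1] at hle
    push_neg at hnlt
    linarith
  set p := j - (b : ZMod n) with hpdef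
  -- forward search
  have hQex : ∃ t : ℕ, x (p + (t : ZMod n)) + x (p + (t : ZMod n) + 1) < 1 := by
    refine ⟨n - 1, ?_⟩
    have h1 : ((n - 1 : ℕ) : ZMod n) = -1 := by
      have : ((n - 1 : ℕ) : ZMod n) = (n : ZMod n) - 1 := by
        push_cast [Nat.cast_sub (by omega : 1 ≤ n)]; ring
      rw [this, ZMod.natCast_self]; ring
    rw [h1]
    rw [show p + -1 = p - 1 from by ring]
    rw [show p - 1 + 1 = p from by ring]
    exact hbspec
  set m := Nat.find hQex with hmdef
  have hmspec : x (p + (m : ZMod n)) + x (p + (m : ZMod n) + 1) < 1 := Nat.find_spec hQex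
  have htight : ∀ t < m, x (p + (t : ZMod n)) + x (p + (t : ZMod n) + 1) = 1 := by
    intro t htm
    have hnlt := Nat.find_min hQex htm
    have hle := hedge (p + (t : ZMod n))
    push_neg at hnlt
    linarith
  have hm : m ≤ n - 1 := Nat.find_le (by
    -- same proof as hQex witness
    have h1 : ((n - 1 : ℕ) : ZMod n) = -1 := by
      have : ((n - 1 : ℕ) : ZMod n) = (n : ZMod n) - 1 := by
        push_cast [Nat.cast_sub (by omega : 1 ≤ n)]; ring
      rw [this, ZMod.natCast_self]; ring
    rw [h1]
    rw [show p + -1 = p - 1 from by ring]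
    rw [show p - 1 + 1 = p from by ring]
    exact hbspec)
  have hleft : x (p - 1) + x p < 1 := by
    have e1 : p - 1 = j - (b : ZMod n) - 1 := by rw [hpdef]
    rw [e1, hpdef]; exact hbspec
  -- tightness of backward edges, reindexed
  have htight_b : ∀ t < b, x (p + (t : ZMod n)) + x (p + (t : ZMod n) + 1) = 1 := by
    intro t htb
    have := hbmin (b - t - 1) (by omega)
    have hc : ((b - t - 1 : ℕ) : ZMod n) = (b : ZMod n) - (t : ZMod n) - 1 := by
      push_cast [Nat.cast_sub (by omega : t ≤ b), Nat.cast_sub (by omega : 1 ≤ b - t)]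
      ring
    rw [hc] at this
    have e1 : j - ((b : ZMod n) - (t : ZMod n) - 1) - 1 = p + (t : ZMod n) := by
      rw [hpdef]; ring
    have e2 : j - ((b : ZMod n) - (t : ZMod n) - 1) = p + (t : ZMod n) + 1 := by
      rw [hpdef]; ring
    rw [e1, e2] at this
    exact this
  have hbm : b ≤ m := by
    by_contra hlt
    push_neg at hlt
    have := htight_b m hlt
    linarith
  have hpbj : p + (b : ZMod n) = j := by rw [hpdef]; ring
  -- fractionality
  have hfb : 0 < x (p + (b : ZMod n)) ∧ x (p + (b : ZMod n)) < 1 := by rw [hpbj]; exact hj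
  have hstep : ∀ t < m, ((0 < x (p + (t : ZMod n)) ∧ x (p + (t : ZMod n)) < 1) ↔
      (0 < x (p + ((t + 1 : ℕ) : ZMod n)) ∧ x (p + ((t + 1 : ℕ) : ZMod n)) < 1)) := by
    intro t htm
    have ht := htight t htm
    rw [cast_succ, ← add_assoc]
    constructor
    · rintro ⟨h1, h2⟩; constructor <;> linarith
    · rintro ⟨h1, h2⟩; constructor <;> linarith
  have hfrac : ∀ t ≤ m, 0 < x (p + (t : ZMod n)) ∧ x (p + (t : ZMod n)) < 1 := by
    -- downward from b
    have hdown : ∀ s, s ≤ b → 0 < x (p + ((b - s : ℕ) : ZMod n)) ∧ x (p + ((b - s : ℕ) : ZMod n)) < 1 := by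
      intro s
      induction s with
      | zero => intro _; simpa using hfb
      | succ s ih =>
        intro hs
        have hprev := ih (by omega)
        have he1 : b - s = (b - (s + 1)) + 1 := by omega
        rw [he1] at hprev
        exact ((hstep (b - (s + 1)) (by omega)).2 hprev)
    have hup : ∀ s, b + s ≤ m → 0 < x (p + ((b + s : ℕ) : ZMod n)) ∧ x (p + ((b + s : ℕ) : ZMod n)) < 1 := by
      intro s
      induction s with
      | zero => intro _; simpa using hfb
      | succ s ih =>
        intro hs
        have hprev := ih (by omega)
        have he1 : b + (s + 1) = (b + s) + 1 := by omega
        rw [he1]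
        exact ((hstep (b + s) (by omega)).1 hprev)
    intro t ht
    rcases le_or_gt t b with h | h
    · have := hdown (b - t) (by omega)
      rwa [show b - (b - t) = t by omega] at this
    · have := hup (t - b) (by omega)
      rwa [show b + (t - b) = t by omega] at this
  exact ⟨p, m, b, hm, htight, hmspec, hleft, hfrac, hbm, hpbj⟩


lemma perturb {n : ℕ} [NeZero n] {x : ZMod n → ℝ} (hx : x ∈ polyH n) (d : ZMod n → ℝ)
    (h0 : ∀ i, |d i| ≤ 1)
    (h1 : ∀ i, d i ≠ 0 → 0 < x i ∧ x i < 1)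
    (h2 : ∀ i, x i + x (i + 1) = 1 → d i + d (i + 1) = 0)
    (h3 : (∑ i : ZMod n, x i) = ((n : ℝ) - 1) / 2 → ∑ i : ZMod n, d i = 0) :
    ∃ ε : ℝ, 0 < ε ∧ x + ε • d ∈ polyH n ∧ x - ε • d ∈ polyH n := by
  classical
  obtain ⟨hxb, hxe, hxs⟩ := hx
  have hn : 0 < n := Nat.pos_of_ne_zero (NeZero.ne n)
  have hnR : (0 : ℝ) < n := by exact_mod_cast hn
  have hne : (univ : Finset (ZMod n)).Nonempty := univ_nonempty
  set f : ZMod n → ℝ := fun i => if d i = 0 then 1 else min (x i) (1 - x i) with hf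
  set g : ZMod n → ℝ := fun i => if x i + x (i + 1) = 1 then 1 else (1 - x i - x (i + 1)) / 2
    with hg
  set C : ℝ := if (∑ i : ZMod n, x i) = ((n : ℝ) - 1) / 2 then 1
    else ((((n : ℝ) - 1) / 2) - ∑ i : ZMod n, x i) / n with hC
  set ε := min (min (univ.inf' hne f) (univ.inf' hne g)) C with hε
  have hεf : ∀ i, ε ≤ f i := fun i =>
    le_trans (le_trans (min_le_left _ _) (min_le_left _ _)) (Finset.inf'_le _ (mem_univ i))
  have hεg : ∀ i, ε ≤ g i := fun i =>
    le_trans (le_trans (min_le_left _ _) (min_le_right _ _)) (Finset.inf'_le _ (mem_univ i))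
  have hεC : ε ≤ C := min_le_right _ _
  have hεpos : 0 < ε := by
    rw [hε]
    refine lt_min (lt_min ?_ ?_) ?_
    · rw [Finset.lt_inf'_iff]
      intro i _
      by_cases hd : d i = 0
      · simp [hf, hd]
      · have hfr := h1 i hd
        simp only [hf, hd, if_false, lt_min_iff]
        exact ⟨hfr.1, by linarith [hfr.2]⟩
    · rw [Finset.lt_inf'_iff]
      intro i _
      by_cases ht : x i + x (i + 1) = 1
      · simp [hg, ht]
      · have := lt_of_le_of_ne (hxe i) ht
        simp only [hg, ht, if_false]
        linarith
    · rw [hC]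
      by_cases hs : (∑ i : ZMod n, x i) = ((n : ℝ) - 1) / 2
      · simp [hs]
      · have := lt_of_le_of_ne hxs hs
        simp only [hs, if_false]
        apply div_pos (by linarith) hnR
  have key : ∀ σ : ℝ, σ = 1 ∨ σ = -1 → x + (σ * ε) • d ∈ polyH n := by
    intro σ hσ
    have hσ1 : |σ| = 1 := by rcases hσ with rfl | rfl <;> norm_num
    have habs : ∀ i, |σ * ε * d i| ≤ ε := by
      intro i
      rw [abs_mul, abs_mul, hσ1, one_mul, abs_of_pos hεpos]
      calc ε * |d i| ≤ ε * 1 := mul_le_mul_of_nonneg_left (h0 i) (le_of_lt hεpos)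
        _ = ε := mul_one ε
    refine ⟨?_, ?_, ?_⟩
    · intro i
      simp only [Pi.add_apply, Pi.smul_apply, smul_eq_mul]
      by_cases hd : d i = 0
      · rw [hd, mul_zero, add_zero]; exact hxb i
      · have hfr := h1 i hd
        have hεi := hεf i
        rw [hf] at hεi
        simp only [hd, if_false, le_min_iff] at hεi
        have := abs_le.mp (habs i)
        constructor <;> linarith [hεi.1, hεi.2, this.1, this.2]
    · intro i
      simp only [Pi.add_apply, Pi.smul_apply, smul_eq_mul]
      by_cases ht : x i + x (i + 1) = 1
      · have hd := h2 i ht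
        have e : x i + σ * ε * d i + (x (i + 1) + σ * ε * d (i + 1)) =
            x i + x (i + 1) + σ * ε * (d i + d (i + 1)) := by ring
        rw [e, hd, mul_zero, add_zero, ht]
      · have hεi := hεg i
        rw [hg] at hεi
        simp only [ht, if_false] at hεi
        have t1 := abs_le.mp (habs i)
        have t2 := abs_le.mp (habs (i + 1))
        linarith [t1.1, t1.2, t2.1, t2.2]
    · simp only [Pi.add_apply, Pi.smul_apply, smul_eq_mul]
      rw [Finset.sum_add_distrib, ← Finset.mul_sum]
      by_cases hs : (∑ i : ZMod n, x i) = ((n : ℝ) - 1) / 2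
      · rw [h3 hs, mul_zero, add_zero]; exact hxs
      · have hεi := hεC
        rw [hC] at hεi
        simp only [hs, if_false] at hεi
        have hslack := lt_of_le_of_ne hxs hs
        have hdsum : |∑ i : ZMod n, d i| ≤ (n : ℝ) := by
          calc |∑ i : ZMod n, d i| ≤ ∑ i : ZMod n, |d i| := Finset.abs_sum_le_sum_abs _ _
            _ ≤ ∑ _i : ZMod n, (1 : ℝ) := Finset.sum_le_sum (fun i _ => h0 i)
            _ = (n : ℝ) := by simp [ZMod.card]
        have hd' := abs_le.mp hdsum
        have hεn : ε * (n : ℝ) ≤ (((n : ℝ) - 1) / 2) - ∑ i : ZMod n, x i := by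
          exact (le_div_iff₀ hnR).mp hεi
        have habs2 : |σ * ε * ∑ i : ZMod n, d i| ≤ ε * n := by
          rw [abs_mul, abs_mul, hσ1, one_mul, abs_of_pos hεpos]
          exact mul_le_mul_of_nonneg_left hdsum (le_of_lt hεpos)
        have := abs_le.mp habs2
        linarith [this.2, hεn]
  refine ⟨ε, hεpos, ?_, ?_⟩
  · have := key 1 (Or.inl rfl)
    rwa [one_mul] at this
  · have := key (-1) (Or.inr rfl)
    have e : x + ((-1 : ℝ) * ε) • d = x - ε • d := by
      ext i; simp [Pi.add_apply, Pi.smul_apply]; ring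
    rwa [e] at this
-- ===== Part 5: run/altVec interaction lemmas =====

lemma Run.frac_mem {n : ℕ} [NeZero n] {x : ZMod n → ℝ} (r : Run n x) {i : ZMod n}
    (hi : r.Mem i) : 0 < x i ∧ x i < 1 := by
  obtain ⟨t, htm, rfl⟩ := hi; exact r.frac t htm

lemma Run.altVec_eq_zero' {n : ℕ} [NeZero n] {x : ZMod n → ℝ} (r : Run n x) {i : ZMod n}
    (hi : ¬ r.Mem i) : altVec n r.p r.m i = 0 :=
  altVec_eq_zero (fun t ht heq => hi ⟨t, ht, heq⟩)

lemma Run.mem_self {n : ℕ} [NeZero n] {x : ZMod n → ℝ} (r : Run n x) : r.Mem r.p :=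
  ⟨0, Nat.zero_le _, by simp⟩

lemma Run.altVec_self {n : ℕ} [NeZero n] {x : ZMod n → ℝ} (r : Run n x) :
    altVec n r.p r.m r.p = 1 := by
  have := altVec_apply (p := r.p) r.hm (Nat.zero_le r.m)
  simpa using this

lemma Run.support {n : ℕ} [NeZero n] {x : ZMod n → ℝ} (r : Run n x) {i : ZMod n}
    (h : altVec n r.p r.m i ≠ 0) : r.Mem i := by
  by_contra hne; exact h (r.altVec_eq_zero' hne)

lemma Run.altVec_tight_edge {n : ℕ} [NeZero n] {x : ZMod n → ℝ} (r : Run n x) {i : ZMod n}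
    (ht : x i + x (i + 1) = 1) :
    altVec n r.p r.m i + altVec n r.p r.m (i + 1) = 0 := by
  by_cases hi : r.Mem i
  · obtain ⟨t, htm, rfl⟩ := hi
    rcases eq_or_lt_of_le htm with rfl | hlt
    · exact absurd ht (by have := r.right; intro h; linarith)
    · rw [altVec_apply r.hm htm]
      have e : r.p + (t : ZMod n) + 1 = r.p + ((t + 1 : ℕ) : ZMod n) := by
        rw [cast_succ]; ring
      rw [e, altVec_apply r.hm hlt, pow_succ]
      ring
  · have hi1 : ¬ r.Mem (i + 1) := fun h => hi (r.mem_pred ht h)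
    rw [r.altVec_eq_zero' hi, r.altVec_eq_zero' hi1, add_zero]

lemma run_disjoint {n : ℕ} [NeZero n] {x : ZMod n → ℝ} (r1 r2 : Run n x) {j' : ZMod n}
    (hj' : ¬ r1.Mem j') (hb2 : ∃ b ≤ r2.m, r2.p + (b : ZMod n) = j') :
    ∀ i, r2.Mem i → ¬ r1.Mem i := by
  have hdown : ∀ s, s ≤ r2.m → r1.Mem (r2.p + (s : ZMod n)) → r1.Mem r2.p := by
    intro s
    induction s with
    | zero => intro _ h; simpa using h
    | succ s ih =>
      intro hs h
      have ht := r2.tight s (by omega)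
      have h' : r1.Mem (r2.p + (s : ZMod n) + 1) := by
        rwa [show r2.p + (s : ZMod n) + 1 = r2.p + ((s + 1 : ℕ) : ZMod n) from by
          rw [cast_succ]; ring]
      exact ih (by omega) (r1.mem_pred ht h')
  have hup : ∀ s, s ≤ r2.m → r1.Mem r2.p → r1.Mem (r2.p + (s : ZMod n)) := by
    intro s
    induction s with
    | zero => intro _ h; simpa using h
    | succ s ih =>
      intro hs h
      have ht := r2.tight s (by omega)
      have h' := r1.mem_succ ht (ih (by omega) h)
      rwa [show r2.p + (s : ZMod n) + 1 = r2.p + ((s + 1 : ℕ) : ZMod n) from by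
        rw [cast_succ]; ring] at h'
  intro i hi2 hi1
  obtain ⟨t, htm, rfl⟩ := hi2
  obtain ⟨b, hbm, hbj⟩ := hb2
  exact hj' (hbj ▸ hup b hbm (hdown t htm hi1))

lemma run_sum {n : ℕ} [NeZero n] {x : ZMod n → ℝ} {p : ZMod n} :
    ∀ k : ℕ, (∀ t < k + k, x (p + (t : ZMod n)) + x (p + (t : ZMod n) + 1) = 1) →
    ∑ t ∈ range (k + k + 1), x (p + (t : ZMod n)) = k + x p := by
  intro k
  induction k with
  | zero => intro _; simp
  | succ k ih =>
    intro htight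
    have e1 : (k + 1) + (k + 1) + 1 = (k + k + 1) + 1 + 1 := by omega
    rw [e1, Finset.sum_range_succ, Finset.sum_range_succ,
      ih (fun t ht => htight t (by omega))]
    have ht := htight (k + k + 1) (by omega)
    have e2 : ((k + k + 1 + 1 : ℕ) : ZMod n) = ((k + k + 1 : ℕ) : ZMod n) + 1 := cast_succ _
    rw [e2]
    push_cast at ht ⊢
    ring_nf at ht ⊢
    linarith

-- ===== Part 6: the direction construction =====

lemma exists_dir {n : ℕ} [NeZero n] (hodd : Odd n) {x : ZMod n → ℝ} (hx : x ∈ polyH n)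
    {j : ZMod n} (hj : 0 < x j ∧ x j < 1) :
    ∃ d : ZMod n → ℝ, d ≠ 0 ∧ (∀ i, |d i| ≤ 1) ∧ (∀ i, d i ≠ 0 → 0 < x i ∧ x i < 1) ∧
      (∀ i, x i + x (i + 1) = 1 → d i + d (i + 1) = 0) ∧
      ((∑ i : ZMod n, x i) = ((n : ℝ) - 1) / 2 → ∑ i : ZMod n, d i = 0) := by
  classical
  obtain ⟨hxb, hxe, hxs⟩ := hx
  have hn : 0 < n := Nat.pos_of_ne_zero (NeZero.ne n)
  by_cases hall : ∀ i : ZMod n, x i + x (i + 1) = 1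
  · -- all edges tight : impossible
    exfalso
    have h2step : ∀ i, x (i + 2) = x i := by
      intro i
      have a := hall i
      have b := hall (i + 1)
      rw [show i + 1 + 1 = i + 2 from by ring] at b
      linarith
    have hpow : ∀ (k : ℕ) (i : ZMod n), x (i + ((2 * k : ℕ) : ZMod n)) = x i := by
      intro k
      induction k with
      | zero => intro i; simp
      | succ k ih =>
        intro i
        have e : ((2 * (k + 1) : ℕ) : ZMod n) = ((2 * k : ℕ) : ZMod n) + 2 := by
          push_cast; ring
        rw [e, show i + (((2 * k : ℕ) : ZMod n) + 2) = (i + 2) + ((2 * k : ℕ) : ZMod n) from by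
          ring, ih (i + 2), h2step]
    have hconst : ∀ i : ZMod n, x i = x 0 := by
      intro i
      have hu : IsUnit (2 : ZMod n) := by
        have : IsUnit ((2 : ℕ) : ZMod n) :=
          (ZMod.isUnit_iff_coprime 2 n).2 (Nat.coprime_two_left.mpr hodd)
        simpa using this
      obtain ⟨u, hu2⟩ := hu
      set w : ZMod n := (↑u⁻¹ : ZMod n) * i with hw
      have hcast : ((2 * w.val : ℕ) : ZMod n) = i := by
        push_cast
        rw [ZMod.natCast_rightInverse w, hw, ← hu2, ← mul_assoc]
        rw [show ((u : ZMod n) * (↑u⁻¹ : ZMod n)) = 1 from by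
          rw [← Units.val_mul, mul_inv_cancel, Units.val_one]]
        rw [one_mul]
      have := hpow w.val 0
      rwa [zero_add, hcast] at this
    have hhalf : x 0 = 1 / 2 := by
      have := hall 0
      rw [hconst (0 + 1)] at this
      linarith
    have hsumx : ∑ i : ZMod n, x i = (n : ℝ) / 2 := by
      rw [Finset.sum_congr rfl (fun i _ => (hconst i)), Finset.sum_const, hhalf]
      simp [ZMod.card]
      ring
    rw [hsumx] at hxs
    have : (1 : ℝ) ≤ 0 := by
      have hnR : (0 : ℝ) < n := by exact_mod_cast hn
      linarith
    linarith
  · push_neg at hall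
    obtain ⟨e, he⟩ := hall
    have he' : x e + x (e + 1) < 1 := lt_of_le_of_ne (hxe e) he
    obtain ⟨p1, m1, b1, hm1, htight1, hright1, hleft1, hfrac1, hb1m, hb1⟩ :=
      run_exists hxe hj he'
    set r1 : Run n x := ⟨p1, m1, hm1, htight1, hright1, hleft1, hfrac1⟩ with hr1
    set d1 : ZMod n → ℝ := altVec n p1 m1 with hd1
    have hd1p : d1 r1.p = 1 := r1.altVec_self
    have hd1ne : d1 ≠ 0 := by
      intro h
      have := congrFun h r1.p
      rw [hd1p] at this
      simp at this
    have hd1abs : ∀ i, |d1 i| ≤ 1 := altVec_abs hm1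
    have hd1frac : ∀ i, d1 i ≠ 0 → 0 < x i ∧ x i < 1 := fun i h => r1.frac_mem (r1.support h)
    have hd1tight : ∀ i, x i + x (i + 1) = 1 → d1 i + d1 (i + 1) = 0 :=
      fun i h => r1.altVec_tight_edge h
    by_cases hsum : (∑ i : ZMod n, x i) = ((n : ℝ) - 1) / 2
    · by_cases hmeven : Even m1
      · by_cases hout : ∃ j' : ZMod n, (0 < x j' ∧ x j' < 1) ∧ ¬ r1.Mem j'
        · obtain ⟨j', hj', hj'n⟩ := hout
          obtain ⟨p2, m2, b2, hm2, htight2, hright2, hleft2, hfrac2, hb2m, hb2⟩ :=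
            run_exists hxe hj' he'
          set r2 : Run n x := ⟨p2, m2, hm2, htight2, hright2, hleft2, hfrac2⟩ with hr2
          set d2 : ZMod n → ℝ := altVec n p2 m2 with hd2
          by_cases hm2even : Even m2
          · -- difference of the two runs
            have hdisj : ∀ i, r2.Mem i → ¬ r1.Mem i :=
              run_disjoint r1 r2 hj'n ⟨b2, hb2m, hb2⟩
            refine ⟨d1 - d2, ?_, ?_, ?_, ?_, ?_⟩
            · intro h
              have := congrFun h r1.p
              have hn2 : ¬ r2.Mem r1.p := fun hmem => hdisj r1.p hmem r1.mem_self
              have h20 : d2 r1.p = 0 := r2.altVec_eq_zero' hn2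
              rw [Pi.sub_apply, hd1p, h20] at this
              simp at this
            · intro i
              rw [Pi.sub_apply]
              by_cases h1m : r1.Mem i
              · have h2m : ¬ r2.Mem i := fun hmem => hdisj i hmem h1m
                have h20 : d2 i = 0 := r2.altVec_eq_zero' h2m
                rw [h20]
                simpa using hd1abs i
              · have h10 : d1 i = 0 := r1.altVec_eq_zero' h1m
                rw [h10]
                simpa using altVec_abs hm2 i
            · intro i h
              rw [Pi.sub_apply] at h
              by_cases h1m : r1.Mem i
              · exact r1.frac_mem h1m
              · have h10 : d1 i = 0 := r1.altVec_eq_zero' h1m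
                rw [h10, zero_sub, neg_ne_zero] at h
                exact r2.frac_mem (r2.support h)
            · intro i h
              have t1 := r1.altVec_tight_edge h
              have t2 := r2.altVec_tight_edge h
              rw [Pi.sub_apply, Pi.sub_apply]
              linarith
            · intro _
              simp only [Pi.sub_apply]
              rw [Finset.sum_sub_distrib]
              rw [show (∑ i : ZMod n, d1 i) = if Even m1 then 1 else 0 from altVec_sum p1 m1,
                show (∑ i : ZMod n, d2 i) = if Even m2 then 1 else 0 from altVec_sum p2 m2,
                if_pos hmeven, if_pos hm2even]
              ring
          · -- second run has odd m : use it alone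
            refine ⟨d2, ?_, altVec_abs hm2, fun i h => r2.frac_mem (r2.support h),
              fun i h => r2.altVec_tight_edge h, ?_⟩
            · intro h
              have h1 : d2 r2.p = 1 := r2.altVec_self
              rw [h] at h1
              simp at h1
            · intro _
              rw [show (∑ i : ZMod n, d2 i) = if Even m2 then 1 else 0 from altVec_sum p2 m2,
                if_neg hm2even]
        · -- every fractional vertex lies in run 1 : integrality contradiction
          exfalso
          push_neg at hout
          obtain ⟨k, hk⟩ := hmeven
          set R : Finset (ZMod n) := (range (m1 + 1)).image (fun t : ℕ => p1 + (t : ZMod n))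
            with hR
          have hsplit : ∑ i ∈ R, x i + ∑ i ∈ Rᶜ, x i = ∑ i : ZMod n, x i :=
            Finset.sum_add_sum_compl R x
          have hinj : ∑ i ∈ R, x i = ∑ t ∈ range (m1 + 1), x (p1 + (t : ZMod n)) := by
            rw [hR]
            refine Finset.sum_image ?_
            intro s hs t ht hst
            rw [Finset.mem_coe, Finset.mem_range, Nat.lt_succ_iff] at hs ht
            exact run_inj hm1 p1 hs ht hst
          have hrsum : ∑ t ∈ range (m1 + 1), x (p1 + (t : ZMod n)) = k + x p1 := by
            rw [show m1 + 1 = k + k + 1 from by omega]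
            exact run_sum k (fun t ht => htight1 t (by omega))
          obtain ⟨z, hz⟩ := int_sum Rᶜ x (by
            intro i hi
            have hnm : ¬ r1.Mem i := by
              rintro ⟨t, htm, hteq⟩
              rw [Finset.mem_compl] at hi
              exact hi (Finset.mem_image.mpr ⟨t, Finset.mem_range.mpr (Nat.lt_succ_of_le htm), hteq⟩)
            have hnf : ¬ (0 < x i ∧ x i < 1) := fun h => hnm (hout i h)
            rcases eq_or_lt_of_le (hxb i).1 with h0 | h0
            · exact ⟨0, by rw [← h0]; norm_num⟩
            · have h1 : x i = 1 := by
                rcases eq_or_lt_of_le (hxb i).2 with h1 | h1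
                · exact h1
                · exact absurd ⟨h0, h1⟩ hnf
              exact ⟨1, by rw [h1]; norm_num⟩)
          obtain ⟨l, hl⟩ := hodd
          have hnR : (n : ℝ) = 2 * l + 1 := by exact_mod_cast hl
          have hxp : x p1 = ((l : ℤ) - k - z : ℤ) := by
            have := hsplit
            rw [hinj, hrsum, hz, hsum, hnR] at this
            push_cast
            linarith
          have hfr := hfrac1 0 (Nat.zero_le m1)
          simp only [Nat.cast_zero, add_zero] at hfr
          rw [hxp] at hfr
          have h1 : (0 : ℤ) < (l : ℤ) - k - z := by exact_mod_cast hfr.1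
          have h2 : ((l : ℤ) - k - z) < 1 := by exact_mod_cast hfr.2
          omega
      · -- m1 odd : run 1 alone works
        refine ⟨d1, hd1ne, hd1abs, hd1frac, hd1tight, ?_⟩
        intro _
        rw [show (∑ i : ZMod n, d1 i) = if Even m1 then 1 else 0 from altVec_sum p1 m1,
          if_neg hmeven]
    · exact ⟨d1, hd1ne, hd1abs, hd1frac, hd1tight, fun h => absurd h hsum⟩

-- ===== Part 7: extreme points are integral, main theorem =====

lemma extremePoints_subset_intS {n : ℕ} [NeZero n] (hodd : Odd n) :
    (polyH n).extremePoints ℝ ⊆ intS n := by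
  intro y hy
  obtain ⟨hymem, hyext⟩ := mem_extremePoints.mp hy
  obtain ⟨hyb, hye, hys⟩ := hymem
  refine ⟨?_, hye⟩
  intro i
  by_contra hni
  push_neg at hni
  have hfr : 0 < y i ∧ y i < 1 :=
    ⟨lt_of_le_of_ne (hyb i).1 (Ne.symm hni.1), lt_of_le_of_ne (hyb i).2 hni.2⟩
  obtain ⟨d, hdne, h0, h1, h2, h3⟩ := exists_dir hodd ⟨hyb, hye, hys⟩ hfr
  obtain ⟨ε, hεpos, hplus, hminus⟩ := perturb ⟨hyb, hye, hys⟩ d h0 h1 h2 h3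
  have hseg : y ∈ openSegment ℝ (y + ε • d) (y - ε • d) := by
    refine ⟨1/2, 1/2, by norm_num, by norm_num, by norm_num, ?_⟩
    ext i
    simp only [Pi.add_apply, Pi.sub_apply, Pi.smul_apply, smul_eq_mul]
    ring
  have := (hyext _ hplus _ hminus hseg).1
  have hd0 : ε • d = 0 := by
    have h' := congrArg (fun z => z - y) this
    simpa [add_sub_cancel_left] using h'
  rcases smul_eq_zero.mp hd0 with h | h
  · exact absurd h (ne_of_gt hεpos)
  · exact hdne h

theorem odd_cycle_stable_set_polytope
    (n : ℕ) [NeZero n] (hodd : Odd n) (hn : 5 ≤ n) :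
    {x : ZMod n → ℝ |
        (∀ i, 0 ≤ x i ∧ x i ≤ 1) ∧
        (∀ i : ZMod n, x i + x (i + 1) ≤ 1) ∧
        (∑ i : ZMod n, x i) ≤ ((n : ℝ) - 1) / 2} =
      convexHull ℝ {x : ZMod n → ℝ |
        (∀ i, x i = 0 ∨ x i = 1) ∧
        (∀ i : ZMod n, x i + x (i + 1) ≤ 1)} := by
  show polyH n = convexHull ℝ (intS n)
  apply Set.Subset.antisymm
  · intro x hx
    have h1 : closure (convexHull ℝ ((polyH n).extremePoints ℝ)) = polyH n :=
      closure_convexHull_extremePoints (isCompact_polyH n) (convex_polyH n)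
    have h3 : closure (convexHull ℝ ((polyH n).extremePoints ℝ)) ⊆
        closure (convexHull ℝ (intS n)) :=
      closure_mono (convexHull_mono (extremePoints_subset_intS hodd))
    have h4 : closure (convexHull ℝ (intS n)) = convexHull ℝ (intS n) :=
      IsClosed.closure_eq (IsCompact.isClosed ((finite_intS n).isCompact_convexHull (𝕜 := ℝ)))
    have hx' : x ∈ closure (convexHull ℝ (Set.extremePoints ℝ (polyH n))) := by
      rw [h1]; exact hx
    have hx2 := h3 hx'
    rwa [h4] at hx2
  · exact convexHull_min (intS_subset_polyH n hodd) (convex_polyH n)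
end

section
/- Let G = (V,E) be a bipartite graph. Then the polytope {x ∈ [0,1]^V : x_i + x_j ≤ 1 for all {i,j} ∈ E} equals the convex hull of the incidence vectors of stable sets of G, i.e., conv{x ∈ {0,1}^V : x_i + x_j ≤ 1 for all {i,j} ∈ E}. -/
open Finset

theorem bipartite_stable_set_polytope
    (V : Type) [Fintype V] (G : SimpleGraph V) (hbip : G.Colorable 2) :
    {x : V → ℝ |
        (∀ v, 0 ≤ x v ∧ x v ≤ 1) ∧
        (∀ i j : V, G.Adj i j → x i + x j ≤ 1)} =
      convexHull ℝ {x : V → ℝ |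
        (∀ v, x v = 0 ∨ x v = 1) ∧
        (∀ i j : V, G.Adj i j → x i + x j ≤ 1)} := by
  classical
  obtain ⟨c⟩ := hbip
  set S : Set (V → ℝ) := {x : V → ℝ |
        (∀ v, x v = 0 ∨ x v = 1) ∧
        (∀ i j : V, G.Adj i j → x i + x j ≤ 1)} with hSdef
  have hfin2 : ∀ a : Fin 2, a = 0 ∨ a = 1 := by decide
  apply Set.Subset.antisymm
  · -- hard direction
    intro x hx
    obtain ⟨hx01, hxe⟩ := hx
    set F : (V → ℝ) → Finset V := fun y => univ.filter (fun v => y v ≠ 0 ∧ y v ≠ 1)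
      with hFdef
    have hmemF : ∀ (y : V → ℝ) (v : V), v ∈ F y ↔ (y v ≠ 0 ∧ y v ≠ 1) := by
      intro y v; simp [hFdef]
    suffices H : ∀ n (y : V → ℝ), (F y).card ≤ n →
        (∀ v, 0 ≤ y v ∧ y v ≤ 1) → (∀ i j, G.Adj i j → y i + y j ≤ 1) →
        y ∈ convexHull ℝ S by
      exact H (F x).card x le_rfl hx01 hxe
    intro n
    induction n with
    | zero =>
      intro y hcard hy01 hye
      have hint : ∀ v, y v = 0 ∨ y v = 1 := by
        intro v
        by_contra h
        push_neg at h
        have hv : v ∈ F y := (hmemF y v).mpr h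
        have := Finset.card_pos.mpr ⟨v, hv⟩
        omega
      exact subset_convexHull ℝ S ⟨hint, hye⟩
    | succ n ih =>
      intro y hcard hy01 hye
      rcases Finset.eq_empty_or_nonempty (F y) with hFe | hFne
      · have hint : ∀ v, y v = 0 ∨ y v = 1 := by
          intro v
          by_contra h
          push_neg at h
          have hv : v ∈ F y := (hmemF y v).mpr h
          simp [hFe] at hv
        exact subset_convexHull ℝ S ⟨hint, hye⟩
      · -- perturbation direction
        set d : V → ℝ := fun v => if v ∈ F y then (if c v = 0 then (1:ℝ) else -1) else 0
          with hddef
        set f1 : V → ℝ := fun v => if c v = 0 then 1 - y v else y v with hf1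
        set f2 : V → ℝ := fun v => if c v = 0 then y v else 1 - y v with hf2
        have hd0 : ∀ v, v ∉ F y → d v = 0 := fun v hv => if_neg hv
        have hdc0 : ∀ v, v ∈ F y → c v = 0 → d v = 1 := by
          intro v hv hc
          show (if v ∈ F y then (if c v = 0 then (1:ℝ) else -1) else 0) = 1
          rw [if_pos hv, if_pos hc]
        have hdc1 : ∀ v, v ∈ F y → c v ≠ 0 → d v = -1 := by
          intro v hv hc
          show (if v ∈ F y then (if c v = 0 then (1:ℝ) else -1) else 0) = -1
          rw [if_pos hv, if_neg hc]
        have hf1c0 : ∀ v, c v = 0 → f1 v = 1 - y v := fun v hc => if_pos hc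
        have hf1c1 : ∀ v, c v ≠ 0 → f1 v = y v := fun v hc => if_neg hc
        have hf2c0 : ∀ v, c v = 0 → f2 v = y v := fun v hc => if_pos hc
        have hf2c1 : ∀ v, c v ≠ 0 → f2 v = 1 - y v := fun v hc => if_neg hc
        obtain ⟨w1, hw1F, hw1min⟩ := Finset.exists_min_image (F y) f1 hFne
        obtain ⟨w2, hw2F, hw2min⟩ := Finset.exists_min_image (F y) f2 hFne
        set ε1 : ℝ := f1 w1 with he1
        set ε2 : ℝ := f2 w2 with he2
        have hfrac : ∀ v ∈ F y, y v ≠ 0 ∧ y v ≠ 1 := fun v hv => (hmemF y v).mp hv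
        have hfpos : ∀ v ∈ F y, 0 < f1 v ∧ 0 < f2 v := by
          intro v hv
          obtain ⟨h0, h1⟩ := hfrac v hv
          obtain ⟨hl, hu⟩ := hy01 v
          have hl' : 0 < y v := lt_of_le_of_ne hl (Ne.symm h0)
          have hu' : y v < 1 := lt_of_le_of_ne hu h1
          by_cases hc : c v = 0
          · rw [hf1c0 v hc, hf2c0 v hc]; constructor <;> linarith
          · rw [hf1c1 v hc, hf2c1 v hc]; constructor <;> linarith
        have he1pos : 0 < ε1 := (hfpos w1 hw1F).1
        have he2pos : 0 < ε2 := (hfpos w2 hw2F).2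
        have he1le : ∀ v ∈ F y, ε1 ≤ f1 v := hw1min
        have he2le : ∀ v ∈ F y, ε2 ≤ f2 v := hw2min
        set y1 : V → ℝ := fun v => y v + ε1 * d v with hy1def
        set y2 : V → ℝ := fun v => y v - ε2 * d v with hy2def
        have hy1v : ∀ v, y1 v = y v + ε1 * d v := fun v => rfl
        have hy2v : ∀ v, y2 v = y v - ε2 * d v := fun v => rfl
        -- coordinate bounds
        have hb1 : ∀ v, 0 ≤ y1 v ∧ y1 v ≤ 1 := by
          intro v
          obtain ⟨hl, hu⟩ := hy01 v
          rw [hy1v]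
          by_cases hv : v ∈ F y
          · have h1 := he1le v hv
            by_cases hc : c v = 0
            · rw [hdc0 v hv hc]; rw [hf1c0 v hc] at h1
              constructor <;> nlinarith
            · rw [hdc1 v hv hc]; rw [hf1c1 v hc] at h1
              constructor <;> nlinarith
          · rw [hd0 v hv]; constructor <;> nlinarith
        have hb2 : ∀ v, 0 ≤ y2 v ∧ y2 v ≤ 1 := by
          intro v
          obtain ⟨hl, hu⟩ := hy01 v
          rw [hy2v]
          by_cases hv : v ∈ F y
          · have h1 := he2le v hv
            by_cases hc : c v = 0
            · rw [hdc0 v hv hc]; rw [hf2c0 v hc] at h1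
              constructor <;> nlinarith
            · rw [hdc1 v hv hc]; rw [hf2c1 v hc] at h1
              constructor <;> nlinarith
          · rw [hd0 v hv]; constructor <;> nlinarith
        -- integral endpoint of an edge with a fractional endpoint must be 0
        have hedge_aux : ∀ i j, G.Adj i j → i ∈ F y → j ∉ F y → y j = 0 := by
          intro i j hadj hi hj
          have hj01 : y j = 0 ∨ y j = 1 := by
            by_contra h
            push_neg at h
            exact hj ((hmemF y j).mpr h)
          rcases hj01 with h | h
          · exact h
          · exfalso
            have h2 := hye i j hadj
            have h3 := (hy01 i).1
            have hi0 : y i = 0 := by linarith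
            exact (hfrac i hi).1 hi0
        have hdsum : ∀ i j, G.Adj i j → i ∈ F y → j ∈ F y → d i + d j = 0 := by
          intro i j hadj hi hj
          have hne : c i ≠ c j := c.valid hadj
          have h10 : (1 : Fin 2) ≠ 0 := by decide
          rcases hfin2 (c i) with h1 | h1 <;> rcases hfin2 (c j) with h2 | h2
          · exact absurd (h1.trans h2.symm) hne
          · rw [hdc0 i hi h1, hdc1 j hj (h2 ▸ h10)]; ring
          · rw [hdc1 i hi (h1 ▸ h10), hdc0 j hj h2]; ring
          · exact absurd (h1.trans h2.symm) hne
        have he1' : ∀ i j, G.Adj i j → y1 i + y1 j ≤ 1 := by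
          intro i j hadj
          rw [hy1v, hy1v]
          by_cases hi : i ∈ F y <;> by_cases hj : j ∈ F y
          · have h1 := hdsum i j hadj hi hj
            have h2 := hye i j hadj
            nlinarith
          · have hj0 := hedge_aux i j hadj hi hj
            have h1 := (hb1 i).2
            rw [hy1v] at h1
            rw [hd0 j hj, hj0]
            linarith
          · have hi0 := hedge_aux j i hadj.symm hj hi
            have h1 := (hb1 j).2
            rw [hy1v] at h1
            rw [hd0 i hi, hi0]
            linarith
          · rw [hd0 i hi, hd0 j hj]
            have := hye i j hadj
            linarith
        have he2' : ∀ i j, G.Adj i j → y2 i + y2 j ≤ 1 := by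
          intro i j hadj
          rw [hy2v, hy2v]
          by_cases hi : i ∈ F y <;> by_cases hj : j ∈ F y
          · have h1 := hdsum i j hadj hi hj
            have h2 := hye i j hadj
            nlinarith
          · have hj0 := hedge_aux i j hadj hi hj
            have h1 := (hb2 i).2
            rw [hy2v] at h1
            rw [hd0 j hj, hj0]
            linarith
          · have hi0 := hedge_aux j i hadj.symm hj hi
            have h1 := (hb2 j).2
            rw [hy2v] at h1
            rw [hd0 i hi, hi0]
            linarith
          · rw [hd0 i hi, hd0 j hj]
            have := hye i j hadj
            linarith
        -- fractional sets shrink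
        have hFsub1 : F y1 ⊆ F y := by
          intro v hv
          by_contra hvn
          have h0 : y1 v = y v := by rw [hy1v, hd0 v hvn]; ring
          obtain ⟨ha, hb⟩ := (hmemF y1 v).mp hv
          rw [h0] at ha hb
          exact hvn ((hmemF y v).mpr ⟨ha, hb⟩)
        have hFsub2 : F y2 ⊆ F y := by
          intro v hv
          by_contra hvn
          have h0 : y2 v = y v := by rw [hy2v, hd0 v hvn]; ring
          obtain ⟨ha, hb⟩ := (hmemF y2 v).mp hv
          rw [h0] at ha hb
          exact hvn ((hmemF y v).mpr ⟨ha, hb⟩)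
        have hw1out : w1 ∉ F y1 := by
          intro hmem
          have h01 : y1 w1 = 0 ∨ y1 w1 = 1 := by
            by_cases hc : c w1 = 0
            · right
              rw [hy1v, hdc0 w1 hw1F hc, he1, hf1c0 w1 hc]; ring
            · left
              rw [hy1v, hdc1 w1 hw1F hc, he1, hf1c1 w1 hc]; ring
          obtain ⟨ha, hb⟩ := (hmemF y1 w1).mp hmem
          tauto
        have hw2out : w2 ∉ F y2 := by
          intro hmem
          have h01 : y2 w2 = 0 ∨ y2 w2 = 1 := by
            by_cases hc : c w2 = 0
            · left
              rw [hy2v, hdc0 w2 hw2F hc, he2, hf2c0 w2 hc]; ring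
            · right
              rw [hy2v, hdc1 w2 hw2F hc, he2, hf2c1 w2 hc]; ring
          obtain ⟨ha, hb⟩ := (hmemF y2 w2).mp hmem
          tauto
        have hc1 : (F y1).card ≤ n := by
          have hss : F y1 ⊂ F y := ⟨hFsub1, fun h => hw1out (h hw1F)⟩
          have := Finset.card_lt_card hss
          omega
        have hc2 : (F y2).card ≤ n := by
          have hss : F y2 ⊂ F y := ⟨hFsub2, fun h => hw2out (h hw2F)⟩
          have := Finset.card_lt_card hss
          omega
        have hm1 : y1 ∈ convexHull ℝ S := ih y1 hc1 hb1 he1'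
        have hm2 : y2 ∈ convexHull ℝ S := ih y2 hc2 hb2 he2'
        -- convex combination
        have hspos : (0:ℝ) < ε1 + ε2 := by linarith
        have hsne : ε1 + ε2 ≠ 0 := ne_of_gt hspos
        have hcomb : (ε2 / (ε1 + ε2)) • y1 + (ε1 / (ε1 + ε2)) • y2 = y := by
          funext v
          simp only [Pi.add_apply, Pi.smul_apply, smul_eq_mul]
          rw [hy1v, hy2v]
          field_simp
          ring
        have ha : 0 ≤ ε2 / (ε1 + ε2) := by positivity
        have hb : 0 ≤ ε1 / (ε1 + ε2) := by positivity
        have hab : ε2 / (ε1 + ε2) + ε1 / (ε1 + ε2) = 1 := by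
          rw [← add_div, add_comm]
          exact div_self hsne
        have hmem := (convex_convexHull ℝ S) hm1 hm2 ha hb hab
        rwa [hcomb] at hmem
  · -- easy direction
    apply convexHull_min
    · intro x hx
      refine ⟨fun v => ?_, hx.2⟩
      rcases hx.1 v with h | h <;> simp [h]
    · intro x hx y hy a b ha hb hab
      refine ⟨fun v => ?_, fun i j hadj => ?_⟩
      · obtain ⟨h1, h2⟩ := hx.1 v
        obtain ⟨h3, h4⟩ := hy.1 v
        constructor <;> simp only [Pi.add_apply, Pi.smul_apply, smul_eq_mul] <;> nlinarith
      · have h1 := hx.2 i j hadj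
        have h2 := hy.2 i j hadj
        simp only [Pi.add_apply, Pi.smul_apply, smul_eq_mul]
        nlinarith
end

section
/- Let F, E ⊆ ℝ^n be finite nonempty sets of points and h ∈ ℝ^n. Then h ∈ conv(F) + cone(E) if and only if there exist sets S_1,…,S_n of finitely many non-overlapping weighted rectangles over U = [0,1) and sets S'_1,…,S'_n of finitely many non-overlapping weighted rectangles over ℝ_+ such that for each i the sum of signed areas of S_i and S'_i equals h_i, for every t ∈ U the vector of heights of rectangles of S_1,…,S_n active at t lies in conv(F), and for every t' ∈ ℝ_+ the vector of heights of rectangles of S'_1,…,S'_n active at t' lies in cone(E). -/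
open Set Pointwise MeasureTheory

def RectFam (Q : Set ℝ) (R : Finset (ℝ × ℝ × ℝ)) : Prop :=
  (∀ r ∈ R, r.1 < r.2.1 ∧ r.2.2 ≠ 0 ∧ Set.Ico r.1 r.2.1 ⊆ Q) ∧
  ∀ r ∈ R, ∀ r' ∈ R, r ≠ r' →
    ∀ t ∈ Q, ¬(t ∈ Set.Ico r.1 r.2.1 ∧ t ∈ Set.Ico r'.1 r'.2.1)

def rectArea (R : Finset (ℝ × ℝ × ℝ)) : ℝ := ∑ r ∈ R, (r.2.1 - r.1) * r.2.2

noncomputable def rectHeight (R : Finset (ℝ × ℝ × ℝ)) (t : ℝ) : ℝ :=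
  ∑ r ∈ R, (Set.Ico r.1 r.2.1).indicator (fun _ => r.2.2) t

def coneOf {n : ℕ} (E : Set (Fin n → ℝ)) (hE : E.Finite) : Set (Fin n → ℝ) :=
  {x | ∃ c : (Fin n → ℝ) → ℝ, (∀ v, 0 ≤ c v) ∧ x = ∑ v ∈ hE.toFinset, c v • v}

section Aux
variable {n : ℕ}

lemma coneOf_zero {E : Set (Fin n → ℝ)} (hE : E.Finite) : (0 : Fin n → ℝ) ∈ coneOf E hE :=
  ⟨0, fun _ => le_refl 0, by simp⟩

lemma coneOf_add {E : Set (Fin n → ℝ)} (hE : E.Finite) {x y : Fin n → ℝ}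
    (hx : x ∈ coneOf E hE) (hy : y ∈ coneOf E hE) : x + y ∈ coneOf E hE := by
  obtain ⟨c, hc, rfl⟩ := hx; obtain ⟨d, hd, rfl⟩ := hy
  exact ⟨c + d, fun v => add_nonneg (hc v) (hd v), by
    simp [add_smul, Finset.sum_add_distrib]⟩

lemma coneOf_smul {E : Set (Fin n → ℝ)} (hE : E.Finite) {a : ℝ} (ha : 0 ≤ a) {x : Fin n → ℝ}
    (hx : x ∈ coneOf E hE) : a • x ∈ coneOf E hE := by
  obtain ⟨c, hc, rfl⟩ := hx
  exact ⟨fun v => a * c v, fun v => mul_nonneg ha (hc v), by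
    simp [Finset.smul_sum, mul_smul]⟩

lemma measurable_rectHeight (R : Finset (ℝ × ℝ × ℝ)) : Measurable (rectHeight R) := by
  unfold rectHeight
  exact Finset.measurable_sum _ fun r _ => Measurable.indicator measurable_const measurableSet_Ico

lemma finite_range_rectHeight (R : Finset (ℝ × ℝ × ℝ)) : (Set.range (rectHeight R)).Finite := by
  classical
  have hsub : Set.range (rectHeight R) ⊆
      (fun s : Finset (ℝ × ℝ × ℝ) => ∑ r ∈ s, r.2.2) '' ↑R.powerset := by
    rintro _ ⟨t, rfl⟩
    refine ⟨R.filter (fun r => t ∈ Set.Ico r.1 r.2.1),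
      Finset.mem_coe.2 (Finset.mem_powerset.2 (Finset.filter_subset _ _)), ?_⟩
    show ∑ r ∈ R.filter (fun r => t ∈ Set.Ico r.1 r.2.1), r.2.2 = rectHeight R t
    rw [Finset.sum_filter, rectHeight]
    refine (Finset.sum_congr rfl fun r _ => ?_).symm
    by_cases h : t ∈ Set.Ico r.1 r.2.1 <;> simp [h, Set.indicator]
  exact ((R.powerset.finite_toSet).image _).subset hsub

lemma isFiniteMeasure_restrict_Ico (a b : ℝ) :
    IsFiniteMeasure (volume.restrict (Set.Ico a b)) := by
  constructor
  rw [Measure.restrict_apply_univ, Real.volume_Ico]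
  exact ENNReal.ofReal_lt_top

lemma integral_rectHeight {a b : ℝ} (R : Finset (ℝ × ℝ × ℝ))
    (hR : ∀ r ∈ R, r.1 < r.2.1 ∧ Set.Ico r.1 r.2.1 ⊆ Set.Ico a b) :
    ∫ t in Set.Ico a b, rectHeight R t = rectArea R := by
  haveI := isFiniteMeasure_restrict_Ico a b
  unfold rectHeight rectArea
  rw [integral_finset_sum]
  · refine Finset.sum_congr rfl fun r hr => ?_
    rw [MeasureTheory.integral_indicator_const _ measurableSet_Ico, measureReal_def,
      Measure.restrict_apply measurableSet_Ico,
      Set.inter_eq_self_of_subset_left (hR r hr).2, Real.volume_Ico,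
      ENNReal.toReal_ofReal (by linarith [(hR r hr).1])]
    simp [smul_eq_mul, mul_comm]
  · exact fun r hr => (integrable_const _).indicator measurableSet_Ico

lemma integrable_of_finite_range {α : Type*} [MeasurableSpace α] {μ : Measure α}
    [IsFiniteMeasure μ] {f : α → Fin n → ℝ} (hm : Measurable f)
    (hfin : (Set.range f).Finite) : Integrable f μ := by
  obtain ⟨C, hC⟩ := (hfin.image norm).bddAbove
  exact (integrable_const C).mono' hm.aestronglyMeasurable
    (ae_of_all _ fun x => hC ⟨f x, Set.mem_range_self x, rfl⟩)

lemma integral_mem_cone {E : Set (Fin n → ℝ)} (hE : E.Finite)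
    {μ : Measure ℝ} [IsFiniteMeasure μ]
    {f : ℝ → Fin n → ℝ} (hm : Measurable f) (hfin : (Set.range f).Finite)
    (hmem : ∀ᵐ t ∂μ, f t ∈ coneOf E hE) :
    (∫ t, f t ∂μ) ∈ coneOf E hE := by
  classical
  set T := hfin.toFinset with hT
  have hdecomp : ∀ x, f x = ∑ y ∈ T, (f ⁻¹' {y}).indicator (fun _ => y) x := by
    intro x
    rw [Finset.sum_eq_single (f x)]
    · simp [Set.indicator_of_mem]
    · intro y _ hne
      exact Set.indicator_of_notMem (by simpa using hne.symm) _
    · intro hx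
      exact absurd (hfin.mem_toFinset.2 (Set.mem_range_self x)) hx
  have hint : ∀ y ∈ T, Integrable ((f ⁻¹' {y}).indicator (fun _ => y)) μ :=
    fun y _ => (integrable_const y).indicator (hm (measurableSet_singleton y))
  have : (∫ t, f t ∂μ) = ∑ y ∈ T, ∫ t, (f ⁻¹' {y}).indicator (fun _ => y) t ∂μ := by
    rw [← integral_finset_sum _ hint]
    exact integral_congr_ae (ae_of_all _ hdecomp)
  rw [this]
  refine Finset.sum_induction _ _ (fun a b => coneOf_add hE) (coneOf_zero hE) fun y _ => ?_
  rw [MeasureTheory.integral_indicator_const _ (hm (measurableSet_singleton y))]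
  by_cases hy : y ∈ coneOf E hE
  · exact coneOf_smul hE ENNReal.toReal_nonneg hy
  · have hnull : μ (f ⁻¹' {y}) = 0 := by
      refine measure_mono_null (fun x hx => ?_) (ae_iff.1 hmem)
      simp only [Set.mem_preimage, Set.mem_singleton_iff] at hx
      simpa [hx] using hy
    simp [Measure.real, hnull, coneOf_zero hE]

end Aux
theorem zuckerberg_polyhedra
    (n : ℕ) (F E : Set (Fin n → ℝ)) (hFfin : F.Finite) (hEfin : E.Finite)
    (hFne : F.Nonempty) (hEne : E.Nonempty) (h : Fin n → ℝ) :
    h ∈ convexHull ℝ F + coneOf E hEfin ↔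
      ∃ (S : Fin n → Finset (ℝ × ℝ × ℝ)) (S' : Fin n → Finset (ℝ × ℝ × ℝ)),
        (∀ i, RectFam (Set.Ico (0 : ℝ) 1) (S i)) ∧
        (∀ i, RectFam (Set.Ici (0 : ℝ)) (S' i)) ∧
        (∀ i, rectArea (S i) + rectArea (S' i) = h i) ∧
        (∀ t ∈ Set.Ico (0 : ℝ) 1,
          (fun i => rectHeight (S i) t) ∈ convexHull ℝ F) ∧
        (∀ t' ∈ Set.Ici (0 : ℝ),
          (fun i => rectHeight (S' i) t') ∈ coneOf E hEfin) := by
  classical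
  constructor
  · rintro hmem
    rw [Set.mem_add] at hmem
    obtain ⟨f, hf, e, he, hfe⟩ := hmem
    refine ⟨fun i => if f i = 0 then ∅ else {((0:ℝ), (1:ℝ), f i)},
            fun i => if e i = 0 then ∅ else {((0:ℝ), (1:ℝ), e i)}, ?_, ?_, ?_, ?_, ?_⟩
    · intro i
      by_cases hfi : f i = 0 <;>
        simp only [hfi, if_true, if_false, RectFam] <;>
        constructor
      · simp
      · simp
      · intro r hr
        simp only [Finset.mem_singleton] at hr
        subst hr
        exact ⟨one_pos, hfi, le_refl _⟩
      · intro r hr r' hr' hne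
        simp only [Finset.mem_singleton] at hr hr'
        exact absurd (hr.trans hr'.symm) hne
    · intro i
      by_cases hei : e i = 0 <;>
        simp only [hei, if_true, if_false, RectFam] <;>
        constructor
      · simp
      · simp
      · intro r hr
        simp only [Finset.mem_singleton] at hr
        subst hr
        exact ⟨one_pos, hei, fun x hx => hx.1⟩
      · intro r hr r' hr' hne
        simp only [Finset.mem_singleton] at hr hr'
        exact absurd (hr.trans hr'.symm) hne
    · intro i
      have h1 : rectArea (if f i = 0 then ∅ else {((0:ℝ), (1:ℝ), f i)}) = f i := by
        by_cases hfi : f i = 0 <;> simp [hfi, rectArea]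
      have h2 : rectArea (if e i = 0 then ∅ else {((0:ℝ), (1:ℝ), e i)}) = e i := by
        by_cases hei : e i = 0 <;> simp [hei, rectArea]
      rw [h1, h2, ← hfe]
      rfl
    · intro t ht
      have : (fun i => rectHeight (if f i = 0 then ∅ else {((0:ℝ), (1:ℝ), f i)}) t) = f := by
        funext i
        by_cases hfi : f i = 0 <;> simp [hfi, rectHeight, Set.indicator_of_mem ht]
      rw [this]; exact hf
    · intro t' ht'
      by_cases ht1 : t' < 1
      · have : (fun i => rectHeight (if e i = 0 then ∅ else {((0:ℝ), (1:ℝ), e i)}) t') = e := by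
          funext i
          have htm : t' ∈ Set.Ico (0:ℝ) 1 := ⟨ht', ht1⟩
          by_cases hei : e i = 0 <;> simp [hei, rectHeight, Set.indicator_of_mem htm]
        rw [this]; exact he
      · have : (fun i => rectHeight (if e i = 0 then ∅ else {((0:ℝ), (1:ℝ), e i)}) t')
            = (0 : Fin n → ℝ) := by
          funext i
          have htm : t' ∉ Set.Ico (0:ℝ) 1 := fun hc => ht1 hc.2
          by_cases hei : e i = 0 <;>
            simp [hei, rectHeight, Set.indicator_of_notMem htm]
        rw [this]; exact coneOf_zero hEfin
  · rintro ⟨S, S', hS, hS', harea, hconv, hcone⟩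
    -- the convex-hull part
    haveI : IsProbabilityMeasure (volume.restrict (Set.Ico (0:ℝ) 1)) := by
      constructor
      rw [Measure.restrict_apply_univ, Real.volume_Ico]
      norm_num
    set f1 : ℝ → Fin n → ℝ := fun t i => rectHeight (S i) t with hf1
    have hm1 : Measurable f1 :=
      measurable_pi_lambda _ fun i => measurable_rectHeight (S i)
    have hr1 : (Set.range f1).Finite := by
      refine (Set.Finite.pi fun i => finite_range_rectHeight (S i)).subset ?_
      rintro _ ⟨t, rfl⟩ i _
      exact Set.mem_range_self t
    have hint1 : Integrable f1 (volume.restrict (Set.Ico (0:ℝ) 1)) :=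
      integrable_of_finite_range hm1 hr1
    have hv1 : (∫ t in Set.Ico (0:ℝ) 1, f1 t) ∈ convexHull ℝ F := by
      refine (convex_convexHull ℝ F).integral_mem (hFfin.isClosed_convexHull ℝ) ?_ hint1
      exact (ae_restrict_iff' measurableSet_Ico).2 (ae_of_all _ hconv)
    have hv1i : ∀ i, (∫ t in Set.Ico (0:ℝ) 1, f1 t) i = rectArea (S i) := by
      intro i
      have key := ((ContinuousLinearMap.proj (R := ℝ) (φ := fun _ : Fin n => ℝ)
        i).integral_comp_comm hint1).symm
      exact key.trans
        (integral_rectHeight (S i) fun r hr => ⟨((hS i).1 r hr).1, ((hS i).1 r hr).2.2⟩)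
    -- the cone part
    set M : ℝ := 1 + ∑ i, ∑ r ∈ S' i, max r.2.1 0 with hM
    have hMsub : ∀ i, ∀ r ∈ S' i, r.1 < r.2.1 ∧ Set.Ico r.1 r.2.1 ⊆ Set.Ico 0 M := by
      intro i r hr
      obtain ⟨hlt, -, hsub⟩ := (hS' i).1 r hr
      have h0 : (0:ℝ) ≤ r.1 := (hsub ⟨le_refl _, hlt⟩ : r.1 ∈ Set.Ici (0:ℝ))
      have hle : r.2.1 ≤ M := by
        have h1 : max r.2.1 0 ≤ ∑ r' ∈ S' i, max r'.2.1 0 :=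
          Finset.single_le_sum (f := fun r' : ℝ × ℝ × ℝ => max r'.2.1 0)
            (fun r' _ => le_max_right _ _) hr
        have h2 : (∑ r' ∈ S' i, max r'.2.1 0) ≤ ∑ j, ∑ r' ∈ S' j, max r'.2.1 0 :=
          Finset.single_le_sum (f := fun j => ∑ r' ∈ S' j, max r'.2.1 0)
            (fun j _ => Finset.sum_nonneg fun r' _ => le_max_right _ _) (Finset.mem_univ i)
        have := le_max_left r.2.1 0
        rw [hM]; linarith
      exact ⟨hlt, fun x hx => ⟨h0.trans hx.1, lt_of_lt_of_le hx.2 hle⟩⟩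
    haveI := isFiniteMeasure_restrict_Ico 0 M
    set f2 : ℝ → Fin n → ℝ := fun t i => rectHeight (S' i) t with hf2
    have hm2 : Measurable f2 :=
      measurable_pi_lambda _ fun i => measurable_rectHeight (S' i)
    have hr2 : (Set.range f2).Finite := by
      refine (Set.Finite.pi fun i => finite_range_rectHeight (S' i)).subset ?_
      rintro _ ⟨t, rfl⟩ i _
      exact Set.mem_range_self t
    have hv2 : (∫ t in Set.Ico 0 M, f2 t) ∈ coneOf E hEfin := by
      refine integral_mem_cone hEfin hm2 hr2 ?_
      refine (ae_restrict_iff' measurableSet_Ico).2 (ae_of_all _ fun t ht => ?_)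
      exact hcone t ht.1
    have hv2i : ∀ i, (∫ t in Set.Ico 0 M, f2 t) i = rectArea (S' i) := by
      intro i
      have hint2 : Integrable f2 (volume.restrict (Set.Ico 0 M)) :=
        integrable_of_finite_range hm2 hr2
      have key := ((ContinuousLinearMap.proj (R := ℝ) (φ := fun _ : Fin n => ℝ)
        i).integral_comp_comm hint2).symm
      exact key.trans (integral_rectHeight (S' i) (hMsub i))
    have hh : h = (∫ t in Set.Ico (0:ℝ) 1, f1 t) + (∫ t in Set.Ico 0 M, f2 t) := by
      funext i
      rw [Pi.add_apply, hv1i i, hv2i i, harea i]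
    rw [hh]
    exact Set.add_mem_add hv1 hv2
end

section
/- Let G = (V,E) be a bipartite graph and b ∈ ℤ^E with b_{ij} ≥ 0 for all edges. Then the polyhedron H = {x ∈ ℝ_+^V : x_i + x_j ≤ b_{ij} for all {i,j} ∈ E} equals the convex hull of its nonnegative integral points {x ∈ ℕ^V : x_i + x_j ≤ b_{ij} for all {i,j} ∈ E}. -/
/-- Key integrality fact for one edge: if `u` is fractional, `v` is integral,
`B` is an integer and `u + v ≤ B`, then even `⌊u⌋ + 1 + v ≤ B`. -/
private lemma frac_edge_key (u v B : ℝ) (hu : Int.fract u ≠ 0) (hv : Int.fract v = 0)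
    (k : ℤ) (hB : B = k) (h : u + v ≤ B) : (⌊u⌋ : ℝ) + 1 + v ≤ B := by
  have h1 : 0 < Int.fract u := lt_of_le_of_ne (Int.fract_nonneg u) (Ne.symm hu)
  have hu' : u - Int.fract u = (⌊u⌋ : ℝ) := Int.self_sub_fract u
  have hv' : v = (⌊v⌋ : ℝ) := by
    have := Int.self_sub_fract v; rw [hv] at this; linarith
  have h2 : (⌊u⌋ : ℝ) + (⌊v⌋ : ℝ) < (k : ℝ) := by
    rw [hB, hv'] at h; linarith
  have h3 : ⌊u⌋ + ⌊v⌋ < k := by exact_mod_cast h2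
  have h4 : ⌊u⌋ + ⌊v⌋ + 1 ≤ k := h3
  have h5 : (⌊u⌋ : ℝ) + (⌊v⌋ : ℝ) + 1 ≤ (k : ℝ) := by exact_mod_cast h4
  rw [hB]; rw [hv']; linarith

/-- Perturbation step: if `x` is feasible and has a fractional coordinate, we can move it
along the signed indicator (sign given by color `s`) of fractional coordinates to a feasible
point with strictly fewer fractional coordinates. -/
private lemma step_lemma (V : Type) [Fintype V] (G : SimpleGraph V)
    (c : G.Coloring (Fin 2)) (b : V → V → ℤ) (s : Fin 2)
    (x : V → ℝ) (hnn : ∀ v, 0 ≤ x v)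
    (hcon : ∀ i j, G.Adj i j → x i + x j ≤ (b i j : ℝ))
    (hF : (Finset.univ.filter (fun v => Int.fract (x v) ≠ 0)).Nonempty) :
    ∃ (ε : ℝ) (y : V → ℝ), 0 < ε ∧
      (∀ v, y v = x v + ε * (if Int.fract (x v) ≠ 0 then (if c v = s then 1 else -1) else 0)) ∧
      (∀ v, 0 ≤ y v) ∧ (∀ i j, G.Adj i j → y i + y j ≤ (b i j : ℝ)) ∧
      (Finset.univ.filter (fun v => Int.fract (y v) ≠ 0)).card <
        (Finset.univ.filter (fun v => Int.fract (x v) ≠ 0)).card := by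
  classical
  set F := Finset.univ.filter (fun v => Int.fract (x v) ≠ 0) with hFdef
  have hmemF : ∀ v, v ∈ F ↔ Int.fract (x v) ≠ 0 := by
    intro v; simp [hFdef]
  set h : V → ℝ := fun v => if c v = s then 1 - Int.fract (x v) else Int.fract (x v) with hh
  set ε := F.inf' hF h with hε
  have hfr_pos : ∀ v, v ∈ F → 0 < Int.fract (x v) := fun v hv =>
    lt_of_le_of_ne (Int.fract_nonneg _) (Ne.symm ((hmemF v).mp hv))
  have hε_pos : 0 < ε := by
    rw [hε]
    rw [Finset.lt_inf'_iff]
    intro v hv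
    by_cases hc : c v = s
    · simp only [hh, hc, if_pos]
      have := Int.fract_lt_one (x v); linarith
    · simp only [hh, hc, if_neg, if_false]
      exact hfr_pos v hv
  have hε_le : ∀ v ∈ F, ε ≤ h v := fun v hv => Finset.inf'_le h hv
  obtain ⟨v₀, hv₀F, hv₀eq'⟩ := Finset.exists_mem_eq_inf' hF h
  have hv₀eq : ε = h v₀ := hε.trans hv₀eq'
  set e : V → ℝ := fun v => if Int.fract (x v) ≠ 0 then (if c v = s then 1 else -1) else 0
    with he
  set y : V → ℝ := fun v => x v + ε * e v with hy
  have hy_int : ∀ v, Int.fract (x v) = 0 → y v = x v := by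
    intro v hv; simp [hy, he, hv]
  have hy_up : ∀ v, Int.fract (x v) ≠ 0 → c v = s → y v = x v + ε := by
    intro v hv hc; simp [hy, he, hv, hc]
  have hy_dn : ∀ v, Int.fract (x v) ≠ 0 → ¬(c v = s) → y v = x v - ε := by
    intro v hv hc; simp [hy, he, hv, hc]; ring
  have hε_le_up : ∀ v, Int.fract (x v) ≠ 0 → c v = s → ε ≤ 1 - Int.fract (x v) := by
    intro v hv hc
    have := hε_le v ((hmemF v).mpr hv)
    simpa [hh, hc] using this
  have hε_le_dn : ∀ v, Int.fract (x v) ≠ 0 → ¬(c v = s) → ε ≤ Int.fract (x v) := by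
    intro v hv hc
    have := hε_le v ((hmemF v).mpr hv)
    simpa [hh, hc] using this
  refine ⟨ε, y, hε_pos, fun v => rfl, ?_, ?_, ?_⟩
  · -- nonnegativity
    intro v
    by_cases hv : Int.fract (x v) = 0
    · rw [hy_int v hv]; exact hnn v
    · by_cases hc : c v = s
      · rw [hy_up v hv hc]; have := hnn v; linarith
      · rw [hy_dn v hv hc]
        have hfl : x v - Int.fract (x v) = (⌊x v⌋ : ℝ) := Int.self_sub_fract (x v)
        have hfl0 : (0 : ℝ) ≤ (⌊x v⌋ : ℝ) := by
          exact_mod_cast Int.floor_nonneg.mpr (hnn v)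
        have := hε_le_dn v hv hc
        linarith
  · -- edge constraints
    intro i j hij
    have hcij : c i ≠ c j := c.valid hij
    have hxy := hcon i j hij
    have hxor' : ∀ a b t : Fin 2, a ≠ b → ((a = t) ↔ ¬(b = t)) := by decide
    have hxor : ∀ a b : Fin 2, a ≠ b → ((a = s) ↔ ¬(b = s)) := fun a b => hxor' a b s
    by_cases hi : Int.fract (x i) = 0 <;> by_cases hj : Int.fract (x j) = 0
    · rw [hy_int i hi, hy_int j hj]; exact hxy
    · -- i integral, j fractional
      rw [hy_int i hi]
      by_cases hc : c j = s
      · rw [hy_up j hj hc]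
        have hkey := frac_edge_key (x j) (x i) (b i j : ℝ) hj hi (b i j) rfl
          (by linarith)
        have hfl : x j - Int.fract (x j) = (⌊x j⌋ : ℝ) := Int.self_sub_fract (x j)
        have := hε_le_up j hj hc
        linarith
      · rw [hy_dn j hj hc]; linarith
    · -- i fractional, j integral
      rw [hy_int j hj]
      by_cases hc : c i = s
      · rw [hy_up i hi hc]
        have hkey := frac_edge_key (x i) (x j) (b i j : ℝ) hi hj (b i j) rfl hxy
        have hfl : x i - Int.fract (x i) = (⌊x i⌋ : ℝ) := Int.self_sub_fract (x i)
        have := hε_le_up i hi hc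
        linarith
      · rw [hy_dn i hi hc]; linarith
    · -- both fractional: colors differ, increments cancel
      by_cases hc : c i = s
      · have hc' : ¬(c j = s) := (hxor (c i) (c j) hcij).mp hc
        rw [hy_up i hi hc, hy_dn j hj hc']; linarith
      · have hc' : c j = s := by
          by_contra hc''
          exact hc ((hxor (c i) (c j) hcij).mpr hc'')
        rw [hy_dn i hi hc, hy_up j hj hc']; linarith
  · -- the number of fractional coordinates strictly decreases
    apply Finset.card_lt_card
    rw [Finset.ssubset_iff_of_subset]
    · refine ⟨v₀, hv₀F, ?_⟩
      have hv₀ : Int.fract (x v₀) ≠ 0 := (hmemF v₀).mp hv₀F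
      have hyv₀ : Int.fract (y v₀) = 0 := by
        have hfl : x v₀ - Int.fract (x v₀) = (⌊x v₀⌋ : ℝ) := Int.self_sub_fract (x v₀)
        by_cases hc : c v₀ = s
        · have : y v₀ = ((⌊x v₀⌋ + 1 : ℤ) : ℝ) := by
            rw [hy_up v₀ hv₀ hc, hv₀eq]
            simp only [hh, hc, if_pos]
            push_cast
            linarith
          rw [this]; exact Int.fract_intCast _
        · have : y v₀ = ((⌊x v₀⌋ : ℤ) : ℝ) := by
            rw [hy_dn v₀ hv₀ hc, hv₀eq]
            simp only [hh, hc, if_neg, if_false]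
            linarith
          rw [this]; exact Int.fract_intCast _
      simp only [Finset.mem_filter, Finset.mem_univ, true_and]
      exact fun hcon' => hcon' hyv₀
    · intro v hv
      simp only [Finset.mem_filter, Finset.mem_univ, true_and] at hv
      rw [hmemF]
      intro hxv
      exact hv (by rw [hy_int v hxv]; exact hxv)

private lemma integral_mem (V : Type) [Fintype V] (G : SimpleGraph V) (b : V → V → ℤ)
    (x : V → ℝ) (hint : ∀ v, Int.fract (x v) = 0) (hnn : ∀ v, 0 ≤ x v)
    (hcon : ∀ i j, G.Adj i j → x i + x j ≤ (b i j : ℝ)) :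
    x ∈ {x : V → ℝ | (∀ v, ∃ m : ℕ, x v = m) ∧
        (∀ i j : V, G.Adj i j → x i + x j ≤ (b i j : ℝ))} := by
  refine ⟨fun v => ⟨(⌊x v⌋).toNat, ?_⟩, hcon⟩
  have hfl : x v - Int.fract (x v) = (⌊x v⌋ : ℝ) := Int.self_sub_fract (x v)
  rw [hint v, sub_zero] at hfl
  have h0 : 0 ≤ ⌊x v⌋ := Int.floor_nonneg.mpr (hnn v)
  have hc : (((⌊x v⌋).toNat : ℕ) : ℝ) = ((⌊x v⌋ : ℤ) : ℝ) := by
    exact_mod_cast congrArg (Int.cast : ℤ → ℝ) (Int.toNat_of_nonneg h0)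
  exact hfl.trans hc.symm

private lemma aux_hull (V : Type) [Fintype V] (G : SimpleGraph V)
    (c : G.Coloring (Fin 2)) (b : V → V → ℤ) :
    ∀ (n : ℕ) (x : V → ℝ),
      (Finset.univ.filter (fun v => Int.fract (x v) ≠ 0)).card ≤ n →
      (∀ v, 0 ≤ x v) → (∀ i j, G.Adj i j → x i + x j ≤ (b i j : ℝ)) →
      x ∈ convexHull ℝ {x : V → ℝ | (∀ v, ∃ m : ℕ, x v = m) ∧
        (∀ i j : V, G.Adj i j → x i + x j ≤ (b i j : ℝ))} := by
  classical
  intro n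
  induction n with
  | zero =>
    intro x hcard hnn hcon
    apply subset_convexHull
    apply integral_mem V G b x ?_ hnn hcon
    intro v
    by_contra hv
    have : v ∈ Finset.univ.filter (fun v => Int.fract (x v) ≠ 0) := by
      simp [hv]
    have := Finset.card_pos.mpr ⟨v, this⟩
    omega
  | succ n ih =>
    intro x hcard hnn hcon
    by_cases hF : (Finset.univ.filter (fun v => Int.fract (x v) ≠ 0)).Nonempty
    · obtain ⟨εp, yp, hεp, hypdef, hypnn, hypcon, hypcard⟩ :=
        step_lemma V G c b 0 x hnn hcon hF
      obtain ⟨εm, ym, hεm, hymdef, hymnn, hymcon, hymcard⟩ :=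
        step_lemma V G c b 1 x hnn hcon hF
      have hyp_mem := ih yp (by omega) hypnn hypcon
      have hym_mem := ih ym (by omega) hymnn hymcon
      set S := εp + εm with hS
      have hSpos : 0 < S := by positivity
      have hwl : (0:ℝ) ≤ εm / S := by positivity
      have hwm : (0:ℝ) ≤ εp / S := by positivity
      have hsum : εm / S + εp / S = 1 := by field_simp; linarith [hS]
      have hmem := (convex_convexHull ℝ _) hyp_mem hym_mem hwl hwm hsum
      have hxeq : x = (εm / S) • yp + (εp / S) • ym := by
        funext v
        simp only [Pi.add_apply, Pi.smul_apply, smul_eq_mul]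
        rw [hypdef v, hymdef v]
        have hne : ∀ t : Fin 2, (t = (1 : Fin 2)) ↔ ¬(t = (0 : Fin 2)) := by decide
        by_cases hv : Int.fract (x v) = 0
        · simp only [hv, ne_eq, not_true_eq_false, if_false, mul_zero, add_zero]
          field_simp; ring
        · by_cases hc : c v = 0
          · have hc1' : ¬(c v = (1 : Fin 2)) := fun hh' => ((hne (c v)).mp hh') hc
            simp only [hv, ne_eq, not_false_eq_true, if_true, hc, if_pos, hc1', if_neg]
            field_simp; rw [if_neg (show ¬((0 : Fin 2) = 1) by decide), hS]; ring
          · have hc1 : c v = (1 : Fin 2) := (hne (c v)).mpr hc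
            simp only [hv, ne_eq, not_false_eq_true, if_true, hc, if_neg, hc1, if_pos]
            field_simp; rw [if_neg (show ¬((1 : Fin 2) = 0) by decide), hS]; ring
      rw [hxeq]
      exact hmem
    · apply subset_convexHull
      apply integral_mem V G b x ?_ hnn hcon
      intro v
      by_contra hv
      exact hF ⟨v, by simp [hv]⟩

theorem bipartite_incidence_system_integer_hull
    (V : Type) [Fintype V] (G : SimpleGraph V) (hbip : G.Colorable 2)
    (b : V → V → ℤ) (hbsymm : ∀ i j, b i j = b j i)
    (hbnn : ∀ i j, G.Adj i j → 0 ≤ b i j) :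
    {x : V → ℝ |
        (∀ v, 0 ≤ x v) ∧
        (∀ i j : V, G.Adj i j → x i + x j ≤ (b i j : ℝ))} =
      convexHull ℝ {x : V → ℝ |
        (∀ v, ∃ m : ℕ, x v = m) ∧
        (∀ i j : V, G.Adj i j → x i + x j ≤ (b i j : ℝ))} := by
  obtain ⟨c⟩ := hbip
  apply Set.Subset.antisymm
  · intro x hx
    exact aux_hull V G c b _ x le_rfl hx.1 hx.2
  · apply convexHull_min
    · intro x hx
      refine ⟨fun v => ?_, hx.2⟩
      obtain ⟨m, hm⟩ := hx.1 v
      rw [hm]; positivity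
    · intro x hx y hy a a' ha ha' haa
      refine ⟨fun v => ?_, fun i j hij => ?_⟩
      · simp only [Pi.add_apply, Pi.smul_apply, smul_eq_mul]
        have := hx.1 v; have := hy.1 v
        positivity
      · simp only [Pi.add_apply, Pi.smul_apply, smul_eq_mul]
        have h1 := hx.2 i j hij
        have h2 := hy.2 i j hij
        nlinarith [hx.1 i, hx.1 j, hy.1 i, hy.1 j]
end

section
/- Every interval matrix is totally unimodular, where an interval matrix is a 0/1 matrix in which the 1-entries of each row are consecutive. -/
lemma mul_mem_pm {a b : ℝ} (ha : a = -1 ∨ a = 0 ∨ a = 1) (hb : b = -1 ∨ b = 0 ∨ b = 1) :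
    a * b = -1 ∨ a * b = 0 ∨ a * b = 1 := by
  rcases ha with h|h|h <;> rcases hb with h'|h'|h' <;> subst h <;> subst h' <;> norm_num

lemma det_sign_rows : ∀ (k : ℕ) (N : Matrix (Fin k) (Fin k) ℝ),
    (∀ i j, N i j = -1 ∨ N i j = 0 ∨ N i j = 1) →
    (∀ i j j', N i j = 1 → N i j' = 1 → j = j') →
    (∀ i j j', N i j = -1 → N i j' = -1 → j = j') →
    N.det = -1 ∨ N.det = 0 ∨ N.det = 1 := by
  intro k
  induction k with
  | zero => intro N _ _ _; right; right; simp
  | succ s ih =>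
    intro N hval hpos hneg
    by_cases hz : ∃ i, ∀ j, N i j = 0
    · obtain ⟨i, hi⟩ := hz
      exact Or.inr (Or.inl (Matrix.det_eq_zero_of_row_eq_zero i hi))
    · push_neg at hz
      by_cases hone : ∃ i j₀, N i j₀ ≠ 0 ∧ ∀ j, j ≠ j₀ → N i j = 0
      · obtain ⟨i₀, j₀, hne0, hrest⟩ := hone
        rw [Matrix.det_succ_row N i₀, Finset.sum_eq_single j₀
          (fun j _ hj => by rw [hrest j hj]; ring) (fun h => absurd (Finset.mem_univ j₀) h)]
        have hminor := ih (N.submatrix i₀.succAbove j₀.succAbove)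
          (fun i j => hval _ _)
          (fun i j j' h1 h2 => Fin.succAbove_right_injective (hpos _ _ _ h1 h2))
          (fun i j j' h1 h2 => Fin.succAbove_right_injective (hneg _ _ _ h1 h2))
        have hsign : ((-1 : ℝ)) ^ ((i₀ : ℕ) + (j₀ : ℕ)) = -1 ∨
            ((-1 : ℝ)) ^ ((i₀ : ℕ) + (j₀ : ℕ)) = 0 ∨ ((-1 : ℝ)) ^ ((i₀ : ℕ) + (j₀ : ℕ)) = 1 := by
          rcases Nat.even_or_odd ((i₀ : ℕ) + (j₀ : ℕ)) with he | ho
          · right; right; exact he.neg_one_pow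
          · left; exact ho.neg_one_pow
        exact mul_mem_pm (mul_mem_pm hsign (hval i₀ j₀)) hminor
      · -- every row has at least two nonzero entries : row sums are zero
        push_neg at hone
        right; left
        rw [← Matrix.exists_mulVec_eq_zero_iff]
        refine ⟨fun _ => 1, ?_, ?_⟩
        · intro h
          have := congrFun h 0
          norm_num at this
        · funext i
          obtain ⟨j, hj⟩ := hz i
          obtain ⟨j', hj'ne, hj'⟩ := hone i j hj
          -- one of N i j, N i j' is 1 and the other is -1
          have hsum : N i j + N i j' = 0 := by
            rcases hval i j with h|h|h <;> rcases hval i j' with h'|h'|h'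
            · exact absurd (hneg i j j' h h') (Ne.symm hj'ne)
            · exact absurd h' hj'
            · rw [h, h']; ring
            · exact absurd h hj
            · exact absurd h hj
            · exact absurd h hj
            · rw [h, h']; ring
            · exact absurd h' hj'
            · exact absurd (hpos i j j' h h') (Ne.symm hj'ne)
          have hzero : ∀ l, l ∉ ({j, j'} : Finset (Fin (s+1))) → N i l = 0 := by
            intro l hl
            simp only [Finset.mem_insert, Finset.mem_singleton] at hl
            push_neg at hl
            rcases hval i l with h|h|h
            · rcases hval i j with h1|h1|h1 <;> rcases hval i j' with h2|h2|h2
              · exact absurd (hneg i l j h h1) hl.1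
              all_goals first
                | exact absurd (hneg i l j h h1) hl.1
                | exact absurd (hneg i l j' h h2) hl.2
                | (exfalso; rcases hval i j with a|a|a <;> rcases hval i j' with b|b|b <;>
                    first
                      | exact hl.1 (hneg i l j h a)
                      | exact hl.2 (hneg i l j' h b)
                      | exact hj a
                      | exact hj' b
                      | (rw [a, b] at hsum; norm_num at hsum))
            · exact h
            · exfalso
              rcases hval i j with a|a|a <;> rcases hval i j' with b|b|b <;>
                first
                  | exact hl.1 (hpos i l j h a)
                  | exact hl.2 (hpos i l j' h b)
                  | exact hj a
                  | exact hj' b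
                  | (rw [a, b] at hsum; norm_num at hsum)
          have : ∑ l, N i l = ∑ l ∈ ({j, j'} : Finset (Fin (s+1))), N i l :=
            (Finset.sum_subset (Finset.subset_univ _) (fun l _ hl => hzero l hl)).symm
          rw [Finset.sum_pair (Ne.symm hj'ne)] at this
          simp only [Matrix.mulVec, dotProduct, mul_one, Pi.zero_apply]
          rw [this, hsum]

lemma det_interval_square (k : ℕ) (M : Matrix (Fin k) (Fin k) ℝ)
    (h01 : ∀ i j, M i j = 0 ∨ M i j = 1)
    (hint : ∀ (i : Fin k) (j₁ j₂ j₃ : Fin k), j₁ ≤ j₂ → j₂ ≤ j₃ →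
      M i j₁ = 1 → M i j₃ = 1 → M i j₂ = 1) :
    M.det = -1 ∨ M.det = 0 ∨ M.det = 1 := by
  classical
  set S : Matrix (Fin k) (Fin k) ℝ :=
    (fun j l => if j = l then 1 else if (j : ℕ) = (l : ℕ) + 1 then -1 else 0) with hS
  have hSdet : S.det = 1 := by
    rw [Matrix.det_of_lowerTriangular S ?ht]
    · simp [hS]
    case ht =>
      intro i j hij
      have hij' : (i : Fin k) < j := hij
      have h1 : i ≠ j := ne_of_lt hij'
      have h2 : (i : ℕ) ≠ (j : ℕ) + 1 := by omega
      simp [hS, h1, h2]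
  have hN : ∀ i l, (M * S) i l =
      M i l - (if h : (l : ℕ) + 1 < k then M i ⟨(l : ℕ) + 1, h⟩ else 0) := by
    intro i l
    rw [Matrix.mul_apply]
    split_ifs with h
    · set l' : Fin k := ⟨(l : ℕ) + 1, h⟩ with hl'
      have hll' : l ≠ l' := by
        intro he
        have := congrArg Fin.val he
        simp [hl'] at this
      have hout : ∀ j ∈ Finset.univ, j ∉ ({l, l'} : Finset (Fin k)) → M i j * S j l = 0 := by
        intro j _ hj
        simp only [Finset.mem_insert, Finset.mem_singleton] at hj
        push_neg at hj
        have h1 : j ≠ l := hj.1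
        have h2 : (j : ℕ) ≠ (l : ℕ) + 1 := by
          intro he
          exact hj.2 (Fin.ext he)
        simp [hS, h1, h2]
      rw [← Finset.sum_subset (Finset.subset_univ ({l, l'} : Finset (Fin k))) hout,
        Finset.sum_pair hll']
      have e1 : S l l = 1 := by simp [hS]
      have e2 : S l' l = -1 := by
        have : l' ≠ l := Ne.symm hll'
        simp [hS, this, hl']
        exact fun he => absurd (hl'.trans he) this
      rw [e1, e2]; ring
    · have hout : ∀ j ∈ Finset.univ, j ∉ ({l} : Finset (Fin k)) → M i j * S j l = 0 := by
        intro j _ hj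
        simp only [Finset.mem_singleton] at hj
        have h2 : (j : ℕ) ≠ (l : ℕ) + 1 := by
          have := j.isLt
          omega
        simp [hS, hj, h2]
      rw [← Finset.sum_subset (Finset.subset_univ ({l} : Finset (Fin k))) hout,
        Finset.sum_singleton]
      simp [hS]
  have hval : ∀ i l, (M * S) i l = -1 ∨ (M * S) i l = 0 ∨ (M * S) i l = 1 := by
    intro i l
    rw [hN]
    split_ifs with h
    · rcases h01 i l with a|a <;> rcases h01 i ⟨(l : ℕ) + 1, h⟩ with b|b <;>
        rw [a, b] <;> norm_num
    · rcases h01 i l with a|a <;> rw [a] <;> norm_num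
  have hpos1 : ∀ i (l : Fin k), (M * S) i l = 1 →
      M i l = 1 ∧ ∀ (h : (l : ℕ) + 1 < k), M i ⟨(l : ℕ) + 1, h⟩ = 0 := by
    intro i l h1
    rw [hN] at h1
    split_ifs at h1 with h
    · rcases h01 i l with a|a <;> rcases h01 i ⟨(l : ℕ) + 1, h⟩ with b|b <;>
        rw [a, b] at h1 <;> norm_num at h1
      exact ⟨a, fun _ => b⟩
    · rcases h01 i l with a|a <;> rw [a] at h1 <;> norm_num at h1
      exact ⟨a, fun h' => absurd h' h⟩
  have hneg1 : ∀ i (l : Fin k), (M * S) i l = -1 →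
      ∃ (h : (l : ℕ) + 1 < k), M i l = 0 ∧ M i ⟨(l : ℕ) + 1, h⟩ = 1 := by
    intro i l h1
    rw [hN] at h1
    split_ifs at h1 with h
    · rcases h01 i l with a|a <;> rcases h01 i ⟨(l : ℕ) + 1, h⟩ with b|b <;>
        rw [a, b] at h1 <;> norm_num at h1
      exact ⟨h, a, b⟩
    · rcases h01 i l with a|a <;> rw [a] at h1 <;> norm_num at h1
  have key1 : ∀ i (l l' : Fin k), l < l' → (M * S) i l = 1 → (M * S) i l' = 1 → False := by
    intro i l l' hll h1 h2
    obtain ⟨a1, a2⟩ := hpos1 i l h1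
    obtain ⟨b1, _⟩ := hpos1 i l' h2
    have hlk : (l : ℕ) + 1 < k := lt_of_le_of_lt (Nat.succ_le_of_lt hll) l'.isLt
    have hmid : M i ⟨(l : ℕ) + 1, hlk⟩ = 1 := by
      refine hint i l ⟨(l : ℕ) + 1, hlk⟩ l' ?_ ?_ a1 b1
      · simp [Fin.le_def]
      · simp [Fin.le_def]
        exact Nat.succ_le_of_lt hll
    rw [a2 hlk] at hmid
    norm_num at hmid
  have key2 : ∀ i (l l' : Fin k), l < l' → (M * S) i l = -1 → (M * S) i l' = -1 → False := by
    intro i l l' hll h1 h2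
    obtain ⟨h, a0, a1⟩ := hneg1 i l h1
    obtain ⟨h', b0, b1⟩ := hneg1 i l' h2
    have hmid : M i l' = 1 := by
      refine hint i ⟨(l : ℕ) + 1, h⟩ l' ⟨(l' : ℕ) + 1, h'⟩ ?_ ?_ a1 b1
      · simp [Fin.le_def]
        exact Nat.succ_le_of_lt hll
      · simp [Fin.le_def]
    rw [b0] at hmid
    norm_num at hmid
  have hdet : (M * S).det = M.det := by rw [Matrix.det_mul, hSdet, mul_one]
  rw [← hdet]
  refine det_sign_rows k (M * S) hval ?_ ?_
  · intro i j j' h1 h2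
    rcases lt_trichotomy j j' with h|h|h
    · exact (key1 i j j' h h1 h2).elim
    · exact h
    · exact (key1 i j' j h h2 h1).elim
  · intro i j j' h1 h2
    rcases lt_trichotomy j j' with h|h|h
    · exact (key2 i j j' h h1 h2).elim
    · exact h
    · exact (key2 i j' j h h2 h1).elim

/-- A real matrix is totally unimodular if every square submatrix
has determinant `-1`, `0` or `1`. -/
def TotallyUnimodular {m n : Type*} (A : Matrix m n ℝ) : Prop :=
  ∀ (k : ℕ) (f : Fin k → m) (g : Fin k → n),
    (A.submatrix f g).det = -1 ∨ (A.submatrix f g).det = 0 ∨ (A.submatrix f g).det = 1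

/-- An interval matrix: a 0/1 matrix in which the 1-entries of each row
are consecutive. -/
def IsIntervalMatrix {m n : ℕ} (A : Matrix (Fin m) (Fin n) ℝ) : Prop :=
  (∀ i j, A i j = 0 ∨ A i j = 1) ∧
  ∀ (i : Fin m) (j₁ j₂ j₃ : Fin n), j₁ ≤ j₂ → j₂ ≤ j₃ →
    A i j₁ = 1 → A i j₃ = 1 → A i j₂ = 1

theorem interval_matrix_totally_unimodular
    {m n : ℕ} (A : Matrix (Fin m) (Fin n) ℝ) (hA : IsIntervalMatrix A) :
    TotallyUnimodular A := by
  obtain ⟨h01, hint⟩ := hA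
  intro k f g
  have hmono : Monotone (g ∘ Tuple.sort g) := Tuple.monotone_sort g
  have key := det_interval_square k (A.submatrix f (g ∘ Tuple.sort g))
    (fun i j => h01 _ _)
    (fun i j₁ j₂ j₃ h12 h23 ha hb => hint (f i) _ _ _ (hmono h12) (hmono h23) ha hb)
  have heq : A.submatrix f (g ∘ Tuple.sort g) = (A.submatrix f g).submatrix id ⇑(Tuple.sort g) :=
    rfl
  rw [heq, Matrix.det_permute'] at key
  rcases Int.units_eq_one_or (Equiv.Perm.sign (Tuple.sort g)) with h | h <;>
    rw [h] at key <;> simp at key <;> rcases key with h' | h' | h' <;>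
    first
      | tauto
      | (left; linarith)
      | (right; left; linarith)
      | (right; right; linarith)
end

section
/- Let A ∈ {0,1}^{m×n} be an interval matrix and b ∈ ℤ^m with b ≥ 0. Then the polyhedron {x ∈ ℝ_+^n : Ax ≤ b} equals the convex hull of its nonnegative integral points {x ∈ ℕ^n : Ax ≤ b}. -/
namespace IntervalHullAux

/-- Extend a vector on `Fin n` to `ℕ` by zero. -/
def ext {n : ℕ} (z : Fin n → ℝ) : ℕ → ℝ := fun k => if h : k < n then z ⟨k, h⟩ else 0

/-- Partial sums. -/
def psum {n : ℕ} (z : Fin n → ℝ) (j : ℕ) : ℝ := ∑ i ∈ Finset.range j, ext z i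

lemma row_interval {m n : ℕ} (A : Matrix (Fin m) (Fin n) ℝ) (hA : IsIntervalMatrix A)
    (i : Fin m) :
    ∃ l r : ℕ, l ≤ r ∧ r ≤ n ∧
      ∀ j : Fin n, A i j = if l ≤ (j : ℕ) ∧ (j : ℕ) < r then 1 else 0 := by
  by_cases hs : ∃ j, A i j = 1
  · obtain ⟨j0, hj0⟩ := hs
    set T : Finset (Fin n) := Finset.univ.filter (fun j => A i j = 1) with hT
    have hTne : T.Nonempty := ⟨j0, by simp [hT, hj0]⟩
    set jl := T.min' hTne with hjl
    set jr := T.max' hTne with hjr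
    have hjlT : jl ∈ T := T.min'_mem hTne
    have hjrT : jr ∈ T := T.max'_mem hTne
    have hAl : A i jl = 1 := by simpa [hT] using hjlT
    have hAr : A i jr = 1 := by simpa [hT] using hjrT
    refine ⟨(jl : ℕ), (jr : ℕ) + 1, ?_, ?_, ?_⟩
    · have h := Fin.le_def.mp (T.min'_le jr hjrT)
      omega
    · exact jr.isLt
    · intro j
      by_cases hj : (jl : ℕ) ≤ (j : ℕ) ∧ (j : ℕ) < (jr : ℕ) + 1
      · rw [if_pos hj]
        exact hA.2 i jl j jr (Fin.le_def.mpr hj.1) (Fin.le_def.mpr (by omega)) hAl hAr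
      · rw [if_neg hj]
        rcases hA.1 i j with h | h
        · exact h
        · exfalso
          have hjT : j ∈ T := by simp [hT, h]
          have h1 := Fin.le_def.mp (T.min'_le j hjT)
          have h2 := Fin.le_def.mp (T.le_max' j hjT)
          omega
  · refine ⟨0, 0, le_refl 0, Nat.zero_le n, fun j => ?_⟩
    rw [if_neg (by omega)]
    rcases hA.1 i j with h | h
    · exact h
    · exact absurd ⟨j, h⟩ hs

lemma row_sum {n : ℕ} (z : Fin n → ℝ) (l r : ℕ) (hlr : l ≤ r) (hr : r ≤ n)
    (row : Fin n → ℝ)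
    (hrow : ∀ j : Fin n, row j = if l ≤ (j : ℕ) ∧ (j : ℕ) < r then 1 else 0) :
    ∑ j, row j * z j = psum z r - psum z l := by
  have h1 : ∀ j : Fin n, row j * z j =
      (fun k : ℕ => if l ≤ k ∧ k < r then ext z k else 0) (j : ℕ) := by
    intro j
    simp only [hrow j, ext, j.isLt, dif_pos]
    split <;> simp
  calc ∑ j, row j * z j
      = ∑ j : Fin n, (fun k : ℕ => if l ≤ k ∧ k < r then ext z k else 0) (j : ℕ) :=
        Finset.sum_congr rfl (fun j _ => h1 j)
    _ = ∑ k ∈ Finset.range n, (if l ≤ k ∧ k < r then ext z k else 0) :=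
        by exact Fin.sum_univ_eq_sum_range (fun k => if l ≤ k ∧ k < r then ext z k else 0) n
    _ = ∑ k ∈ (Finset.range n).filter (fun k => l ≤ k ∧ k < r), ext z k :=
        (Finset.sum_filter _ _).symm
    _ = ∑ k ∈ Finset.Ico l r, ext z k := by
        congr 1
        ext k
        simp only [Finset.mem_filter, Finset.mem_range, Finset.mem_Ico]
        omega
    _ = psum z r - psum z l := by
        rw [psum, psum, Finset.sum_Ico_eq_sub _ hlr]

lemma flem1 (s t : ℝ) (ht0 : 0 ≤ t) (ht : t < 1 - Int.fract s) : ⌊s + t⌋ = ⌊s⌋ := by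
  have h1 : (⌊s⌋ : ℝ) + Int.fract s = s := Int.floor_add_fract s
  have h2 : 0 ≤ Int.fract s := Int.fract_nonneg s
  rw [Int.floor_eq_iff]
  constructor <;> push_cast <;> linarith

lemma flem2 (s t : ℝ) (ht0 : 1 - Int.fract s ≤ t) (ht : t < 1) : ⌊s + t⌋ = ⌊s⌋ + 1 := by
  have h1 : (⌊s⌋ : ℝ) + Int.fract s = s := Int.floor_add_fract s
  have h2 : Int.fract s < 1 := Int.fract_lt_one s
  rw [Int.floor_eq_iff]
  constructor <;> push_cast <;> linarith

end IntervalHullAux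

open IntervalHullAux

theorem interval_matrix_system_integer_hull
    {m n : ℕ} (A : Matrix (Fin m) (Fin n) ℝ) (hA : IsIntervalMatrix A)
    (b : Fin m → ℤ) (hb : ∀ i, 0 ≤ b i) :
    {x : Fin n → ℝ |
        (∀ j, 0 ≤ x j) ∧ ∀ i, (∑ j, A i j * x j) ≤ (b i : ℝ)} =
      convexHull ℝ {x : Fin n → ℝ |
        (∀ j, ∃ k : ℕ, x j = k) ∧ ∀ i, (∑ j, A i j * x j) ≤ (b i : ℝ)} := by
  apply Set.Subset.antisymm
  · -- hard direction
    intro x hx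
    obtain ⟨hx0, hxb⟩ := hx
    -- partial sums
    set S : ℕ → ℝ := psum x with hSdef
    have hS0 : S 0 = 0 := by simp [hSdef, psum]
    have hSsucc : ∀ k, k < n → ∀ h : k < n, S (k + 1) = S k + x ⟨k, h⟩ := by
      intro k hk h
      simp [hSdef, psum, Finset.sum_range_succ, ext, hk]
    have hSmono : Monotone S := by
      apply monotone_nat_of_le_succ
      intro k
      have h1 : 0 ≤ ext x k := by
        unfold ext; split
        · exact hx0 _
        · exact le_refl 0
      have h2 : S (k+1) = S k + ext x k := by
        simp [hSdef, psum, Finset.sum_range_succ]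
      linarith
    -- breakpoints
    set F : Finset ℝ :=
      insert (0 : ℝ)
        (((Finset.range (n + 1)).image (fun j => 1 - Int.fract (S j))).filter (· < 1))
      with hFdef
    have hF01 : ∀ c ∈ F, 0 ≤ c ∧ c < 1 := by
      intro c hc
      rw [hFdef, Finset.mem_insert] at hc
      rcases hc with rfl | hc
      · norm_num
      · rw [Finset.mem_filter] at hc
        obtain ⟨hc1, hc2⟩ := hc
        refine ⟨?_, hc2⟩
        rw [Finset.mem_image] at hc1
        obtain ⟨j, _, rfl⟩ := hc1
        have := Int.fract_lt_one (S j)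
        linarith
    have h0F : (0 : ℝ) ∈ F := Finset.mem_insert_self _ _
    have hFne : F.Nonempty := ⟨0, h0F⟩
    have hcard : 0 < F.card := Finset.card_pos.mpr hFne
    set e := F.orderIsoOfFin (rfl : F.card = F.card) with hedef
    set g : ℕ → ℝ := fun i => if h : i < F.card then (e ⟨i, h⟩ : ℝ) else 1 with hgdef
    have gmem : ∀ i, i < F.card → g i ∈ F := by
      intro i hi
      simp only [hgdef, dif_pos hi]
      exact (e ⟨i, hi⟩).2
    have glt1 : ∀ i, i < F.card → g i < 1 := fun i hi => (hF01 _ (gmem i hi)).2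
    have gge0 : ∀ i, i < F.card → 0 ≤ g i := fun i hi => (hF01 _ (gmem i hi)).1
    have gtop : ∀ i, F.card ≤ i → g i = 1 := by
      intro i hi
      simp [hgdef, Nat.not_lt.mpr hi]
    have gstrict : ∀ i j (hi : i < F.card) (hj : j < F.card), i < j →
        g i < g j := by
      intro i j hi hj hij
      simp only [hgdef, dif_pos hi, dif_pos hj]
      exact_mod_cast e.strictMono (show (⟨i, hi⟩ : Fin F.card) < ⟨j, hj⟩ from hij)
    have gmono : Monotone g := by
      apply monotone_nat_of_le_succ
      intro i
      by_cases h1 : i + 1 < F.card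
      · exact le_of_lt (gstrict i (i+1) (by omega) h1 (by omega))
      · by_cases h2 : i < F.card
        · rw [gtop (i+1) (by omega)]
          exact le_of_lt (glt1 i h2)
        · rw [gtop i (by omega), gtop (i+1) (by omega)]
    have g0 : g 0 = 0 := by
      have h1 : g 0 ∈ F := gmem 0 hcard
      have h2 : 0 ≤ g 0 := gge0 0 hcard
      -- g 0 is ≤ every element of F, in particular ≤ 0
      rcases eq_or_lt_of_le h2 with h | h
      · exact h.symm
      · exfalso
        obtain ⟨a, ha⟩ : ∃ a : Fin F.card, (e a : ℝ) = 0 := ⟨e.symm ⟨0, h0F⟩, by rw [OrderIso.apply_symm_apply]⟩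
        have : g (a : ℕ) = 0 := by
          simp only [hgdef, dif_pos a.isLt, Fin.eta]
          exact ha
        rcases Nat.eq_zero_or_pos (a : ℕ) with h' | h'
        · rw [h'] at this; linarith
        · have := gstrict 0 a hcard a.isLt h'
          linarith [this.trans_eq ‹g (a:ℕ) = 0›]
    have gsurj : ∀ c ∈ F, ∃ a, a ≤ F.card ∧ g a = c ∧ ∀ i, i < a → g i < c := by
      intro c hc
      refine ⟨(e.symm ⟨c, hc⟩ : ℕ), le_of_lt (e.symm ⟨c, hc⟩).isLt, ?_, ?_⟩
      · simp [hgdef, (e.symm ⟨c, hc⟩).isLt]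
      · intro i hi
        have hi' : i < F.card := lt_trans hi (e.symm ⟨c, hc⟩).isLt
        have := gstrict i _ hi' (e.symm ⟨c, hc⟩).isLt hi
        simpa [hgdef, (e.symm ⟨c, hc⟩).isLt] using this
    -- telescoping
    have tele : ∀ a c : ℕ, a ≤ c → ∑ i ∈ Finset.Ico a c, (g (i+1) - g i) = g c - g a := by
      intro a c hac
      rw [Finset.sum_Ico_eq_sub _ hac, Finset.sum_range_sub (f := g),
        Finset.sum_range_sub (f := g)]
      ring
    have gktop : g F.card = 1 := gtop _ le_rfl
    -- the key identity
    have keylem : ∀ s : ℝ, (1 - Int.fract s ∈ F ∨ Int.fract s = 0) →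
        ∑ i ∈ Finset.range F.card, (g (i+1) - g i) * ((⌊s + g i⌋ : ℤ) : ℝ) = s := by
      intro s hs
      obtain ⟨a, hak, hga, hlt⟩ :
          ∃ a, a ≤ F.card ∧ g a = 1 - Int.fract s ∧ ∀ i, i < a → g i < 1 - Int.fract s := by
        rcases hs with hs | hs
        · exact gsurj _ hs
        · exact ⟨F.card, le_rfl, by rw [gktop, hs]; ring, fun i hi => by
            rw [hs]; simpa using glt1 i hi⟩
      have hsplit : Finset.range F.card = Finset.Ico 0 F.card :=
        Finset.range_eq_Ico F.card
      rw [hsplit, ← Finset.sum_Ico_consecutive _ (Nat.zero_le a) hak]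
      have h1 : ∑ i ∈ Finset.Ico 0 a, (g (i+1) - g i) * ((⌊s + g i⌋ : ℤ) : ℝ)
          = (g a - g 0) * ((⌊s⌋ : ℤ) : ℝ) := by
        rw [← tele 0 a (Nat.zero_le a), Finset.sum_mul]
        apply Finset.sum_congr rfl
        intro i hi
        rw [Finset.mem_Ico] at hi
        have hi' : i < F.card := lt_of_lt_of_le hi.2 hak
        rw [flem1 s (g i) (gge0 i hi') (hlt i hi.2)]
      have h2 : ∑ i ∈ Finset.Ico a F.card, (g (i+1) - g i) * ((⌊s + g i⌋ : ℤ) : ℝ)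
          = (g F.card - g a) * ((⌊s⌋ : ℤ) + 1 : ℝ) := by
        rw [← tele a F.card hak, Finset.sum_mul]
        apply Finset.sum_congr rfl
        intro i hi
        rw [Finset.mem_Ico] at hi
        have h3 : 1 - Int.fract s ≤ g i := hga ▸ gmono hi.1
        rw [flem2 s (g i) h3 (glt1 i hi.2)]
        push_cast
        ring
      rw [h1, h2, g0, gktop, hga]
      have := Int.floor_add_fract s
      nlinarith [Int.fract_nonneg s]
    -- membership of fractional parts
    have hmemF : ∀ j, j ≤ n → (1 - Int.fract (S j) ∈ F ∨ Int.fract (S j) = 0) := by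
      intro j hj
      by_cases h : Int.fract (S j) = 0
      · exact Or.inr h
      · left
        rw [hFdef, Finset.mem_insert]
        right
        rw [Finset.mem_filter]
        constructor
        · exact Finset.mem_image.mpr ⟨j, Finset.mem_range.mpr (by omega), rfl⟩
        · have h1 : 0 ≤ Int.fract (S j) := Int.fract_nonneg _
          have h2 : 0 < Int.fract (S j) := lt_of_le_of_ne h1 (Ne.symm h)
          show 1 - Int.fract (S j) < 1
          linarith
    -- the integral points
    set p : ℕ → (Fin n → ℝ) := fun i => fun j =>
      ((⌊S ((j : ℕ) + 1) + g i⌋ : ℤ) : ℝ) - ((⌊S (j : ℕ) + g i⌋ : ℤ) : ℝ) with hpdef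
    -- partial sums of p i
    have hpsum : ∀ i, i < F.card → ∀ jj, jj ≤ n →
        psum (p i) jj = ((⌊S jj + g i⌋ : ℤ) : ℝ) := by
      intro i hi jj hjj
      have ht0 : 0 ≤ g i := gge0 i hi
      have ht1 : g i < 1 := glt1 i hi
      have hfl0 : (⌊S 0 + g i⌋ : ℤ) = 0 := by
        rw [hS0, zero_add]
        exact Int.floor_eq_zero_iff.mpr ⟨ht0, ht1⟩
      calc psum (p i) jj = ∑ k ∈ Finset.range jj,
            (((⌊S (k + 1) + g i⌋ : ℤ) : ℝ) - ((⌊S k + g i⌋ : ℤ) : ℝ)) := by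
            apply Finset.sum_congr rfl
            intro k hk
            rw [Finset.mem_range] at hk
            have hkn : k < n := lt_of_lt_of_le hk hjj
            simp [ext, hkn, hpdef]
        _ = ((⌊S jj + g i⌋ : ℤ) : ℝ) - ((⌊S 0 + g i⌋ : ℤ) : ℝ) :=
            Finset.sum_range_sub (fun k => ((⌊S k + g i⌋ : ℤ) : ℝ)) jj
        _ = ((⌊S jj + g i⌋ : ℤ) : ℝ) := by rw [hfl0]; simp
    -- p i is in the integral set
    have hp : ∀ i, i < F.card → p i ∈ {x : Fin n → ℝ |
        (∀ j, ∃ k : ℕ, x j = k) ∧ ∀ i', (∑ j, A i' j * x j) ≤ (b i' : ℝ)} := by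
      intro i hi
      constructor
      · intro j
        have hmono : (⌊S (j : ℕ) + g i⌋ : ℤ) ≤ ⌊S ((j : ℕ) + 1) + g i⌋ := by
          apply Int.floor_le_floor
          have := hSmono (Nat.le_succ (j : ℕ))
          linarith
        have hge : (0:ℤ) ≤ ⌊S ((j:ℕ)+1) + g i⌋ - ⌊S (j:ℕ) + g i⌋ := by omega
        refine ⟨(⌊S ((j:ℕ)+1) + g i⌋ - ⌊S (j:ℕ) + g i⌋).toNat, ?_⟩
        have h2 := congrArg (fun z : ℤ => (z : ℝ)) (Int.toNat_of_nonneg hge)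
        simp only [hpdef]
        push_cast at h2 ⊢
        linarith
      · intro i'
        obtain ⟨l, r, hlr, hr, hrow⟩ := row_interval A hA i'
        rw [row_sum (p i) l r hlr hr _ hrow]
        have hx' : psum x r - psum x l ≤ (b i' : ℝ) := by
          rw [← row_sum x l r hlr hr _ hrow]
          exact hxb i'
        rw [hpsum i hi r hr, hpsum i hi l (le_trans hlr hr)]
        have hSrl : S r ≤ S l + (b i' : ℝ) := by
          simp only [hSdef] at hx' ⊢
          linarith
        have : (⌊S r + g i⌋ : ℤ) ≤ ⌊S l + g i⌋ + b i' := by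
          rw [← Int.floor_add_intCast]
          apply Int.floor_le_floor
          push_cast
          linarith
        have hcast : ((⌊S r + g i⌋ : ℤ) : ℝ) ≤ ((⌊S l + g i⌋ + b i' : ℤ) : ℝ) := by
          exact_mod_cast this
        push_cast at hcast
        linarith
    -- convex combination
    set w : ℕ → ℝ := fun i => g (i+1) - g i with hwdef
    have hw0 : ∀ i ∈ Finset.range F.card, 0 ≤ w i := by
      intro i _
      simp only [hwdef, sub_nonneg]
      exact gmono (Nat.le_succ i)
    have hwsum : ∑ i ∈ Finset.range F.card, w i = 1 := by
      rw [Finset.range_eq_Ico, tele 0 F.card (Nat.zero_le _), g0, gktop]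
      ring
    have hcm := Finset.centerMass_mem_convexHull (t := Finset.range F.card)
      (w := w) (z := p) hw0 (by rw [hwsum]; norm_num) (fun i hi => hp i (Finset.mem_range.mp hi))
    rw [Finset.centerMass_eq_of_sum_1 _ _ hwsum] at hcm
    have hxeq : x = ∑ i ∈ Finset.range F.card, w i • p i := by
      funext j
      rw [Finset.sum_apply]
      have hkey1 := keylem (S ((j : ℕ) + 1)) (hmemF _ (by omega))
      have hkey2 := keylem (S (j : ℕ)) (hmemF _ (le_of_lt j.isLt))
      have hsub : ∑ i ∈ Finset.range F.card, (w i • p i) j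
          = ∑ i ∈ Finset.range F.card, (g (i+1) - g i) * ((⌊S ((j:ℕ)+1) + g i⌋ : ℤ) : ℝ)
            - ∑ i ∈ Finset.range F.card, (g (i+1) - g i) * ((⌊S (j:ℕ) + g i⌋ : ℤ) : ℝ) := by
        rw [← Finset.sum_sub_distrib]
        apply Finset.sum_congr rfl
        intro i _
        simp only [Pi.smul_apply, smul_eq_mul, hpdef, hwdef]
        ring
      rw [hsub, hkey1, hkey2, hSsucc (j : ℕ) j.isLt j.isLt]
      ring
    rw [← hxeq] at hcm
    exact hcm
  · -- easy direction
    apply convexHull_min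
    · intro x hx
      refine ⟨fun j => ?_, hx.2⟩
      obtain ⟨k, hk⟩ := hx.1 j
      rw [hk]
      positivity
    · intro u hu v hv a c ha hc hac
      constructor
      · intro j
        have h1 : 0 ≤ a * u j := mul_nonneg ha (hu.1 j)
        have h2 : 0 ≤ c * v j := mul_nonneg hc (hv.1 j)
        simpa using add_nonneg h1 h2
      · intro i
        have hsum : ∑ j, A i j * (a • u + c • v) j
            = a * (∑ j, A i j * u j) + c * (∑ j, A i j * v j) := by
          rw [Finset.mul_sum, Finset.mul_sum, ← Finset.sum_add_distrib]
          apply Finset.sum_congr rfl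
          intro j _
          simp only [Pi.add_apply, Pi.smul_apply, smul_eq_mul]
          ring
        rw [hsum]
        calc a * (∑ j, A i j * u j) + c * (∑ j, A i j * v j)
            ≤ a * (b i : ℝ) + c * (b i : ℝ) :=
              add_le_add (mul_le_mul_of_nonneg_left (hu.2 i) ha)
                (mul_le_mul_of_nonneg_left (hv.2 i) hc)
          _ = (b i : ℝ) := by rw [← add_mul, hac, one_mul]
end

section
/- Let u₁, u₂ > 0 and f(x₁,x₂) = x₁x₂ on the box [0,u₁] × [0,u₂]. Then the convex hull of the graph {(x₁,x₂,x₁x₂) : x ∈ {0,u₁} × {0,u₂}} (equivalently, of the four corner points of the box with their products) equals the McCormick polytope P = {(x₁,x₂,z) ∈ ℝ³ : z ≤ u₂x₁, z ≤ u₁x₂, z ≥ 0, z ≥ u₂x₁ + u₁x₂ − u₁u₂}. -/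
theorem mccormick_box_convex_hull (u₁ u₂ : ℝ) (hu₁ : 0 < u₁) (hu₂ : 0 < u₂) :
    convexHull ℝ
        ({((0 : ℝ), (0 : ℝ), (0 : ℝ)), (u₁, (0 : ℝ), (0 : ℝ)),
          ((0 : ℝ), u₂, (0 : ℝ)), (u₁, u₂, u₁ * u₂)} : Set (ℝ × ℝ × ℝ)) =
      {p : ℝ × ℝ × ℝ |
        p.2.2 ≤ u₂ * p.1 ∧ p.2.2 ≤ u₁ * p.2.1 ∧ 0 ≤ p.2.2 ∧
        u₂ * p.1 + u₁ * p.2.1 - u₁ * u₂ ≤ p.2.2} := by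
  apply le_antisymm
  · apply convexHull_min
    · rintro p (rfl | rfl | rfl | rfl) <;>
        refine ⟨?_, ?_, ?_, ?_⟩ <;> simp <;> nlinarith
    · intro p hp q hq a b ha hb hab
      simp only [Set.mem_setOf_eq] at hp hq ⊢
      obtain ⟨hp1, hp2, hp3, hp4⟩ := hp
      obtain ⟨hq1, hq2, hq3, hq4⟩ := hq
      refine ⟨?_, ?_, ?_, ?_⟩ <;>
        simp only [Prod.fst_add, Prod.snd_add, Prod.smul_fst, Prod.smul_snd,
          smul_eq_mul] <;> nlinarith
  · rintro ⟨x, y, z⟩ ⟨h1, h2, h3, h4⟩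
    simp only at h1 h2 h3 h4
    set w : Fin 4 → ℝ := ![1 - x / u₁ - y / u₂ + z / (u₁ * u₂),
      x / u₁ - z / (u₁ * u₂), y / u₂ - z / (u₁ * u₂), z / (u₁ * u₂)] with hw
    set v : Fin 4 → ℝ × ℝ × ℝ := ![(0, 0, 0), (u₁, 0, 0), (0, u₂, 0),
      (u₁, u₂, u₁ * u₂)] with hv
    have hmem : ∀ i, v i ∈ ({((0 : ℝ), (0 : ℝ), (0 : ℝ)), (u₁, (0 : ℝ), (0 : ℝ)),
        ((0 : ℝ), u₂, (0 : ℝ)), (u₁, u₂, u₁ * u₂)} : Set (ℝ × ℝ × ℝ)) := by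
      intro i; fin_cases i <;> simp [hv]
    have key0 : (0:ℝ) ≤ 1 - x / u₁ - y / u₂ + z / (u₁ * u₂) := by
      have : 1 - x / u₁ - y / u₂ + z / (u₁ * u₂)
          = (u₁ * u₂ - u₂ * x - u₁ * y + z) / (u₁ * u₂) := by
        field_simp
      rw [this]
      apply div_nonneg (by linarith) (by positivity)
    have key1 : (0:ℝ) ≤ x / u₁ - z / (u₁ * u₂) := by
      have : x / u₁ - z / (u₁ * u₂) = (u₂ * x - z) / (u₁ * u₂) := by
        field_simp
      rw [this]
      apply div_nonneg (by linarith) (by positivity)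
    have key2 : (0:ℝ) ≤ y / u₂ - z / (u₁ * u₂) := by
      have : y / u₂ - z / (u₁ * u₂) = (u₁ * y - z) / (u₁ * u₂) := by
        field_simp
      rw [this]
      apply div_nonneg (by linarith) (by positivity)
    have key3 : (0:ℝ) ≤ z / (u₁ * u₂) := by positivity
    have hwnn : ∀ i ∈ Finset.univ, 0 ≤ w i := by
      intro i _
      fin_cases i
      · simpa [hw] using key0
      · simpa [hw] using key1
      · simpa [hw] using key2
      · simpa [hw] using key3
    have hwsum : ∑ i ∈ Finset.univ, w i = 1 := by
      simp [hw, Fin.sum_univ_four]; ring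
    have hcomb : ∑ i ∈ Finset.univ, w i • v i = (x, y, z) := by
      simp only [hw, hv, Fin.sum_univ_four, Matrix.cons_val_zero, Matrix.cons_val_one,
        Matrix.head_cons, Matrix.cons_val_two, Matrix.tail_cons, Matrix.cons_val_three,
        Prod.smul_mk, smul_eq_mul, Prod.mk_add_mk, Prod.mk.injEq]
      refine ⟨?_, ?_, ?_⟩ <;> field_simp <;> ring
    have := (convex_convexHull ℝ _).sum_mem hwnn hwsum
      (fun i _ => subset_convexHull ℝ _ (hmem i))
    rwa [hcomb] at this
end

section
/- Let G = (V,E) be an m-partite graph with partition V = V₁ ∪ … ∪ V_m such that the dependency graph on {V₁,…,V_m} (with an edge between V_i and V_j whenever the induced bipartite subgraph on V_i ∪ V_j is not complete bipartite) is a forest. Then the convex hull of the incidence vectors of cliques of cardinality m (one node per part) equals the polytope {x ∈ ℝ_+^V : ∑_{v∈V_i} x_v = 1 for all i ∈ [m], and ∑_{v∈C} x_v ≤ 1 for all stable sets C ⊆ V}. -/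
set_option linter.unusedSectionVars false
open Finset

section Coupling

variable {α β : Type} [Fintype α] [Fintype β] [DecidableEq α] [DecidableEq β]
variable (R : α → β → Prop) [∀ a b, Decidable (R a b)]

/-- `w` is a coupling of `μ` on `S` and `ν` on `T` supported on `R`. -/
def IsCoupling (S : Finset α) (T : Finset β) (μ : α → ℝ) (ν : β → ℝ)
    (w : α → β → ℝ) : Prop :=
  (∀ a b, 0 ≤ w a b) ∧
  (∀ a b, w a b ≠ 0 → a ∈ S ∧ b ∈ T ∧ R a b) ∧
  (∀ a ∈ S, (∑ b ∈ T, w a b) = μ a) ∧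
  (∀ b ∈ T, (∑ a ∈ S, w a b) = ν b)

lemma coupling_zero {S : Finset α} {T : Finset β} {μ : α → ℝ} {ν : β → ℝ}
    (hμ : ∀ a ∈ S, 0 ≤ μ a) (hν : ∀ b ∈ T, 0 ≤ ν b)
    (hsum : (∑ a ∈ S, μ a) = ∑ b ∈ T, ν b)
    (h0 : (∑ a ∈ S, μ a) = 0) :
    IsCoupling R S T μ ν (fun _ _ => 0) := by
  have hμ0 : ∀ a ∈ S, μ a = 0 := (Finset.sum_eq_zero_iff_of_nonneg hμ).1 h0
  have hν0 : ∀ b ∈ T, ν b = 0 :=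
    (Finset.sum_eq_zero_iff_of_nonneg hν).1 (hsum ▸ h0)
  refine ⟨fun _ _ => le_refl 0, fun a b h => absurd rfl h, ?_, ?_⟩
  · intro a ha; simp [hμ0 a ha]
  · intro b hb; simp [hν0 b hb]

lemma coupling_union {S1 S2 : Finset α} {T1 T2 : Finset β} {μ : α → ℝ} {ν : β → ℝ}
    {w1 w2 : α → β → ℝ}
    (h1 : IsCoupling R S1 T1 μ ν w1) (h2 : IsCoupling R S2 T2 μ ν w2)
    (hS : Disjoint S1 S2) (hT : Disjoint T1 T2) :
    IsCoupling R (S1 ∪ S2) (T1 ∪ T2) μ ν (fun a b => w1 a b + w2 a b) := by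
  obtain ⟨h1n, h1s, h1r, h1c⟩ := h1
  obtain ⟨h2n, h2s, h2r, h2c⟩ := h2
  refine ⟨fun a b => add_nonneg (h1n a b) (h2n a b), ?_, ?_, ?_⟩
  · intro a b h
    simp only at h
    rcases eq_or_ne (w1 a b) 0 with h1 | h1
    · rcases eq_or_ne (w2 a b) 0 with h2 | h2
      · exact absurd (by rw [h1, h2, add_zero]) h
      · obtain ⟨ha, hb, hr⟩ := h2s a b h2
        exact ⟨Finset.mem_union_right _ ha, Finset.mem_union_right _ hb, hr⟩
    · obtain ⟨ha, hb, hr⟩ := h1s a b h1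
      exact ⟨Finset.mem_union_left _ ha, Finset.mem_union_left _ hb, hr⟩
  · intro a ha
    show (∑ b ∈ T1 ∪ T2, (w1 a b + w2 a b)) = μ a
    rw [Finset.sum_add_distrib]
    rcases Finset.mem_union.1 ha with ha1 | ha2
    · have e2 : (∑ b ∈ T1 ∪ T2, w2 a b) = 0 := by
        refine Finset.sum_eq_zero fun b _ => ?_
        by_contra h
        exact Finset.disjoint_left.1 hS ha1 (h2s a b h).1
      have e1 : (∑ b ∈ T1 ∪ T2, w1 a b) = ∑ b ∈ T1, w1 a b := by
        refine (Finset.sum_subset Finset.subset_union_left ?_).symm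
        intro b _ hb
        by_contra h
        exact hb ((h1s a b h).2.1)
      rw [e1, e2, add_zero, h1r a ha1]
    · have e1 : (∑ b ∈ T1 ∪ T2, w1 a b) = 0 := by
        refine Finset.sum_eq_zero fun b _ => ?_
        by_contra h
        exact Finset.disjoint_left.1 hS (h1s a b h).1 ha2
      have e2 : (∑ b ∈ T1 ∪ T2, w2 a b) = ∑ b ∈ T2, w2 a b := by
        refine (Finset.sum_subset Finset.subset_union_right ?_).symm
        intro b _ hb
        by_contra h
        exact hb ((h2s a b h).2.1)
      rw [e1, e2, zero_add, h2r a ha2]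
  · intro b hb
    show (∑ a ∈ S1 ∪ S2, (w1 a b + w2 a b)) = ν b
    rw [Finset.sum_add_distrib]
    rcases Finset.mem_union.1 hb with hb1 | hb2
    · have e2 : (∑ a ∈ S1 ∪ S2, w2 a b) = 0 := by
        refine Finset.sum_eq_zero fun a _ => ?_
        by_contra h
        exact Finset.disjoint_left.1 hT hb1 (h2s a b h).2.1
      have e1 : (∑ a ∈ S1 ∪ S2, w1 a b) = ∑ a ∈ S1, w1 a b := by
        refine (Finset.sum_subset Finset.subset_union_left ?_).symm
        intro a _ ha
        by_contra h
        exact ha ((h1s a b h).1)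
      rw [e1, e2, add_zero, h1c b hb1]
    · have e1 : (∑ a ∈ S1 ∪ S2, w1 a b) = 0 := by
        refine Finset.sum_eq_zero fun a _ => ?_
        by_contra h
        exact Finset.disjoint_left.1 hT (h1s a b h).2.1 hb2
      have e2 : (∑ a ∈ S1 ∪ S2, w2 a b) = ∑ a ∈ S2, w2 a b := by
        refine (Finset.sum_subset Finset.subset_union_right ?_).symm
        intro a _ ha
        by_contra h
        exact ha ((h2s a b h).1)
      rw [e1, e2, zero_add, h2c b hb2]

lemma coupling_overlay {S : Finset α} {T : Finset β} {μ : α → ℝ} {ν : β → ℝ}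
    {w : α → β → ℝ} {a0 : α} {b0 : β} {t : ℝ}
    (hw : IsCoupling R S T (fun a => μ a - if a = a0 then t else 0)
      (fun b => ν b - if b = b0 then t else 0) w)
    (ht : 0 ≤ t) (ha0 : a0 ∈ S) (hb0 : b0 ∈ T) (hR : R a0 b0) :
    IsCoupling R S T μ ν
      (fun a b => w a b + if a = a0 ∧ b = b0 then t else 0) := by
  obtain ⟨hn, hs, hr, hc⟩ := hw
  refine ⟨fun a b => add_nonneg (hn a b) (by positivity), ?_, ?_, ?_⟩
  · intro a b h
    simp only at h
    rcases eq_or_ne (w a b) 0 with h1 | h1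
    · rw [h1, zero_add] at h
      have hab : a = a0 ∧ b = b0 := by
        by_contra hc'; rw [if_neg hc'] at h; exact h rfl
      exact ⟨hab.1 ▸ ha0, hab.2 ▸ hb0, hab.1 ▸ hab.2 ▸ hR⟩
    · exact hs a b h1
  · intro a ha
    show (∑ b ∈ T, (w a b + if a = a0 ∧ b = b0 then t else 0)) = μ a
    rw [Finset.sum_add_distrib, hr a ha]
    simp only
    by_cases hne : a = a0
    · subst hne
      have h2 : (∑ b ∈ T, if a = a ∧ b = b0 then t else 0)
          = ∑ b ∈ T, if b = b0 then t else 0 :=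
        Finset.sum_congr rfl fun b _ => by simp
      rw [h2, Finset.sum_ite_eq' T b0 (fun _ => t), if_pos hb0, if_pos rfl]
      ring
    · have h2 : (∑ b ∈ T, if a = a0 ∧ b = b0 then t else 0) = 0 :=
        Finset.sum_eq_zero fun b _ => by simp [hne]
      rw [h2, if_neg hne]
      ring
  · intro b hb
    show (∑ a ∈ S, (w a b + if a = a0 ∧ b = b0 then t else 0)) = ν b
    rw [Finset.sum_add_distrib, hc b hb]
    simp only
    by_cases hne : b = b0
    · subst hne
      have h2 : (∑ a ∈ S, if a = a0 ∧ b = b then t else 0)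
          = ∑ a ∈ S, if a = a0 then t else 0 :=
        Finset.sum_congr rfl fun a _ => by simp
      rw [h2, Finset.sum_ite_eq' S a0 (fun _ => t), if_pos ha0, if_pos rfl]
      ring
    · have h2 : (∑ a ∈ S, if a = a0 ∧ b = b0 then t else 0) = 0 :=
        Finset.sum_eq_zero fun a _ => by simp [hne]
      rw [h2, if_neg hne]
      ring

lemma hall_shift {S : Finset α} {T : Finset β} {μ : α → ℝ} {ν : β → ℝ}
    {a0 : α} {b0 : β} {t : ℝ}
    (hall : ∀ A ⊆ S, (∑ a ∈ A, μ a) ≤ ∑ b ∈ T.filter (fun b => ∃ a ∈ A, R a b), ν b)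
    (hRb0 : R a0 b0) (hb0T : b0 ∈ T)
    (htF : ∀ A ⊆ S, a0 ∉ A → (∃ a ∈ A, R a b0) →
      t ≤ (∑ b ∈ T.filter (fun b => ∃ a ∈ A, R a b), ν b) - ∑ a ∈ A, μ a) :
    ∀ A ⊆ S, (∑ a ∈ A, (μ a - if a = a0 then t else 0)) ≤
      ∑ b ∈ T.filter (fun b => ∃ a ∈ A, R a b), (ν b - if b = b0 then t else 0) := by
  intro A hA
  have eμ : (∑ a ∈ A, (μ a - if a = a0 then t else 0))
      = (∑ a ∈ A, μ a) - (if a0 ∈ A then t else 0) := by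
    rw [Finset.sum_sub_distrib, Finset.sum_ite_eq' A a0 (fun _ => t)]
  set B := T.filter (fun b => ∃ a ∈ A, R a b) with hB
  have eν : (∑ b ∈ B, (ν b - if b = b0 then t else 0))
      = (∑ b ∈ B, ν b) - (if b0 ∈ B then t else 0) := by
    rw [Finset.sum_sub_distrib, Finset.sum_ite_eq' B b0 (fun _ => t)]
  rw [eμ, eν]
  by_cases hA0 : a0 ∈ A
  · have hb0B : b0 ∈ B := Finset.mem_filter.2 ⟨hb0T, a0, hA0, hRb0⟩
    rw [if_pos hA0, if_pos hb0B]
    have := hall A hA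
    linarith
  · rw [if_neg hA0]
    by_cases hb0B : b0 ∈ B
    · rw [if_pos hb0B]
      obtain ⟨_, a, haA, hr⟩ := Finset.mem_filter.1 hb0B
      have := htF A hA hA0 ⟨a, haA, hr⟩
      linarith
    · rw [if_neg hb0B]
      have := hall A hA
      linarith

lemma coupling_exists :
    ∀ (N : ℕ) (S : Finset α) (T : Finset β) (μ : α → ℝ) (ν : β → ℝ),
    S.card * (Fintype.card α + Fintype.card β + 1)
      + (S.filter (fun a => μ a ≠ 0)).card + (T.filter (fun b => ν b ≠ 0)).card ≤ N →
    (∀ a ∈ S, 0 ≤ μ a) → (∀ b ∈ T, 0 ≤ ν b) →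
    ((∑ a ∈ S, μ a) = ∑ b ∈ T, ν b) →
    (∀ A ⊆ S, (∑ a ∈ A, μ a) ≤ ∑ b ∈ T.filter (fun b => ∃ a ∈ A, R a b), ν b) →
    ∃ w, IsCoupling R S T μ ν w := by
  intro N
  induction N with
  | zero =>
    intro S T μ ν hM hμ hν hsum hall
    have hS : S = ∅ := by
      rw [← Finset.card_eq_zero]
      by_contra h
      have h1 : 1 ≤ S.card := Nat.one_le_iff_ne_zero.2 h
      have h2 : 0 < S.card * (Fintype.card α + Fintype.card β + 1) :=
        Nat.mul_pos (by omega) (by omega)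
      omega
    exact ⟨_, coupling_zero R hμ hν hsum (by simp [hS])⟩
  | succ N ih =>
    intro S T μ ν hM hμ hν hsum hall
    by_cases h0 : (∑ a ∈ S, μ a) = 0
    · exact ⟨_, coupling_zero R hμ hν hsum h0⟩
    set K := Fintype.card α + Fintype.card β + 1 with hK
    -- find a0 with positive mass
    have hex : ∃ a ∈ S, 0 < μ a := by
      by_contra h
      push_neg at h
      exact h0 (le_antisymm (Finset.sum_nonpos fun a ha => h a ha) (Finset.sum_nonneg hμ))
    obtain ⟨a0, ha0S, ha0⟩ := hex
    -- find b0 ∈ T with R a0 b0 and positive mass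
    have h1 := hall {a0} (Finset.singleton_subset_iff.2 ha0S)
    rw [Finset.sum_singleton] at h1
    have hex2 : ∃ b ∈ T, R a0 b ∧ 0 < ν b := by
      by_contra h
      push_neg at h
      have hz : (∑ b ∈ T.filter (fun b => ∃ a ∈ ({a0} : Finset α), R a b), ν b) = 0 := by
        refine Finset.sum_eq_zero fun b hb => ?_
        obtain ⟨hbT, a, haa, hr⟩ := Finset.mem_filter.1 hb
        rw [Finset.mem_singleton] at haa
        subst haa
        exact le_antisymm (h b hbT hr) (hν b hbT)
      rw [hz] at h1
      linarith
    obtain ⟨b0, hb0T, hRb0, hb0⟩ := hex2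
    -- the family of obstructing sets and slack
    set slack : Finset α → ℝ :=
      fun A => (∑ b ∈ T.filter (fun b => ∃ a ∈ A, R a b), ν b) - ∑ a ∈ A, μ a with hslack
    set F : Finset (Finset α) :=
      S.powerset.filter (fun A => a0 ∉ A ∧ ∃ a ∈ A, R a b0) with hF
    have hmemF : ∀ A, A ∈ F ↔ A ⊆ S ∧ a0 ∉ A ∧ ∃ a ∈ A, R a b0 := by
      intro A
      rw [hF, Finset.mem_filter, Finset.mem_powerset]
    by_cases hcase : ∃ A ∈ F, slack A < min (μ a0) (ν b0)
    · -- SPLIT case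
      obtain ⟨Aw, hAwF, hAwlt⟩ := hcase
      obtain ⟨A0, hA0F, hA0min⟩ := Finset.exists_min_image F slack ⟨Aw, hAwF⟩
      obtain ⟨hA0S, hA0a0, hA0b0⟩ := (hmemF A0).1 hA0F
      set T1 := T.filter (fun b => ∃ a ∈ A0, R a b) with hT1
      have hT1T : T1 ⊆ T := Finset.filter_subset _ _
      have hb0T1 : b0 ∈ T1 := Finset.mem_filter.2 ⟨hb0T, hA0b0⟩
      set t := slack A0 with ht
      have hteq : t = (∑ b ∈ T1, ν b) - ∑ a ∈ A0, μ a := rfl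
      have ht0 : 0 ≤ t := by
        have := hall A0 hA0S
        rw [hteq]
        linarith
      have htlt : t < min (μ a0) (ν b0) := lt_of_le_of_lt (hA0min Aw hAwF) hAwlt
      have ht1 : t ≤ μ a0 := le_of_lt (lt_of_lt_of_le htlt (min_le_left _ _))
      have ht2 : t ≤ ν b0 := le_of_lt (lt_of_lt_of_le htlt (min_le_right _ _))
      set μ' : α → ℝ := fun a => μ a - if a = a0 then t else 0 with hμ'def
      set ν' : β → ℝ := fun b => ν b - if b = b0 then t else 0 with hν'def
      have hμ'a : ∀ a, a ≠ a0 → μ' a = μ a := by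
        intro a h; rw [hμ'def]; simp only [if_neg h, sub_zero]
      have hν'b : ∀ b, b ≠ b0 → ν' b = ν b := by
        intro b h; rw [hν'def]; simp only [if_neg h, sub_zero]
      have hμ'a0 : μ' a0 = μ a0 - t := by rw [hμ'def]; simp
      have hν'b0 : ν' b0 = ν b0 - t := by rw [hν'def]; simp
      have hμ' : ∀ a ∈ S, 0 ≤ μ' a := by
        intro a ha
        by_cases h : a = a0
        · subst h; rw [hμ'a0]; linarith
        · rw [hμ'a a h]; exact hμ a ha
      have hν' : ∀ b ∈ T, 0 ≤ ν' b := by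
        intro b hb
        by_cases h : b = b0
        · subst h; rw [hν'b0]; linarith
        · rw [hν'b b h]; exact hν b hb
      have hsumμ' : ∀ A : Finset α, (∑ a ∈ A, μ' a) = (∑ a ∈ A, μ a) - (if a0 ∈ A then t else 0) := by
        intro A
        rw [hμ'def]
        rw [Finset.sum_sub_distrib, Finset.sum_ite_eq' A a0 (fun _ => t)]
      have hsumν' : ∀ B : Finset β, (∑ b ∈ B, ν' b) = (∑ b ∈ B, ν b) - (if b0 ∈ B then t else 0) := by
        intro B
        rw [hν'def]
        rw [Finset.sum_sub_distrib, Finset.sum_ite_eq' B b0 (fun _ => t)]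
      have hall' : ∀ A ⊆ S, (∑ a ∈ A, μ' a) ≤
          ∑ b ∈ T.filter (fun b => ∃ a ∈ A, R a b), ν' b := by
        refine hall_shift R hall hRb0 hb0T ?_
        intro A hA hnA hexA
        exact hA0min A ((hmemF A).2 ⟨hA, hnA, hexA⟩)
      have htight : (∑ a ∈ A0, μ' a) = ∑ b ∈ T1, ν' b := by
        rw [hsumμ' A0, hsumν' T1, if_neg hA0a0, if_pos hb0T1, hteq]
        ring
      have hsum' : (∑ a ∈ S, μ' a) = ∑ b ∈ T, ν' b := by
        rw [hsumμ' S, hsumν' T, if_pos ha0S, if_pos hb0T, hsum]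
      have hall1 : ∀ A ⊆ A0, (∑ a ∈ A, μ' a) ≤
          ∑ b ∈ T1.filter (fun b => ∃ a ∈ A, R a b), ν' b := by
        intro A hA
        have h := hall' A (hA.trans hA0S)
        have hfe : T1.filter (fun b => ∃ a ∈ A, R a b)
            = T.filter (fun b => ∃ a ∈ A, R a b) := by
          rw [hT1, Finset.filter_filter]
          ext b
          simp only [Finset.mem_filter]
          constructor
          · rintro ⟨hb, _, h2⟩; exact ⟨hb, h2⟩
          · rintro ⟨hb, a, haA, hr⟩; exact ⟨hb, ⟨a, hA haA, hr⟩, ⟨a, haA, hr⟩⟩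
        rw [hfe]
        exact h
      have hall2 : ∀ B ⊆ S \ A0, (∑ a ∈ B, μ' a) ≤
          ∑ b ∈ (T \ T1).filter (fun b => ∃ a ∈ B, R a b), ν' b := by
        intro B hB
        have hBS : B ⊆ S := hB.trans Finset.sdiff_subset
        have hdisj : Disjoint A0 B := by
          refine Finset.disjoint_left.2 fun a haA0 haB => ?_
          exact (Finset.mem_sdiff.1 (hB haB)).2 haA0
        have hU := hall' (A0 ∪ B) (Finset.union_subset hA0S hBS)
        rw [Finset.sum_union hdisj] at hU
        have hT1U : T1 ⊆ T.filter (fun b => ∃ a ∈ A0 ∪ B, R a b) := by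
          intro b hb
          obtain ⟨hbT, a, ha, hr⟩ := Finset.mem_filter.1 hb
          exact Finset.mem_filter.2 ⟨hbT, a, Finset.mem_union_left _ ha, hr⟩
        have hUsplit := (Finset.sum_sdiff (f := ν') hT1U).symm
        have hsub : (T.filter (fun b => ∃ a ∈ A0 ∪ B, R a b)) \ T1 ⊆
            (T \ T1).filter (fun b => ∃ a ∈ B, R a b) := by
          intro b hb
          obtain ⟨hbU, hbnT1⟩ := Finset.mem_sdiff.1 hb
          obtain ⟨hbT, a, ha, hr⟩ := Finset.mem_filter.1 hbU
          rcases Finset.mem_union.1 ha with h | h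
          · exact absurd (Finset.mem_filter.2 ⟨hbT, a, h, hr⟩) hbnT1
          · exact Finset.mem_filter.2 ⟨Finset.mem_sdiff.2 ⟨hbT, hbnT1⟩, a, h, hr⟩
        have hmono : (∑ b ∈ (T.filter (fun b => ∃ a ∈ A0 ∪ B, R a b)) \ T1, ν' b) ≤
            ∑ b ∈ (T \ T1).filter (fun b => ∃ a ∈ B, R a b), ν' b := by
          refine Finset.sum_le_sum_of_subset_of_nonneg hsub fun b hb _ => ?_
          exact hν' b (Finset.mem_sdiff.1 (Finset.mem_filter.1 hb).1).1
        linarith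
      have hsum2 : (∑ a ∈ S \ A0, μ' a) = ∑ b ∈ T \ T1, ν' b := by
        rw [Finset.sum_sdiff_eq_sub hA0S, Finset.sum_sdiff_eq_sub hT1T, hsum', htight]
      -- measure bookkeeping
      have hA0ne : A0.Nonempty := by
        obtain ⟨a, ha, _⟩ := hA0b0
        exact ⟨a, ha⟩
      have hA0card : A0.card + 1 ≤ S.card := by
        have hsub : A0 ⊆ S.erase a0 := fun a ha =>
          Finset.mem_erase.2 ⟨fun h => hA0a0 (h ▸ ha), hA0S ha⟩
        have h := Finset.card_le_card hsub
        rw [Finset.card_erase_of_mem ha0S] at h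
        have h1 : 1 ≤ S.card := Finset.card_pos.2 ⟨a0, ha0S⟩
        omega
      have hScard : (S \ A0).card + 1 ≤ S.card := by
        rw [Finset.card_sdiff_of_subset hA0S]
        have h1 := Finset.card_le_card hA0S
        have h2 : 1 ≤ A0.card := Finset.card_pos.2 hA0ne
        omega
      have hM1 : A0.card * K + (A0.filter (fun a => μ' a ≠ 0)).card
          + (T1.filter (fun b => ν' b ≠ 0)).card ≤ N := by
        have hs1 : (A0.filter (fun a => μ' a ≠ 0)).card ≤ Fintype.card α :=
          le_trans (Finset.card_filter_le _ _) (Finset.card_le_univ _)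
        have hs2 : (T1.filter (fun b => ν' b ≠ 0)).card ≤ Fintype.card β :=
          le_trans (Finset.card_filter_le _ _) (Finset.card_le_univ _)
        have hmul : (A0.card + 1) * K ≤ S.card * K := Nat.mul_le_mul_right _ hA0card
        rw [add_one_mul] at hmul
        have hKval : K = Fintype.card α + Fintype.card β + 1 := hK
        linarith
      have hM2 : (S \ A0).card * K + ((S \ A0).filter (fun a => μ' a ≠ 0)).card
          + ((T \ T1).filter (fun b => ν' b ≠ 0)).card ≤ N := by
        have hs1 : ((S \ A0).filter (fun a => μ' a ≠ 0)).card ≤ Fintype.card α :=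
          le_trans (Finset.card_filter_le _ _) (Finset.card_le_univ _)
        have hs2 : ((T \ T1).filter (fun b => ν' b ≠ 0)).card ≤ Fintype.card β :=
          le_trans (Finset.card_filter_le _ _) (Finset.card_le_univ _)
        have hmul : ((S \ A0).card + 1) * K ≤ S.card * K := Nat.mul_le_mul_right _ hScard
        rw [add_one_mul] at hmul
        have hKval : K = Fintype.card α + Fintype.card β + 1 := hK
        linarith
      obtain ⟨w1, hw1⟩ := ih A0 T1 μ' ν' hM1 (fun a ha => hμ' a (hA0S ha))
        (fun b hb => hν' b (hT1T hb)) htight hall1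
      obtain ⟨w2, hw2⟩ := ih (S \ A0) (T \ T1) μ' ν' hM2
        (fun a ha => hμ' a (Finset.mem_sdiff.1 ha).1)
        (fun b hb => hν' b (Finset.mem_sdiff.1 hb).1) hsum2 hall2
      have hu := coupling_union R hw1 hw2 Finset.disjoint_sdiff Finset.disjoint_sdiff
      rw [Finset.union_sdiff_of_subset hA0S, Finset.union_sdiff_of_subset hT1T] at hu
      exact ⟨_, coupling_overlay R hu ht0 ha0S hb0T hRb0⟩
    · -- ROUTING case
      push_neg at hcase
      set t := min (μ a0) (ν b0) with ht
      have ht0 : 0 < t := lt_min ha0 hb0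
      have ht1 : t ≤ μ a0 := min_le_left _ _
      have ht2 : t ≤ ν b0 := min_le_right _ _
      set μ' : α → ℝ := fun a => μ a - if a = a0 then t else 0 with hμ'def
      set ν' : β → ℝ := fun b => ν b - if b = b0 then t else 0 with hν'def
      have hμ'a : ∀ a, a ≠ a0 → μ' a = μ a := by
        intro a h; rw [hμ'def]; simp only [if_neg h, sub_zero]
      have hν'b : ∀ b, b ≠ b0 → ν' b = ν b := by
        intro b h; rw [hν'def]; simp only [if_neg h, sub_zero]
      have hμ'a0 : μ' a0 = μ a0 - t := by rw [hμ'def]; simp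
      have hν'b0 : ν' b0 = ν b0 - t := by rw [hν'def]; simp
      have hμ' : ∀ a ∈ S, 0 ≤ μ' a := by
        intro a ha
        by_cases h : a = a0
        · subst h; rw [hμ'a0]; linarith
        · rw [hμ'a a h]; exact hμ a ha
      have hν' : ∀ b ∈ T, 0 ≤ ν' b := by
        intro b hb
        by_cases h : b = b0
        · subst h; rw [hν'b0]; linarith
        · rw [hν'b b h]; exact hν b hb
      have hsumμ' : ∀ A : Finset α, (∑ a ∈ A, μ' a) = (∑ a ∈ A, μ a) - (if a0 ∈ A then t else 0) := by
        intro A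
        rw [hμ'def]
        rw [Finset.sum_sub_distrib, Finset.sum_ite_eq' A a0 (fun _ => t)]
      have hsumν' : ∀ B : Finset β, (∑ b ∈ B, ν' b) = (∑ b ∈ B, ν b) - (if b0 ∈ B then t else 0) := by
        intro B
        rw [hν'def]
        rw [Finset.sum_sub_distrib, Finset.sum_ite_eq' B b0 (fun _ => t)]
      have hall' : ∀ A ⊆ S, (∑ a ∈ A, μ' a) ≤
          ∑ b ∈ T.filter (fun b => ∃ a ∈ A, R a b), ν' b := by
        refine hall_shift R hall hRb0 hb0T ?_
        intro A hA hnA hexA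
        exact hcase A ((hmemF A).2 ⟨hA, hnA, hexA⟩)
      have hsum' : (∑ a ∈ S, μ' a) = ∑ b ∈ T, ν' b := by
        rw [hsumμ' S, hsumν' T, if_pos ha0S, if_pos hb0T, hsum]
      have hsubμ : S.filter (fun a => μ' a ≠ 0) ⊆ S.filter (fun a => μ a ≠ 0) := by
        intro a ha
        obtain ⟨haS, hane⟩ := Finset.mem_filter.1 ha
        refine Finset.mem_filter.2 ⟨haS, ?_⟩
        by_cases h : a = a0
        · subst h; exact ne_of_gt ha0
        · rw [hμ'a a h] at hane; exact hane
      have hsubν : T.filter (fun b => ν' b ≠ 0) ⊆ T.filter (fun b => ν b ≠ 0) := by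
        intro b hb
        obtain ⟨hbT', hbne⟩ := Finset.mem_filter.1 hb
        refine Finset.mem_filter.2 ⟨hbT', ?_⟩
        by_cases h : b = b0
        · subst h; exact ne_of_gt hb0
        · rw [hν'b b h] at hbne; exact hbne
      have hMnew : S.card * K + (S.filter (fun a => μ' a ≠ 0)).card
          + (T.filter (fun b => ν' b ≠ 0)).card ≤ N := by
        have hlt : (S.filter (fun a => μ' a ≠ 0)).card
            + (T.filter (fun b => ν' b ≠ 0)).card
            < (S.filter (fun a => μ a ≠ 0)).card + (T.filter (fun b => ν b ≠ 0)).card := by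
          rcases le_total (μ a0) (ν b0) with hmin | hmin
          · have hta0 : μ' a0 = 0 := by rw [hμ'a0, ht, min_eq_left hmin]; ring
            have hss : S.filter (fun a => μ' a ≠ 0) ⊂ S.filter (fun a => μ a ≠ 0) := by
              refine ⟨hsubμ, fun hcon => ?_⟩
              have := hcon (Finset.mem_filter.2 ⟨ha0S, ne_of_gt ha0⟩)
              exact (Finset.mem_filter.1 this).2 hta0
            have h1 := Finset.card_lt_card hss
            have h2 := Finset.card_le_card hsubν
            omega
          · have htb0 : ν' b0 = 0 := by rw [hν'b0, ht, min_eq_right hmin]; ring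
            have hss : T.filter (fun b => ν' b ≠ 0) ⊂ T.filter (fun b => ν b ≠ 0) := by
              refine ⟨hsubν, fun hcon => ?_⟩
              have := hcon (Finset.mem_filter.2 ⟨hb0T, ne_of_gt hb0⟩)
              exact (Finset.mem_filter.1 this).2 htb0
            have h1 := Finset.card_lt_card hss
            have h2 := Finset.card_le_card hsubμ
            omega
        omega
      obtain ⟨w', hw'⟩ := ih S T μ' ν' hMnew hμ' hν' hsum' hall'
      exact ⟨_, coupling_overlay R hw' (le_of_lt ht0) ha0S hb0T hRb0⟩

end Coupling

section Leaf

variable {γ : Type} [Fintype γ] [DecidableEq γ]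

lemma endpoint_edge {H : SimpleGraph γ} {u v a b : γ} {p : H.Walk u v}
    (hp : p.IsPath) (ha : s(v, a) ∈ p.edges) (hb : s(v, b) ∈ p.edges) : a = b := by
  have hp' : p.reverse.IsPath := hp.reverse
  have ha' : s(v, a) ∈ p.reverse.edges := by
    rw [SimpleGraph.Walk.edges_reverse, List.mem_reverse]; exact ha
  have hb' : s(v, b) ∈ p.reverse.edges := by
    rw [SimpleGraph.Walk.edges_reverse, List.mem_reverse]; exact hb
  set q := p.reverse with hq
  clear_value q
  cases q with
  | nil => simp at ha'
  | cons h r =>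
    rename_i c
    rw [SimpleGraph.Walk.edges_cons, List.mem_cons] at ha' hb'
    rw [SimpleGraph.Walk.cons_isPath_iff] at hp'
    have key : ∀ x : γ, s(v, x) = s(v, c) ∨ s(v, x) ∈ r.edges → x = c := by
      intro x hx
      rcases hx with h1 | h1
      · rw [Sym2.eq_iff] at h1
        rcases h1 with ⟨_, h2⟩ | ⟨h2, h3⟩
        · exact h2
        · exfalso; apply hp'.2; rw [h2]; exact r.start_mem_support
      · exact absurd (r.fst_mem_support_of_mem_edges h1) hp'.2
    rw [key a ha', key b hb']

lemma exists_leaf {H : SimpleGraph γ} [DecidableRel H.Adj] (hH : H.IsAcyclic)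
    (T : Finset γ) (hT : T.Nonempty) :
    ∃ j ∈ T, (T.filter (fun i => H.Adj j i)).card ≤ 1 := by
  by_contra hcon
  push_neg at hcon
  have claim : ∀ k : ℕ, ∃ (u v : γ) (p : H.Walk u v), p.IsPath ∧
      (∀ w ∈ p.support, w ∈ T) ∧ p.length = k := by
    intro k
    induction k with
    | zero =>
      obtain ⟨t, ht⟩ := hT
      exact ⟨t, t, SimpleGraph.Walk.nil, SimpleGraph.Walk.IsPath.nil,
        by simp [ht], rfl⟩
    | succ k ihk =>
      obtain ⟨u, v, p, hp, hsup, hlen⟩ := ihk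
      have hvT : v ∈ T := hsup v p.end_mem_support
      have h2 := hcon v hvT
      obtain ⟨a, haf, b, hbf, hab⟩ := Finset.one_lt_card.1 h2
      obtain ⟨haT, haAdj⟩ := Finset.mem_filter.1 haf
      obtain ⟨hbT, hbAdj⟩ := Finset.mem_filter.1 hbf
      -- at least one of a, b is not in the support of p
      have hnotsup : ∃ w, w ∈ T ∧ H.Adj v w ∧ w ∉ p.support := by
        by_contra h3
        push_neg at h3
        have hcyc : ∀ c : γ, H.Adj v c → c ∈ p.support → s(v, c) ∈ p.edges := by
          intro c hadj hcs
          by_contra h4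
          have hq : (p.dropUntil c hcs).IsPath := hp.dropUntil hcs
          have h5 : s(v, c) ∉ (p.dropUntil c hcs).edges := fun h6 =>
            h4 (List.Subset.trans (p.edges_dropUntil_subset hcs) (fun x hx => hx) h6)
          exact hH (SimpleGraph.Walk.cons hadj (p.dropUntil c hcs))
            ((SimpleGraph.Walk.cons_isCycle_iff _ hadj).2 ⟨hq, h5⟩)
        have hea := hcyc a haAdj (h3 a haT haAdj)
        have heb := hcyc b hbAdj (h3 b hbT hbAdj)
        exact hab (endpoint_edge hp hea heb)
      obtain ⟨w, hwT, hwAdj, hwns⟩ := hnotsup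
      -- extend the path by w
      refine ⟨w, u, SimpleGraph.Walk.cons hwAdj.symm p.reverse, ?_, ?_, ?_⟩
      · rw [SimpleGraph.Walk.cons_isPath_iff]
        exact ⟨hp.reverse, by rwa [SimpleGraph.Walk.support_reverse, List.mem_reverse]⟩
      · intro x hx
        rw [SimpleGraph.Walk.support_cons, List.mem_cons] at hx
        rcases hx with rfl | hx
        · exact hwT
        · rw [SimpleGraph.Walk.support_reverse, List.mem_reverse] at hx
          exact hsup x hx
      · rw [SimpleGraph.Walk.length_cons, SimpleGraph.Walk.length_reverse, hlen]
  obtain ⟨u, v, p, hp, _, hlen⟩ := claim (Fintype.card γ)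
  have := hp.length_lt
  omega

end Leaf


open Finset in
theorem cpmc_forest_convex_hull
    (V : Type) [Fintype V] [DecidableEq V] (G : SimpleGraph V)
    (m : ℕ) (P : Fin m → Finset V)
    -- the parts form a partition of V
    (hpart : ∀ v : V, ∃! i : Fin m, v ∈ P i)
    -- the graph is m-partite: no edges inside a part
    (hindep : ∀ i : Fin m, ∀ u ∈ P i, ∀ v ∈ P i, ¬ G.Adj u v)
    -- the dependency graph is a forest
    (hforest : (SimpleGraph.fromRel
        (fun i j : Fin m => ∃ u ∈ P i, ∃ v ∈ P j, ¬ G.Adj u v)).IsAcyclic) :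
    convexHull ℝ {x : V → ℝ |
        (∀ v, x v = 0 ∨ x v = 1) ∧
        (∀ i : Fin m, (∑ v ∈ P i, x v) = 1) ∧
        (∀ u v : V, u ≠ v → x u = 1 → x v = 1 → G.Adj u v)} =
      {x : V → ℝ |
        (∀ v, 0 ≤ x v) ∧
        (∀ i : Fin m, (∑ v ∈ P i, x v) = 1) ∧
        (∀ C : Finset V, (∀ u ∈ C, ∀ v ∈ C, u ≠ v → ¬ G.Adj u v) →
          (∑ v ∈ C, x v) ≤ 1)} := by
  classical
  apply Set.Subset.antisymm
  · -- EASY DIRECTION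
    apply convexHull_min
    · intro x hx
      obtain ⟨h01, hsums, hcl⟩ := hx
      refine ⟨fun v => by rcases h01 v with h | h <;> rw [h] <;> norm_num, hsums, ?_⟩
      intro C hC
      have hsplit := Finset.sum_filter_add_sum_filter_not C (fun v => x v = 1) x
      have h1 : (∑ v ∈ C.filter (fun v => x v = 1), x v)
          = ((C.filter (fun v => x v = 1)).card : ℝ) := by
        rw [Finset.sum_congr rfl (fun v hv => (Finset.mem_filter.1 hv).2)]
        simp
      have h2 : (∑ v ∈ C.filter (fun v => ¬ x v = 1), x v) = 0 := by
        refine Finset.sum_eq_zero fun v hv => ?_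
        rcases h01 v with h | h
        · exact h
        · exact absurd h (Finset.mem_filter.1 hv).2
      have h3 : (C.filter (fun v => x v = 1)).card ≤ 1 := by
        refine Finset.card_le_one.2 fun a ha b hb => ?_
        obtain ⟨haC, hax⟩ := Finset.mem_filter.1 ha
        obtain ⟨hbC, hbx⟩ := Finset.mem_filter.1 hb
        by_contra hne
        exact hC a haC b hbC hne (hcl a b hne hax hbx)
      have h3' : ((C.filter (fun v => x v = 1)).card : ℝ) ≤ 1 := by
        exact_mod_cast h3
      linarith
    · -- convexity of the RHS
      intro x hx y hy a b ha hb hab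
      obtain ⟨hx0, hx1, hx2⟩ := hx
      obtain ⟨hy0, hy1, hy2⟩ := hy
      refine ⟨?_, ?_, ?_⟩
      · intro v
        have : (a • x + b • y) v = a * x v + b * y v := rfl
        rw [this]
        have := hx0 v; have := hy0 v
        positivity
      · intro i
        have he : ∀ v, (a • x + b • y) v = a * x v + b * y v := fun v => rfl
        rw [Finset.sum_congr rfl (fun v _ => he v), Finset.sum_add_distrib,
          ← Finset.mul_sum, ← Finset.mul_sum, hx1 i, hy1 i]
        ring_nf
        linarith
      · intro C hC
        have he : ∀ v, (a • x + b • y) v = a * x v + b * y v := fun v => rfl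
        rw [Finset.sum_congr rfl (fun v _ => he v), Finset.sum_add_distrib,
          ← Finset.mul_sum, ← Finset.mul_sum]
        have h1 := hx2 C hC
        have h2 := hy2 C hC
        nlinarith
  · -- HARD DIRECTION
    intro x hx
    obtain ⟨hx0, hx1, hx2⟩ := hx
    set H := SimpleGraph.fromRel
      (fun i j : Fin m => ∃ u ∈ P i, ∃ v ∈ P j, ¬ G.Adj u v) with hHdef
    -- parts are disjoint
    have hdisj : ∀ (i j : Fin m), i ≠ j → ∀ v, v ∈ P i → v ∈ P j → False := by
      intro i j hij v hvi hvj
      obtain ⟨k, _, huniq⟩ := hpart v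
      exact hij ((huniq i hvi).trans (huniq j hvj).symm)
    -- parts nonempty
    have hPne : ∀ i, (P i).Nonempty := by
      intro i
      rw [Finset.nonempty_iff_ne_empty]
      intro h
      have := hx1 i
      rw [h, Finset.sum_empty] at this
      norm_num at this
    set f0 : Fin m → V := fun i => (hPne i).choose with hf0def
    have hf0 : ∀ i, f0 i ∈ P i := fun i => (hPne i).choose_spec
    -- non-dependency means complete bipartite
    have hfree : ∀ i j : Fin m, i ≠ j → ¬ H.Adj j i →
        ∀ u ∈ P i, ∀ v ∈ P j, G.Adj u v := by
      intro i j hij hnadj u hu v hv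
      rw [hHdef, SimpleGraph.fromRel_adj] at hnadj
      push_neg at hnadj
      have h := hnadj (Ne.symm hij)
      exact h.2 u hu v hv
    -- the Hall condition across any two distinct parts
    have hhall : ∀ (i j : Fin m), i ≠ j → ∀ A ⊆ P i,
        (∑ a ∈ A, x a) ≤ ∑ b ∈ (P j).filter (fun b => ∃ a ∈ A, G.Adj a b), x b := by
      intro i j hij A hA
      set B := (P j).filter (fun v => ∀ a ∈ A, ¬ G.Adj a v) with hBdef
      have hBPj : B ⊆ P j := Finset.filter_subset _ _
      have hABdisj : Disjoint A B := by
        refine Finset.disjoint_left.2 fun v hvA hvB => ?_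
        exact hdisj i j hij v (hA hvA) (hBPj hvB)
      have hstable : ∀ u ∈ A ∪ B, ∀ v ∈ A ∪ B, u ≠ v → ¬ G.Adj u v := by
        intro u hu v hv huv
        rcases Finset.mem_union.1 hu with hu' | hu' <;>
          rcases Finset.mem_union.1 hv with hv' | hv'
        · exact hindep i u (hA hu') v (hA hv')
        · exact (Finset.mem_filter.1 hv').2 u hu'
        · intro h
          exact (Finset.mem_filter.1 hu').2 v hv' h.symm
        · exact hindep j u (hBPj hu') v (hBPj hv')
      have h1 := hx2 (A ∪ B) hstable
      rw [Finset.sum_union hABdisj] at h1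
      have h2 : (P j).filter (fun v => ¬ ∀ a ∈ A, ¬ G.Adj a v)
          = (P j).filter (fun b => ∃ a ∈ A, G.Adj a b) := by
        refine Finset.filter_congr fun v _ => ?_
        push_neg
        simp
      have h3 := Finset.sum_filter_add_sum_filter_not (P j)
        (fun v => ∀ a ∈ A, ¬ G.Adj a v) x
      rw [h2] at h3
      have h4 := hx1 j
      rw [← hBdef] at h3
      linarith
    haveI : DecidableRel H.Adj := Classical.decRel _
    -- THE GLUING INDUCTION
    have glue : ∀ (n : ℕ) (T : Finset (Fin m)), T.card ≤ n →
        ∃ D : (Fin m → V) → ℝ,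
        (∀ f, 0 ≤ D f) ∧ ((∑ f : Fin m → V, D f) = 1) ∧
        (∀ f, D f ≠ 0 → (∀ i, i ∉ T → f i = f0 i) ∧ (∀ i ∈ T, f i ∈ P i) ∧
          (∀ i ∈ T, ∀ j ∈ T, i ≠ j → G.Adj (f i) (f j))) ∧
        (∀ i ∈ T, ∀ u ∈ P i,
          (∑ f ∈ Finset.univ.filter (fun f : Fin m → V => f i = u), D f) = x u) := by
      intro n
      induction n with
      | zero =>
        intro T hT
        have hTe : T = ∅ := Finset.card_eq_zero.1 (Nat.le_zero.1 hT)
        subst hTe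
        refine ⟨fun f => if f = f0 then 1 else 0, fun f => by positivity, ?_, ?_, ?_⟩
        · rw [Finset.sum_ite_eq' Finset.univ f0 (fun _ => (1:ℝ))]
          simp
        · intro f hf
          simp only [] at hf
          have : f = f0 := by
            by_contra h
            rw [if_neg h] at hf
            exact hf rfl
          subst this
          exact ⟨fun i _ => rfl, fun i hi => absurd hi (Finset.notMem_empty i),
            fun i hi => absurd hi (Finset.notMem_empty i)⟩
        · intro i hi
          exact absurd hi (Finset.notMem_empty i)
      | succ n ihn =>
        intro T hT
        rcases Finset.eq_empty_or_nonempty T with rfl | hTne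
        · exact ihn ∅ (by simp)
        obtain ⟨j, hjT, hjleaf⟩ := exists_leaf hforest T hTne
        set T' := T.erase j with hT'def
        have hjT' : j ∉ T' := Finset.notMem_erase j T
        have hT'sub : ∀ i ∈ T', i ∈ T := fun i hi => Finset.mem_of_mem_erase hi
        have hT'card : T'.card ≤ n := by
          rw [hT'def, Finset.card_erase_of_mem hjT]
          have h1 := Finset.card_pos.2 hTne
          omega
        obtain ⟨D, hD0, hD1, hDsupp, hDmarg⟩ := ihn T' hT'card
        have hDcanon : ∀ f, D f ≠ 0 → f j = f0 j :=
          fun f hf => (hDsupp f hf).1 j hjT'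
        -- construct the extension kernel c
        have hcex : ∃ c : (Fin m → V) → V → ℝ,
            (∀ f v, 0 ≤ c f v) ∧
            (∀ f, D f ≠ 0 → (∑ v ∈ P j, c f v) = 1) ∧
            (∀ v ∈ P j, (∑ f : Fin m → V, D f * c f v) = x v) ∧
            (∀ f v, D f ≠ 0 → c f v ≠ 0 → v ∈ P j ∧ ∀ i ∈ T', G.Adj (f i) v) := by
          by_cases hnb : ∃ i0 ∈ T', H.Adj j i0
          · obtain ⟨i0, hi0T', hi0adj⟩ := hnb
            have hji0 : j ≠ i0 := fun h => H.loopless.irrefl i0 (h ▸ hi0adj)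
            -- get a coupling between parts i0 and j
            obtain ⟨w, hw0, hwsupp, hwrow, hwcol⟩ :=
              coupling_exists G.Adj
                ((P i0).card * (Fintype.card V + Fintype.card V + 1)
                  + ((P i0).filter (fun a => x a ≠ 0)).card
                  + ((P j).filter (fun b => x b ≠ 0)).card)
                (P i0) (P j) x x (le_refl _)
                (fun a _ => hx0 a) (fun b _ => hx0 b)
                (by rw [hx1 i0, hx1 j])
                (hhall i0 j (Ne.symm hji0))
            refine ⟨fun f v => if v ∈ P j then w (f i0) v * (x (f i0))⁻¹ else 0,
              ?_, ?_, ?_, ?_⟩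
            · intro f v
              simp only []
              by_cases h : v ∈ P j
              · rw [if_pos h]
                exact mul_nonneg (hw0 _ _) (inv_nonneg.2 (hx0 _))
              · rw [if_neg h]
            · intro f hf
              have hfi0 : f i0 ∈ P i0 := ((hDsupp f hf).2.1) i0 hi0T'
              have hxpos : 0 < x (f i0) := by
                have hm := hDmarg i0 hi0T' (f i0) hfi0
                have hle : D f ≤ ∑ g ∈ Finset.univ.filter
                    (fun g : Fin m → V => g i0 = f i0), D g := by
                  refine Finset.single_le_sum (fun g _ => hD0 g) ?_
                  exact Finset.mem_filter.2 ⟨Finset.mem_univ f, rfl⟩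
                have hDfpos : 0 < D f := lt_of_le_of_ne (hD0 f) (Ne.symm hf)
                linarith
              have he : (∑ v ∈ P j, (fun f v => if v ∈ P j then w (f i0) v * (x (f i0))⁻¹ else 0) f v)
                  = ∑ v ∈ P j, w (f i0) v * (x (f i0))⁻¹ :=
                Finset.sum_congr rfl fun v hv => by simp only []; rw [if_pos hv]
              rw [he, ← Finset.sum_mul, hwrow (f i0) hfi0,
                mul_inv_cancel₀ (ne_of_gt hxpos)]
            · intro v hv
              simp only []
              have hfib := Finset.sum_fiberwise_of_maps_to
                (fun (f : Fin m → V) (_ : f ∈ Finset.univ) => Finset.mem_univ (f i0))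
                (fun f => D f * if v ∈ P j then w (f i0) v * (x (f i0))⁻¹ else 0)
              rw [← hfib]
              have hinner : ∀ u : V, (∑ f ∈ Finset.univ.filter
                  (fun f : Fin m → V => f i0 = u),
                    D f * if v ∈ P j then w (f i0) v * (x (f i0))⁻¹ else 0)
                  = (if u ∈ P i0 then w u v else 0) := by
                intro u
                have he : ∀ f ∈ Finset.univ.filter (fun f : Fin m → V => f i0 = u),
                    D f * (if v ∈ P j then w (f i0) v * (x (f i0))⁻¹ else 0)
                    = D f * (w u v * (x u)⁻¹) := by
                  intro f hf
                  rw [(Finset.mem_filter.1 hf).2, if_pos hv]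
                rw [Finset.sum_congr rfl he, ← Finset.sum_mul]
                by_cases hu : u ∈ P i0
                · rw [hDmarg i0 hi0T' u hu, if_pos hu]
                  by_cases hxu : x u = 0
                  · have hwu : w u v = 0 := by
                      by_contra hwc
                      have hrow := hwrow u hu
                      have : (∑ b ∈ P j, w u b) = 0 := by rw [hrow, hxu]
                      have := (Finset.sum_eq_zero_iff_of_nonneg
                        (fun b _ => hw0 u b)).1 this v hv
                      exact hwc this
                    rw [hxu, hwu]
                    ring
                  · field_simp
                · rw [if_neg hu]
                  have hz : (∑ f ∈ Finset.univ.filter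
                      (fun f : Fin m → V => f i0 = u), D f) = 0 := by
                    refine Finset.sum_eq_zero fun f hf => ?_
                    by_contra hDf
                    have := ((hDsupp f hDf).2.1) i0 hi0T'
                    rw [(Finset.mem_filter.1 hf).2] at this
                    exact hu this
                  rw [hz]
                  ring
              rw [Finset.sum_congr rfl (fun u _ => hinner u)]
              rw [Finset.sum_ite_mem, Finset.univ_inter]
              exact hwcol v hv
            · intro f v hDf hcv
              simp only [] at hcv
              have hvPj : v ∈ P j := by
                by_contra h
                rw [if_neg h] at hcv
                exact hcv rfl
              rw [if_pos hvPj] at hcv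
              have hwne : w (f i0) v ≠ 0 := fun h => hcv (by rw [h]; ring)
              obtain ⟨hfi0, _, hadj⟩ := hwsupp _ _ hwne
              refine ⟨hvPj, fun i hiT' => ?_⟩
              by_cases hii0 : i = i0
              · subst hii0; exact hadj
              · have hnadj : ¬ H.Adj j i := by
                  intro hadj'
                  have hmem1 : i ∈ T.filter (fun k => H.Adj j k) :=
                    Finset.mem_filter.2 ⟨hT'sub i hiT', hadj'⟩
                  have hmem2 : i0 ∈ T.filter (fun k => H.Adj j k) :=
                    Finset.mem_filter.2 ⟨hT'sub i0 hi0T', hi0adj⟩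
                  exact hii0 (Finset.card_le_one.1 hjleaf i hmem1 i0 hmem2)
                have hij : i ≠ j := fun h => hjT' (h ▸ hiT')
                exact hfree i j hij hnadj (f i) (((hDsupp f hDf).2.1) i hiT') v hvPj
          · push_neg at hnb
            refine ⟨fun f v => if v ∈ P j then x v else 0, ?_, ?_, ?_, ?_⟩
            · intro f v
              simp only []
              by_cases h : v ∈ P j
              · rw [if_pos h]; exact hx0 v
              · rw [if_neg h]
            · intro f _
              simp only []
              rw [Finset.sum_congr rfl (fun v hv => if_pos hv)]
              exact hx1 j
            · intro v hv
              simp only []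
              rw [Finset.sum_congr rfl
                (fun f (_ : f ∈ Finset.univ) => by rw [if_pos hv]),
                ← Finset.sum_mul, hD1, one_mul]
            · intro f v hDf hcv
              simp only [] at hcv
              have hvPj : v ∈ P j := by
                by_contra h
                rw [if_neg h] at hcv
                exact hcv rfl
              refine ⟨hvPj, fun i hiT' => ?_⟩
              have hij : i ≠ j := fun h => hjT' (h ▸ hiT')
              exact hfree i j hij (hnb i hiT') (f i)
                (((hDsupp f hDf).2.1) i hiT') v hvPj
        obtain ⟨c, hc1, hc2, hc3, hc4⟩ := hcex
        -- vanishing of c outside P j on the support of D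
        have hcvanish : ∀ f, D f ≠ 0 → ∀ v, v ∉ P j → c f v = 0 := by
          intro f hf v hv
          by_contra h
          exact hv (hc4 f v hf h).1
        -- the extended distribution
        set D' : (Fin m → V) → ℝ := fun g =>
          D (Function.update g j (f0 j)) * c (Function.update g j (f0 j)) (g j)
          with hD'def
        -- master reindexing lemma
        have master : ∀ Φ : (Fin m → V) → ℝ, (∑ g : Fin m → V, Φ g)
            = ∑ f ∈ Finset.univ.filter (fun f : Fin m → V => f j = f0 j),
                ∑ v : V, Φ (Function.update f j v) := by
          intro Φ
          rw [← Finset.sum_product']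
          refine Finset.sum_nbij' (fun g => (Function.update g j (f0 j), g j))
            (fun p => Function.update p.1 j p.2) ?_ ?_ ?_ ?_ ?_
          · intro g _
            refine Finset.mem_product.2 ⟨Finset.mem_filter.2
              ⟨Finset.mem_univ _, Function.update_self j (f0 j) g⟩, Finset.mem_univ _⟩
          · intro p _
            exact Finset.mem_univ _
          · intro g _
            simp only []
            rw [Function.update_idem, Function.update_eq_self]
          · intro p hp
            have hp1 : p.1 j = f0 j :=
              (Finset.mem_filter.1 (Finset.mem_product.1 hp).1).2
            refine Prod.ext ?_ ?_
            · simp only []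
              rw [Function.update_idem, ← hp1, Function.update_eq_self]
            · exact Function.update_self j p.2 p.1
          · intro g _
            simp only []
            rw [Function.update_idem, Function.update_eq_self]
        have hD'eval : ∀ f : Fin m → V, f j = f0 j →
            ∀ v, D' (Function.update f j v) = D f * c f v := by
          intro f hf v
          have e1 : Function.update (Function.update f j v) j (f0 j) = f := by
            rw [Function.update_idem, ← hf, Function.update_eq_self]
          rw [hD'def]
          simp only
          rw [e1, Function.update_self]
        -- sum over the canonical set equals the full sum, for D-supported summands
        have hcanon_ext : ∀ φ : (Fin m → V) → ℝ, (∀ f, D f = 0 → φ f = 0) →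
            (∑ f ∈ Finset.univ.filter (fun f : Fin m → V => f j = f0 j), φ f)
            = ∑ f : Fin m → V, φ f := by
          intro φ hφ
          refine Finset.sum_subset (Finset.filter_subset _ _) fun f _ hf => ?_
          refine hφ f ?_
          by_contra h
          exact hf (Finset.mem_filter.2 ⟨Finset.mem_univ f, hDcanon f h⟩)
        -- property: inner sum of c over all of V is 1 on support
        have hcsum : ∀ f, D f ≠ 0 → (∑ v : V, c f v) = 1 := by
          intro f hf
          rw [← hc2 f hf]
          exact (Finset.sum_subset (Finset.subset_univ (P j))
            (fun v _ hv => hcvanish f hf v hv)).symm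
        refine ⟨D', fun g => mul_nonneg (hD0 _) (hc1 _ _), ?_, ?_, ?_⟩
        · -- total mass 1
          rw [master D']
          have he1 : ∀ f ∈ Finset.univ.filter (fun f : Fin m → V => f j = f0 j),
              (∑ v : V, D' (Function.update f j v)) = D f := by
            intro f hf
            have hcf : f j = f0 j := (Finset.mem_filter.1 hf).2
            rw [Finset.sum_congr rfl (fun v _ => hD'eval f hcf v), ← Finset.mul_sum]
            by_cases hDf : D f = 0
            · rw [hDf]; ring
            · rw [hcsum f hDf, mul_one]
          rw [Finset.sum_congr rfl he1, hcanon_ext D (fun f h => h), hD1]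
        · -- support properties
          intro g hg
          rw [hD'def] at hg
          simp only at hg
          set f := Function.update g j (f0 j) with hfdef
          have hDf : D f ≠ 0 := fun h => hg (by rw [h]; ring)
          have hcg : c f (g j) ≠ 0 := fun h => hg (by rw [h]; ring)
          have hfg : ∀ i, i ≠ j → f i = g i := by
            intro i hi
            rw [hfdef]
            exact Function.update_of_ne hi (f0 j) g
          obtain ⟨hca, hpa, hadja⟩ := hDsupp f hDf
          obtain ⟨hgPj, hadjc⟩ := hc4 f (g j) hDf hcg
          refine ⟨?_, ?_, ?_⟩
          · intro i hiT
            have hij : i ≠ j := fun h => hiT (h ▸ hjT)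
            have hiT' : i ∉ T' := fun h => hiT (hT'sub i h)
            rw [← hfg i hij]
            exact hca i hiT'
          · intro i hiT
            by_cases hij : i = j
            · subst hij; exact hgPj
            · have hiT' : i ∈ T' := Finset.mem_erase.2 ⟨hij, hiT⟩
              rw [← hfg i hij]
              exact hpa i hiT'
          · intro i hiT k hkT hik
            by_cases hij : i = j
            · subst hij
              have hkj : k ≠ i := Ne.symm hik
              have hkT' : k ∈ T' := Finset.mem_erase.2 ⟨fun h => hkj h, hkT⟩
              have := hadjc k hkT'
              rw [hfg k (fun h => hkj h)] at this
              exact this.symm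
            · by_cases hkj : k = j
              · subst hkj
                have hiT' : i ∈ T' := Finset.mem_erase.2 ⟨hij, hiT⟩
                have := hadjc i hiT'
                rw [hfg i hij] at this
                exact this
              · have hiT' : i ∈ T' := Finset.mem_erase.2 ⟨hij, hiT⟩
                have hkT' : k ∈ T' := Finset.mem_erase.2 ⟨hkj, hkT⟩
                have := hadja i hiT' k hkT' hik
                rw [hfg i hij, hfg k hkj] at this
                exact this
        · -- marginals
          intro i hiT u huP
          rw [Finset.sum_filter]
          rw [master (fun g => if g i = u then D' g else 0)]
          by_cases hij : i = j
          · subst hij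
            have he1 : ∀ f ∈ Finset.univ.filter (fun f : Fin m → V => f i = f0 i),
                (∑ v : V, if Function.update f i v i = u
                    then D' (Function.update f i v) else 0) = D f * c f u := by
              intro f hf
              have hcf : f i = f0 i := (Finset.mem_filter.1 hf).2
              have he2 : ∀ v : V, (if Function.update f i v i = u
                  then D' (Function.update f i v) else 0)
                  = if v = u then D f * c f v else 0 := by
                intro v
                rw [Function.update_self]
                by_cases hvu : v = u
                · rw [if_pos hvu, if_pos hvu, hD'eval f hcf v]
                · rw [if_neg hvu, if_neg hvu]
              rw [Finset.sum_congr rfl (fun v _ => he2 v),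
                Finset.sum_ite_eq' Finset.univ u (fun v => D f * c f v),
                if_pos (Finset.mem_univ u)]
            rw [Finset.sum_congr rfl he1,
              hcanon_ext (fun f => D f * c f u) (fun f h => by rw [h]; ring)]
            exact hc3 u huP
          · have hiT' : i ∈ T' := Finset.mem_erase.2 ⟨hij, hiT⟩
            have he1 : ∀ f ∈ Finset.univ.filter (fun f : Fin m → V => f j = f0 j),
                (∑ v : V, if Function.update f j v i = u
                    then D' (Function.update f j v) else 0)
                = (if f i = u then D f else 0) := by
              intro f hf
              have hcf : f j = f0 j := (Finset.mem_filter.1 hf).2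
              have he2 : ∀ v : V, (if Function.update f j v i = u
                  then D' (Function.update f j v) else 0)
                  = if f i = u then D f * c f v else 0 := by
                intro v
                rw [Function.update_of_ne hij v f, hD'eval f hcf v]
              rw [Finset.sum_congr rfl (fun v _ => he2 v)]
              by_cases hfi : f i = u
              · rw [if_pos hfi]
                rw [Finset.sum_congr rfl (fun v (_ : v ∈ Finset.univ) => if_pos hfi),
                  ← Finset.mul_sum]
                by_cases hDf : D f = 0
                · rw [hDf]; ring
                · rw [hcsum f hDf, mul_one]
              · rw [if_neg hfi]
                exact Finset.sum_eq_zero fun v _ => if_neg hfi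
            rw [Finset.sum_congr rfl he1,
              hcanon_ext (fun f => if f i = u then D f else 0)
                (fun f h => by rw [h]; exact ite_self 0)]
            rw [← Finset.sum_filter]
            exact hDmarg i hiT' u huP
    -- APPLY THE GLUING AT T = univ
    obtain ⟨D, hD0, hD1, hDsupp, hDmarg⟩ :=
      glue (Finset.univ : Finset (Fin m)).card Finset.univ le_rfl
    set idx : V → Fin m := fun v => (hpart v).choose with hidxdef
    have hidx : ∀ v, v ∈ P (idx v) := fun v => (hpart v).choose_spec.1
    have hidxu : ∀ v i, v ∈ P i → i = idx v := fun v i hi =>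
      (hpart v).choose_spec.2 i hi
    set y : (Fin m → V) → (V → ℝ) := fun f v => if f (idx v) = v then 1 else 0
      with hydef
    set t := Finset.univ.filter (fun f : Fin m → V => D f ≠ 0) with htdef
    have htsum : (∑ f ∈ t, D f) = 1 := by
      rw [htdef, Finset.sum_filter_ne_zero, hD1]
    have hxeq : x = ∑ f ∈ t, D f • y f := by
      funext v
      rw [Finset.sum_apply]
      have he : ∀ f ∈ t, (D f • y f) v = if f (idx v) = v then D f else 0 := by
        intro f _
        rw [Pi.smul_apply, smul_eq_mul, hydef]
        simp only
        rw [mul_ite, mul_one, mul_zero]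
      rw [Finset.sum_congr rfl he]
      have he2 : (∑ f ∈ t, if f (idx v) = v then D f else 0)
          = ∑ f : Fin m → V, if f (idx v) = v then D f else 0 := by
        refine Finset.sum_subset (Finset.filter_subset _ _) fun f _ hf => ?_
        have hDf : D f = 0 := by
          by_contra h
          exact hf (Finset.mem_filter.2 ⟨Finset.mem_univ f, h⟩)
        rw [hDf, ite_self]
      rw [he2, ← Finset.sum_filter]
      exact (hDmarg (idx v) (Finset.mem_univ _) v (hidx v)).symm
    rw [hxeq, ← Finset.centerMass_eq_of_sum_1 t y htsum]
    refine Finset.centerMass_mem_convexHull t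
      (fun f hf => hD0 f) (by rw [htsum]; norm_num) ?_
    intro f hf
    have hDf : D f ≠ 0 := (Finset.mem_filter.1 hf).2
    obtain ⟨_, hpa, hadja⟩ := hDsupp f hDf
    refine ⟨?_, ?_, ?_⟩
    · intro v
      rw [hydef]
      simp only
      by_cases h : f (idx v) = v
      · right; rw [if_pos h]
      · left; rw [if_neg h]
    · intro i
      have he : ∀ v ∈ P i, y f v = if f i = v then 1 else 0 := by
        intro v hv
        rw [hydef]
        simp only
        rw [← hidxu v i hv]
      rw [Finset.sum_congr rfl he, Finset.sum_ite_eq (P i) (f i) (fun _ => (1:ℝ)),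
        if_pos (hpa i (Finset.mem_univ i))]
    · intro u v huv hyu hyv
      rw [hydef] at hyu hyv
      simp only at hyu hyv
      have hu : f (idx u) = u := by
        by_contra h
        rw [if_neg h] at hyu
        norm_num at hyu
      have hv : f (idx v) = v := by
        by_contra h
        rw [if_neg h] at hyv
        norm_num at hyv
      have hne : idx u ≠ idx v := by
        intro h
        rw [← hu, ← hv, h] at huv
        exact huv rfl
      have := hadja (idx u) (Finset.mem_univ _) (idx v) (Finset.mem_univ _) hne
      rw [hu, hv] at this
      exact this
end
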